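/- arXiv:2008.08455 — 5 statements merged into one kernel-verified Lean document; each statement's English description precedes it below -/
import Mathlib

section
/- For every finite group G, the non-nilpotent graph of G is connected: for any x, y ∈ G such that ⟨x,u⟩ is not nilpotent for some u ∈ G and ⟨y,v⟩ is not nilpotent for some v ∈ G, there exist elements z₀ = x, z₁, …, z_n = y of G such that ⟨z_i, z_{i+1}⟩ is not nilpotent for every 0 ≤ i < n. -/
universe u

namespace NonNilAux

open Subgroup
open scoped commutatorElement

variable {G : Type u} [Group G]

/-- The edge relation of the non-nilpotent graph. -/
def R (G : Type u) [Group G] (g h : G) : Prop :=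
  ¬ Group.IsNilpotent ↥(Subgroup.closure {g, h})

lemma isNilpotent_of_le {A B : Subgroup G} (h : A ≤ B) (hB : Group.IsNilpotent B) :
    Group.IsNilpotent A := by
  haveI := hB
  exact nilpotent_of_mulEquiv (Subgroup.subgroupOfEquivOfLe h)

lemma R.symm {a b : G} (h : R G a b) : R G b a := by
  unfold R at *
  rwa [Set.pair_comm] at h

lemma mem_closure_pair_left (a b : G) : a ∈ closure ({a, b} : Set G) :=
  subset_closure (Set.mem_insert _ _)

lemma mem_closure_pair_right (a b : G) : b ∈ closure ({a, b} : Set G) :=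
  subset_closure (Set.mem_insert_of_mem _ rfl)

lemma closure_pair_le {a b : G} {K : Subgroup G} (ha : a ∈ K) (hb : b ∈ K) :
    closure ({a, b} : Set G) ≤ K := by
  rw [closure_le]
  intro g hg
  rcases hg with rfl | hg
  · exact ha
  · rcases hg with rfl
    exact hb

lemma R.mono {a b c d : G} (h : R G a b) (ha : a ∈ closure ({c, d} : Set G))
    (hb : b ∈ closure ({c, d} : Set G)) : R G c d :=
  fun hn => h (isNilpotent_of_le (closure_pair_le ha hb) hn)

lemma not_R_right_one (x : G) : ¬ R G x 1 := by
  intro h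
  apply h
  have hle : closure ({x, 1} : Set G) ≤ zpowers x :=
    closure_pair_le (mem_zpowers x) (one_mem _)
  exact isNilpotent_of_le hle (by open scoped IsMulCommutative in exact inferInstance)

lemma commute_of_mem_zpowers {u a b : G} (ha : a ∈ zpowers u) (hb : b ∈ zpowers u) :
    Commute a b := by
  obtain ⟨i, rfl⟩ := ha
  obtain ⟨j, rfl⟩ := hb
  exact Commute.zpow_zpow (Commute.refl u) i j

/-- In a finite nilpotent group, elements of coprime order commute. -/
lemma commute_of_coprime_core :
    ∀ n : ℕ, ∀ (H : Type u) (_ : Group H) (_ : Finite H) (hH : Group.IsNilpotent H),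
      Group.nilpotencyClass H ≤ n →
      ∀ a b : H, Nat.Coprime (orderOf a) (orderOf b) → Commute a b := by
  intro n
  induction n with
  | zero =>
    intro H _ _ hH hcl a b _
    haveI := hH
    haveI : Subsingleton H :=
      nilpotencyClass_zero_iff_subsingleton.mp (Nat.le_zero.mp hcl)
    exact Subsingleton.elim _ _
  | succ n ih =>
    intro H _ _ hH hcl a b hab
    haveI := hH
    by_cases hs : Subsingleton H
    · exact Subsingleton.elim _ _
    have hclpos : Group.nilpotencyClass H ≠ 0 := by
      intro h0
      exact hs (nilpotencyClass_zero_iff_subsingleton.mp h0)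
    set Z := Subgroup.center H
    have hq : Group.nilpotencyClass (H ⧸ Z) ≤ n := by
      rw [nilpotencyClass_quotient_center]
      omega
    set π := QuotientGroup.mk' Z
    have hcop : Nat.Coprime (orderOf (π a)) (orderOf (π b)) :=
      Nat.Coprime.coprime_dvd_left (orderOf_map_dvd π a)
        (Nat.Coprime.coprime_dvd_right (orderOf_map_dvd π b) hab)
    have hcomm : Commute (π a) (π b) := ih (H ⧸ Z) inferInstance (Quotient.finite _) inferInstance hq _ _ hcop
    have hz : ⁅a, b⁆ ∈ Z := by
      have : π ⁅a, b⁆ = 1 := by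
        rw [map_commutatorElement]
        exact commutatorElement_eq_one_iff_commute.mpr hcomm
      rwa [← QuotientGroup.ker_mk' Z, MonoidHom.mem_ker]
    set z := ⁅a, b⁆ with hzdef
    have hzcomm : ∀ g : H, Commute z g := by
      intro g
      exact ((Subgroup.mem_center_iff.mp hz) g).symm
    -- conj of b by a is z * b
    have key1 : a * b * a⁻¹ = z * b := by
      rw [hzdef]
      group
    have claim1 : z ^ orderOf b = 1 := by
      have h1 : (a * b * a⁻¹) ^ orderOf b = 1 := by
        rw [conj_pow, pow_orderOf_eq_one, mul_one, mul_inv_cancel]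
      rw [key1, (hzcomm b).mul_pow, pow_orderOf_eq_one, mul_one] at h1
      exact h1
    have key2 : b * a * b⁻¹ = z⁻¹ * a := by
      rw [hzdef]
      group
    have claim2 : (z⁻¹) ^ orderOf a = 1 := by
      have h1 : (b * a * b⁻¹) ^ orderOf a = 1 := by
        rw [conj_pow, pow_orderOf_eq_one, mul_one, mul_inv_cancel]
      rw [key2, ((hzcomm a).inv_left).mul_pow, pow_orderOf_eq_one, mul_one] at h1
      exact h1
    have claim2' : z ^ orderOf a = 1 := by
      have := congrArg (·⁻¹) claim2
      simpa using this
    have hdvd : orderOf z ∣ Nat.gcd (orderOf a) (orderOf b) :=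
      Nat.dvd_gcd (orderOf_dvd_of_pow_eq_one claim2') (orderOf_dvd_of_pow_eq_one claim1)
    rw [hab] at hdvd
    have hz1 : z = 1 := orderOf_eq_one_iff.mp (Nat.dvd_one.mp hdvd)
    exact commutatorElement_eq_one_iff_commute.mp hz1

lemma commute_of_mem_nilpotent [Finite G] {K : Subgroup G}
    (hK : Group.IsNilpotent K) {a b : G} (ha : a ∈ K) (hb : b ∈ K)
    (h : Nat.Coprime (orderOf a) (orderOf b)) : Commute a b := by
  haveI := hK
  have e1 : orderOf (⟨a, ha⟩ : K) = orderOf a := by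
    simpa using orderOf_injective K.subtype Subtype.coe_injective ⟨a, ha⟩
  have e2 : orderOf (⟨b, hb⟩ : K) = orderOf b := by
    simpa using orderOf_injective K.subtype Subtype.coe_injective ⟨b, hb⟩
  have hcop : Nat.Coprime (orderOf (⟨a, ha⟩ : K)) (orderOf (⟨b, hb⟩ : K)) := by
    rwa [e1, e2]
  have := commute_of_coprime_core (Group.nilpotencyClass ↥K) ↥K inferInstance inferInstance inferInstance le_rfl _ _ hcop
  have := congrArg (Subtype.val) this
  exact (by simpa using this : a * b = b * a)


lemma exists_split [Finite G] {p : ℕ} (hp : p.Prime) (g : G) :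
    ∃ v w : G, v ∈ zpowers g ∧ w ∈ zpowers g ∧ g = v * w ∧
      orderOf v ∣ ordProj[p] (orderOf g) ∧ orderOf w ∣ ordCompl[p] (orderOf g) := by
  set N := orderOf g with hNdef
  have hN0 : N ≠ 0 := (orderOf_pos g).ne'
  set P : ℕ := ordProj[p] N with hPdef
  set m : ℕ := ordCompl[p] N with hmdef
  have hPm : P * m = N := Nat.ordProj_mul_ordCompl_eq_self N p
  have hcop : Nat.Coprime P m := Nat.Coprime.pow_left _ (Nat.coprime_ordCompl hp hN0)
  set A := Nat.gcdA P m with hAdef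
  set B := Nat.gcdB P m with hBdef
  have hbez : (1 : ℤ) = (P : ℤ) * A + (m : ℤ) * B := by
    have h2 := Nat.gcd_eq_gcd_ab P m
    rw [Nat.Coprime] at hcop
    rw [hcop] at h2
    simpa using h2
  refine ⟨g ^ ((m : ℤ) * B), g ^ ((P : ℤ) * A), ⟨_, rfl⟩, ⟨_, rfl⟩, ?_, ?_, ?_⟩
  · rw [← zpow_add]
    have h3 : (m : ℤ) * B + (P : ℤ) * A = 1 := by linarith [hbez]
    rw [h3, zpow_one]
  · apply orderOf_dvd_of_pow_eq_one
    rw [← zpow_natCast, ← zpow_mul]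
    have h4 : (m : ℤ) * B * (P : ℤ) = (N : ℤ) * B := by
      have : (m : ℤ) * (P : ℤ) = (N : ℤ) := by exact_mod_cast (mul_comm P m ▸ hPm)
      linear_combination B * this
    rw [h4, zpow_mul, zpow_natCast, pow_orderOf_eq_one, one_zpow]
  · apply orderOf_dvd_of_pow_eq_one
    rw [← zpow_natCast, ← zpow_mul]
    have h4 : (P : ℤ) * A * (m : ℤ) = (N : ℤ) * A := by
      have : (P : ℤ) * (m : ℤ) = (N : ℤ) := by exact_mod_cast hPm
      linear_combination A * this
    rw [h4, zpow_mul, zpow_natCast, pow_orderOf_eq_one, one_zpow]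

lemma self_mem_zpowers_pow {x : G} {n : ℕ} (h : Nat.Coprime n (orderOf x)) :
    x ∈ zpowers (x ^ n) := by
  set A := Nat.gcdA n (orderOf x) with hAdef
  set B := Nat.gcdB n (orderOf x) with hBdef
  have hbez : (1 : ℤ) = (n : ℤ) * A + (orderOf x : ℤ) * B := by
    have h2 := Nat.gcd_eq_gcd_ab n (orderOf x)
    rw [Nat.Coprime] at h
    rw [h] at h2
    simpa using h2
  have : x = (x ^ n) ^ A := by
    have hord : x ^ ((orderOf x : ℤ) * B) = 1 := by
      rw [zpow_mul, zpow_natCast, pow_orderOf_eq_one, one_zpow]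
    calc x = x ^ (1 : ℤ) := (zpow_one x).symm
    _ = x ^ ((n : ℤ) * A + (orderOf x : ℤ) * B) := by rw [← hbez]
    _ = x ^ ((n : ℤ) * A) * x ^ ((orderOf x : ℤ) * B) := zpow_add x _ _
    _ = x ^ ((n : ℤ) * A) := by rw [hord, mul_one]
    _ = (x ^ (n : ℤ)) ^ A := by rw [← zpow_mul]
    _ = (x ^ n) ^ A := by rw [zpow_natCast]
  have hmem : (x ^ n) ^ A ∈ zpowers (x ^ n) := zpow_mem (mem_zpowers _) A
  rw [← this] at hmem
  exact hmem

/-- merging commuting elements of coprime order -/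
lemma merge_mem {a b : G} (hc : Commute a b) (h : Nat.Coprime (orderOf a) (orderOf b)) :
    a ∈ zpowers (a * b) ∧ b ∈ zpowers (a * b) := by
  have key : (a * b) ^ orderOf b = a ^ orderOf b := by
    rw [hc.mul_pow, pow_orderOf_eq_one, mul_one]
  have ha : a ∈ zpowers (a * b) := by
    have h1 : a ∈ zpowers (a ^ orderOf b) := self_mem_zpowers_pow h.symm
    have h2 : zpowers (a ^ orderOf b) ≤ zpowers (a * b) := by
      rw [zpowers_le, ← key]
      exact pow_mem (mem_zpowers _) _
    exact h2 h1
  refine ⟨ha, ?_⟩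
  have h5 : a⁻¹ * (a * b) ∈ zpowers (a * b) := mul_mem (inv_mem ha) (mem_zpowers _)
  rwa [inv_mul_cancel_left] at h5

lemma closure_pair_commute {a b c d : G} (h1 : Commute a c) (h2 : Commute a d)
    (h3 : Commute b c) (h4 : Commute b d) :
    ∀ g ∈ closure ({a, b} : Set G), ∀ h ∈ closure ({c, d} : Set G), Commute g h := by
  have step : ∀ x : G, Commute x c → Commute x d → ∀ h ∈ closure ({c, d} : Set G), Commute x h := by
    intro x hxc hxd h hh
    have : closure ({c, d} : Set G) ≤ centralizer {x} := by
      rw [closure_le]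
      intro y hy
      rcases hy with rfl | hy
      · exact mem_centralizer_iff.mpr (by intro k hk; rcases hk with rfl; exact hxc.eq)
      · rcases hy with rfl
        exact mem_centralizer_iff.mpr (by intro k hk; rcases hk with rfl; exact hxd.eq)
    have h6 := this hh
    rw [mem_centralizer_iff] at h6
    exact h6 x rfl
  intro g hg h hh
  have : closure ({a, b} : Set G) ≤ centralizer (closure ({c, d} : Set G) : Set G) := by
    rw [closure_le]
    intro y hy
    rcases hy with rfl | hy
    · exact mem_centralizer_iff.mpr (fun k hk => (step y h1 h2 k hk).symm.eq)
    · rcases hy with rfl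
      exact mem_centralizer_iff.mpr (fun k hk => (step y h3 h4 k hk).symm.eq)
  have h7 := this hg
  rw [mem_centralizer_iff] at h7
  exact Commute.symm (show Commute h g from h7 h hh)

lemma coprime_resolve {p q i j : ℕ} (hp : p.Prime) (hq : q.Prime)
    (h : ¬ Nat.Coprime (p ^ i) (q ^ j)) : p = q ∧ 1 ≤ i ∧ 1 ≤ j := by
  by_cases hi : i = 0
  · exact absurd (by rw [hi, pow_zero]; exact Nat.coprime_one_left _) h
  by_cases hj : j = 0
  · exact absurd (by rw [hj, pow_zero]; exact Nat.coprime_one_right _) h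
  refine ⟨?_, by omega, by omega⟩
  by_contra hne
  exact h (((Nat.coprime_primes hp hq).mpr hne).pow i j)

lemma not_coprime_same {p i j : ℕ} (hp : p.Prime) (hi : 1 ≤ i) (hj : 1 ≤ j) :
    ¬ Nat.Coprime (p ^ i) (p ^ j) := by
  intro h
  have h1 : p ∣ p ^ i := dvd_pow_self p (by omega)
  have h2 : p ∣ p ^ j := dvd_pow_self p (by omega)
  have := Nat.dvd_gcd h1 h2
  rw [Nat.Coprime] at h
  rw [h] at this
  exact hp.ne_one (Nat.dvd_one.mp this)


lemma coprime_of_ppow_not_dvd {a b p : ℕ} {e : ℕ} (hp : p.Prime) (ha : a ∣ p ^ e)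
    (hb : ¬ p ∣ b) : Nat.Coprime a b :=
  Nat.Coprime.coprime_dvd_left ha ((hp.coprime_iff_not_dvd.mpr hb).pow_left e)

/-- Lemma W: a witness can be chosen of prime power order. -/
lemma exists_primePow_witness [Finite G] (x u : G) (h : R G x u) :
    ∃ w : G, w ∈ zpowers u ∧ (∃ p n, Nat.Prime p ∧ orderOf w = p ^ n) ∧ R G x w := by
  have main : ∀ N : ℕ, ∀ u x : G, orderOf u = N → R G x u →
      ∃ w : G, w ∈ zpowers u ∧ (∃ p n, Nat.Prime p ∧ orderOf w = p ^ n) ∧ R G x w := by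
    intro N
    induction N using Nat.strong_induction_on with
    | _ N ih =>
      intro u x hord h
      have hN0 : N ≠ 0 := hord ▸ (orderOf_pos u).ne'
      by_cases h1 : N = 1
      · exfalso
        have hu1 : u = 1 := orderOf_eq_one_iff.mp (by rw [hord, h1])
        rw [hu1] at h
        exact not_R_right_one x h
      by_cases hpp : ∃ p n, Nat.Prime p ∧ N = p ^ n
      · obtain ⟨p, n, hp, heq⟩ := hpp
        exact ⟨u, mem_zpowers u, ⟨p, n, hp, by rw [hord, heq]⟩, h⟩
      set p := N.minFac with hpdef
      have hp : p.Prime := Nat.minFac_prime h1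
      obtain ⟨v, w, hv_mem, hw_mem, huvw, hv_ord, hw_ord⟩ := exists_split hp u
      rw [hord] at hv_ord hw_ord
      have hpdvd : p ∣ N := Nat.minFac_dvd N
      have hfac1 : 1 ≤ N.factorization p :=
        (Nat.Prime.dvd_iff_one_le_factorization hp hN0).mp hpdvd
      have hProj1 : 1 < ordProj[p] N := by
        calc 1 < p := hp.one_lt
        _ ≤ p ^ N.factorization p := Nat.le_self_pow (by omega) p
      have hm_lt : ordCompl[p] N < N := Nat.div_lt_self (by omega) hProj1
      have hw_lt : orderOf w < N :=
        lt_of_le_of_lt (Nat.le_of_dvd (Nat.ordCompl_pos p hN0) hw_ord) hm_lt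
      have hpw : ¬ p ∣ orderOf w := fun hd => Nat.not_dvd_ordCompl hp hN0 (hd.trans hw_ord)
      by_cases hv : R G x v
      · obtain ⟨n, _, hvord⟩ := (Nat.dvd_prime_pow hp).mp hv_ord
        exact ⟨v, hv_mem, ⟨p, n, hp, hvord⟩, hv⟩
      by_cases hw : R G x w
      · obtain ⟨w', hw'mem, hw'pp, hw'R⟩ := ih (orderOf w) hw_lt w x rfl hw
        exact ⟨w', (zpowers_le.mpr hw_mem) hw'mem, hw'pp, hw'R⟩
      exfalso
      rw [R, not_not] at hv hw
      obtain ⟨xp, x', hxp_mem, hx'_mem, hxsplit, hxp_ord, hx'_ord⟩ := exists_split hp x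
      have hpx' : ¬ p ∣ orderOf x' :=
        fun hd => Nat.not_dvd_ordCompl hp (orderOf_pos x).ne' (hd.trans hx'_ord)
      have c1 : Commute xp x' := commute_of_mem_zpowers hxp_mem hx'_mem
      have c4 : Commute v w := commute_of_mem_zpowers hv_mem hw_mem
      have hxpK2 : xp ∈ closure ({x, w} : Set G) :=
        zpowers_le.mpr (mem_closure_pair_left x w) hxp_mem
      have c2 : Commute xp w :=
        commute_of_mem_nilpotent hw hxpK2 (mem_closure_pair_right x w)
          (coprime_of_ppow_not_dvd hp hxp_ord hpw)
      have hx'K1 : x' ∈ closure ({x, v} : Set G) :=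
        zpowers_le.mpr (mem_closure_pair_left x v) hx'_mem
      have c3 : Commute v x' :=
        commute_of_mem_nilpotent hv (mem_closure_pair_right x v) hx'K1
          (coprime_of_ppow_not_dvd hp hv_ord hpx')
      set B₁ := closure ({xp, v} : Set G) with hB₁
      set B₂ := closure ({x', w} : Set G) with hB₂
      have nilB₁ : Group.IsNilpotent B₁ :=
        isNilpotent_of_le (closure_pair_le
          (zpowers_le.mpr (mem_closure_pair_left x v) hxp_mem)
          (mem_closure_pair_right x v)) hv
      have nilB₂ : Group.IsNilpotent B₂ :=
        isNilpotent_of_le (closure_pair_le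
          (zpowers_le.mpr (mem_closure_pair_left x w) hx'_mem)
          (mem_closure_pair_right x w)) hw
      have hcomm : ∀ (g : B₁) (k : B₂), Commute (B₁.subtype g) (B₂.subtype k) := by
        intro g k
        simpa using closure_pair_commute c1 c2 c3 c4 (g : G) g.2 (k : G) k.2
      set φ := MonoidHom.noncommCoprod B₁.subtype B₂.subtype hcomm with hφ
      haveI := nilB₁
      haveI := nilB₂
      have hrangenil : Group.IsNilpotent φ.range :=
        nilpotent_of_surjective φ.rangeRestrict φ.rangeRestrict_surjective
      have hxmem : x ∈ φ.range := by
        refine ⟨(⟨xp, mem_closure_pair_left xp v⟩, ⟨x', mem_closure_pair_left x' w⟩), ?_⟩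
        simpa [hφ, MonoidHom.noncommCoprod_apply] using hxsplit.symm
      have humem : u ∈ φ.range := by
        refine ⟨(⟨v, mem_closure_pair_right xp v⟩, ⟨w, mem_closure_pair_right x' w⟩), ?_⟩
        simpa [hφ, MonoidHom.noncommCoprod_apply] using huvw.symm
      exact h (isNilpotent_of_le (closure_pair_le hxmem humem) hrangenil)
  exact main (orderOf u) u x rfl h

lemma exists_coprime_pair [Finite G] {a b : G} {p : ℕ} (hp : p.Prime)
    {na nb : ℕ} (ha : orderOf a = p ^ na) (hb : orderOf b = p ^ nb) (hab : R G a b) :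
    ∃ α β : G, α ∈ closure ({a, b} : Set G) ∧ β ∈ closure ({a, b} : Set G) ∧
      (∃ q n, Nat.Prime q ∧ orderOf α = q ^ n) ∧ (∃ q n, Nat.Prime q ∧ orderOf β = q ^ n) ∧
      Nat.Coprime (orderOf α) (orderOf β) ∧ R G α β := by
  by_contra hcon
  push_neg at hcon
  set K := closure ({a, b} : Set G) with hKdef
  have haK : a ∈ K := mem_closure_pair_left a b
  have hbK : b ∈ K := mem_closure_pair_right a b
  -- every element of K of order prime to p centralizes K
  have cent : ∀ h : G, h ∈ K → ¬ p ∣ orderOf h → ∀ k ∈ K, Commute h k := by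
    have main : ∀ N : ℕ, ∀ h : G, orderOf h = N → h ∈ K → ¬ p ∣ orderOf h →
        ∀ k ∈ K, Commute h k := by
      intro N
      induction N using Nat.strong_induction_on with
      | _ N ih =>
        intro h hordh hK hpnd k hk
        have hN0 : N ≠ 0 := hordh ▸ (orderOf_pos h).ne'
        by_cases h1 : N = 1
        · have : h = 1 := orderOf_eq_one_iff.mp (by rw [hordh, h1])
          rw [this]
          exact Commute.one_left k
        by_cases hpp : ∃ q n, Nat.Prime q ∧ N = q ^ n
        · obtain ⟨q, n, hq, hNq⟩ := hpp
          have hhord : orderOf h = q ^ n := by rw [hordh, hNq]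
          have hca : Commute h a := by
            have hcop : Nat.Coprime (orderOf h) (orderOf a) :=
              (coprime_of_ppow_not_dvd hp (dvd_of_eq ha) hpnd).symm
            have hnil : Group.IsNilpotent ↥(closure ({h, a} : Set G)) :=
              not_not.mp (hcon h a hK haK ⟨q, n, hq, hhord⟩ ⟨p, na, hp, ha⟩ hcop)
            exact commute_of_mem_nilpotent hnil (mem_closure_pair_left h a)
              (mem_closure_pair_right h a) hcop
          have hcb : Commute h b := by
            have hcop : Nat.Coprime (orderOf h) (orderOf b) :=
              (coprime_of_ppow_not_dvd hp (dvd_of_eq hb) hpnd).symm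
            have hnil : Group.IsNilpotent ↥(closure ({h, b} : Set G)) :=
              not_not.mp (hcon h b hK hbK ⟨q, n, hq, hhord⟩ ⟨p, nb, hp, hb⟩ hcop)
            exact commute_of_mem_nilpotent hnil (mem_closure_pair_left h b)
              (mem_closure_pair_right h b) hcop
          have hle : K ≤ centralizer {h} := by
            rw [hKdef, closure_le]
            intro y hy
            rcases hy with rfl | hy
            · exact mem_centralizer_iff.mpr (by intro z hz; rcases hz with rfl; exact hca.eq)
            · rcases hy with rfl
              exact mem_centralizer_iff.mpr (by intro z hz; rcases hz with rfl; exact hcb.eq)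
          have := hle hk
          rw [mem_centralizer_iff] at this
          exact this h rfl
        -- N is not a prime power : split
        · set q := N.minFac with hqdef
          have hq : q.Prime := Nat.minFac_prime h1
          obtain ⟨h₁, h₂, h₁mem, h₂mem, hsplit, h₁ord, h₂ord⟩ := exists_split hq h
          rw [hordh] at h₁ord h₂ord
          have hqdvd : q ∣ N := Nat.minFac_dvd N
          have hfac1 : 1 ≤ N.factorization q :=
            (Nat.Prime.dvd_iff_one_le_factorization hq hN0).mp hqdvd
          have hProj1 : 1 < ordProj[q] N := by
            calc 1 < q := hq.one_lt
            _ ≤ q ^ N.factorization q := Nat.le_self_pow (by omega) q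
          have hm_lt : ordCompl[q] N < N := Nat.div_lt_self (by omega) hProj1
          have hm_ne1 : ordCompl[q] N ≠ 1 := by
            intro he
            have heq := Nat.ordProj_mul_ordCompl_eq_self N q
            rw [he, mul_one] at heq
            exact hpp ⟨q, N.factorization q, hq, heq.symm⟩
          have hQ_lt : ordProj[q] N < N := by
            have heq : ordProj[q] N * ordCompl[q] N = N := Nat.ordProj_mul_ordCompl_eq_self N q
            have h2pos : 0 < ordCompl[q] N := Nat.ordCompl_pos q hN0
            have : 1 < ordCompl[q] N := by omega
            calc ordProj[q] N < ordProj[q] N * ordCompl[q] N := by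
                  apply Nat.lt_mul_iff_one_lt_right (by omega) |>.mpr this
            _ = N := heq
          have h₁lt : orderOf h₁ < N :=
            lt_of_le_of_lt (Nat.le_of_dvd (by positivity) h₁ord) hQ_lt
          have h₂lt : orderOf h₂ < N :=
            lt_of_le_of_lt (Nat.le_of_dvd (Nat.ordCompl_pos q hN0) h₂ord) hm_lt
          have hqp : ¬ p ∣ orderOf h₁ := by
            intro hd
            have hpq : p ∣ q ^ N.factorization q := hd.trans h₁ord
            have : p = q := (Nat.prime_dvd_prime_iff_eq hp hq).mp (hp.dvd_of_dvd_pow hpq)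
            rw [← hordh] at hqdvd
            exact hpnd (this ▸ hqdvd)
          have hqp₂ : ¬ p ∣ orderOf h₂ := by
            intro hd
            exact hpnd (hordh ▸ ((hd.trans h₂ord).trans (Nat.ordCompl_dvd N q)))
          have hc₁ := ih (orderOf h₁) h₁lt h₁ rfl ((zpowers_le.mpr hK) h₁mem) hqp k hk
          have hc₂ := ih (orderOf h₂) h₂lt h₂ rfl ((zpowers_le.mpr hK) h₂mem) hqp₂ k hk
          rw [hsplit]
          exact Commute.mul_left hc₁ hc₂
    intro h hK hpnd k hk
    exact main (orderOf h) h rfl hK hpnd k hk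
  -- now K is nilpotent : contradiction
  apply hab
  show Group.IsNilpotent ↥K
  apply of_quotient_center_nilpotent
  haveI : Fact p.Prime := ⟨hp⟩
  haveI : Finite (↥K ⧸ Subgroup.center ↥K) := Quotient.finite _
  have hpg : IsPGroup p (↥K ⧸ Subgroup.center ↥K) := by
    intro gq
    obtain ⟨g, rfl⟩ := QuotientGroup.mk'_surjective (Subgroup.center ↥K) gq
    obtain ⟨v, w, hvmem, hwmem, hsplit, hvord, hword⟩ := exists_split hp (g : G)
    have hvK : v ∈ K := (zpowers_le.mpr g.2) hvmem
    have hwK : w ∈ K := (zpowers_le.mpr g.2) hwmem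
    have hpww : ¬ p ∣ orderOf w :=
      fun hd => Nat.not_dvd_ordCompl hp (orderOf_pos (g : G)).ne' (hd.trans hword)
    have hwcent : (⟨w, hwK⟩ : ↥K) ∈ Subgroup.center ↥K := by
      rw [Subgroup.mem_center_iff]
      intro k
      exact Subtype.ext ((cent w hwK hpww (k : G) k.2).symm.eq)
    obtain ⟨n, _, hvn⟩ := (Nat.dvd_prime_pow hp).mp hvord
    refine ⟨n, ?_⟩
    have hg9 : g = (⟨v, hvK⟩ : ↥K) * ⟨w, hwK⟩ := Subtype.ext hsplit
    have hcvw : Commute (⟨v, hvK⟩ : ↥K) (⟨w, hwK⟩ : ↥K) :=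
      Subtype.ext ((commute_of_mem_zpowers hvmem hwmem).eq)
    have hov : orderOf (⟨v, hvK⟩ : ↥K) = p ^ n := by
      have h9 : orderOf (⟨v, hvK⟩ : ↥K) = orderOf v := by
        simpa using orderOf_injective K.subtype Subtype.coe_injective ⟨v, hvK⟩
      rw [h9, hvn]
    have hv1 : (⟨v, hvK⟩ : ↥K) ^ p ^ n = 1 := by
      rw [← hov]
      exact pow_orderOf_eq_one _
    have hker : g ^ p ^ n ∈ Subgroup.center ↥K := by
      rw [hg9, hcvw.mul_pow, hv1, one_mul]
      exact pow_mem hwcent _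
    rw [← map_pow]
    rwa [← MonoidHom.mem_ker, QuotientGroup.ker_mk']
  exact IsPGroup.isNilpotent hpg

lemma rtg_symm {r : G → G → Prop} (hsym : ∀ a b, r a b → r b a) {a b : G}
    (h : Relation.ReflTransGen r a b) : Relation.ReflTransGen r b a := by
  induction h with
  | refl => exact Relation.ReflTransGen.refl
  | tail _ hbc ih =>
    exact Relation.ReflTransGen.trans (Relation.ReflTransGen.single (hsym _ _ hbc)) ih

lemma vertex_to_pair [Finite G] {x u : G} (h : R G x u) :
    ∃ α β : G, (∃ p n, Nat.Prime p ∧ orderOf α = p ^ n) ∧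
      (∃ q m, Nat.Prime q ∧ orderOf β = q ^ m) ∧
      Nat.Coprime (orderOf α) (orderOf β) ∧ R G α β ∧ Relation.ReflTransGen (R G) x α := by
  obtain ⟨b₁, hb₁u, ⟨p, n, hp, hb₁ord⟩, hRxb₁⟩ := exists_primePow_witness x u h
  obtain ⟨a₁, ha₁x, ⟨r, i, hr, ha₁ord⟩, hRb₁a₁⟩ := exists_primePow_witness b₁ x hRxb₁.symm
  by_cases hc : Nat.Coprime (orderOf b₁) (orderOf a₁)
  · exact ⟨b₁, a₁, ⟨p, n, hp, hb₁ord⟩, ⟨r, i, hr, ha₁ord⟩, hc, hRb₁a₁,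
      Relation.ReflTransGen.single hRxb₁⟩
  · have hc' := hc
    rw [hb₁ord, ha₁ord] at hc'
    obtain ⟨hpr, hn1, hi1⟩ := coprime_resolve hp hr hc'
    have ha₁ord' : orderOf a₁ = p ^ i := by rw [ha₁ord, ← hpr]
    obtain ⟨α, β, hαK, hβK, ⟨q₁, m₁, hq₁, hαord⟩, ⟨q₂, m₂, hq₂, hβord⟩, hcop, hRαβ⟩ :=
      exists_coprime_pair hp ha₁ord' hb₁ord hRb₁a₁.symm
    have hchoice : Nat.Coprime (orderOf b₁) (orderOf α) ∨
        Nat.Coprime (orderOf b₁) (orderOf β) := by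
      by_contra hcc
      push_neg at hcc
      obtain ⟨h1, h2⟩ := hcc
      rw [hb₁ord, hαord] at h1
      rw [hb₁ord, hβord] at h2
      obtain ⟨he1, _, hm1⟩ := coprime_resolve hp hq₁ h1
      obtain ⟨he2, _, hm2⟩ := coprime_resolve hp hq₂ h2
      rw [hαord, hβord, ← he1, ← he2] at hcop
      exact not_coprime_same hp hm1 hm2 hcop
    have process : ∀ γ δ : G, Nat.Coprime (orderOf b₁) (orderOf γ) →
        (∃ q n', Nat.Prime q ∧ orderOf γ = q ^ n') →
        (∃ q n', Nat.Prime q ∧ orderOf δ = q ^ n') →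
        Nat.Coprime (orderOf γ) (orderOf δ) → R G γ δ →
        ∃ α' β' : G, (∃ p' n', Nat.Prime p' ∧ orderOf α' = p' ^ n') ∧
          (∃ q' m', Nat.Prime q' ∧ orderOf β' = q' ^ m') ∧
          Nat.Coprime (orderOf α') (orderOf β') ∧ R G α' β' ∧
          Relation.ReflTransGen (R G) x α' := by
      intro γ δ hbγ hγpp hδpp hγδ hRγδ
      by_cases hbR : R G b₁ γ
      · exact ⟨b₁, γ, ⟨p, n, hp, hb₁ord⟩, hγpp, hbγ, hbR, Relation.ReflTransGen.single hRxb₁⟩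
      · rw [R, not_not] at hbR
        have hcomm : Commute b₁ γ := commute_of_mem_nilpotent hbR
          (mem_closure_pair_left _ _) (mem_closure_pair_right _ _) hbγ
        obtain ⟨hb₁c, hγc⟩ := merge_mem hcomm hbγ
        have e1 : R G x (b₁ * γ) := hRxb₁.mono (mem_closure_pair_left x (b₁ * γ))
          ((zpowers_le.mpr (mem_closure_pair_right x (b₁ * γ))) hb₁c)
        have e2 : R G (b₁ * γ) δ := hRγδ.mono
          ((zpowers_le.mpr (mem_closure_pair_left (b₁ * γ) δ)) hγc)
          (mem_closure_pair_right (b₁ * γ) δ)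
        exact ⟨δ, γ, hδpp, hγpp, hγδ.symm, hRγδ.symm,
          (Relation.ReflTransGen.single e1).tail e2⟩
    rcases hchoice with hch | hch
    · exact process α β hch ⟨q₁, m₁, hq₁, hαord⟩ ⟨q₂, m₂, hq₂, hβord⟩ hcop hRαβ
    · exact process β α hch ⟨q₂, m₂, hq₂, hβord⟩ ⟨q₁, m₁, hq₁, hαord⟩ hcop.symm hRαβ.symm

lemma pair_to_pair [Finite G] {a b a' b' : G}
    (hpa : ∃ p n, Nat.Prime p ∧ orderOf a = p ^ n)
    (hpa' : ∃ p n, Nat.Prime p ∧ orderOf a' = p ^ n)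
    (hpb' : ∃ p n, Nat.Prime p ∧ orderOf b' = p ^ n)
    (hab : Nat.Coprime (orderOf a) (orderOf b))
    (hab' : Nat.Coprime (orderOf a') (orderOf b'))
    (hR : R G a b) (hR' : R G a' b') : Relation.ReflTransGen (R G) a a' := by
  obtain ⟨p, np, hp, hpao⟩ := hpa
  obtain ⟨r, nr, hr, hpao'⟩ := hpa'
  obtain ⟨s, ns, hs, hpbo'⟩ := hpb'
  have hchoice : Nat.Coprime (orderOf a) (orderOf a') ∨
      Nat.Coprime (orderOf a) (orderOf b') := by
    by_contra hcc
    push_neg at hcc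
    obtain ⟨h1, h2⟩ := hcc
    rw [hpao, hpao'] at h1
    rw [hpao, hpbo'] at h2
    obtain ⟨he1, _, hm1⟩ := coprime_resolve hp hr h1
    obtain ⟨he2, _, hm2⟩ := coprime_resolve hp hs h2
    rw [hpao', hpbo', ← he1, ← he2] at hab'
    exact not_coprime_same hp hm1 hm2 hab'
  have main : ∀ t' q' : G, Nat.Coprime (orderOf a) (orderOf t') → R G t' q' →
      Relation.ReflTransGen (R G) a t' ∧ Relation.ReflTransGen (R G) a q' := by
    intro t' q' hcop hRtp
    by_cases hR1 : R G a t'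
    · exact ⟨Relation.ReflTransGen.single hR1, (Relation.ReflTransGen.single hR1).tail hRtp⟩
    · rw [R, not_not] at hR1
      have hcomm : Commute a t' := commute_of_mem_nilpotent hR1
        (mem_closure_pair_left _ _) (mem_closure_pair_right _ _) hcop
      obtain ⟨hac, htc⟩ := merge_mem hcomm hcop
      have e1 : R G b (a * t') := (hR.symm).mono (mem_closure_pair_left b (a * t'))
        ((zpowers_le.mpr (mem_closure_pair_right b (a * t'))) hac)
      have e2 : R G (a * t') q' := hRtp.mono
        ((zpowers_le.mpr (mem_closure_pair_left (a * t') q')) htc)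
        (mem_closure_pair_right (a * t') q')
      have base : Relation.ReflTransGen (R G) a q' :=
        ((Relation.ReflTransGen.single hR).tail e1).tail e2
      exact ⟨base.tail hRtp.symm, base⟩
  rcases hchoice with hch | hch
  · exact (main a' b' hch hR').1
  · exact (main b' a' hch hR'.symm).2

lemma rtg_to_path {r : G → G → Prop} {x y : G} (h : Relation.ReflTransGen r x y) :
    ∃ n : ℕ, ∃ z : Fin (n + 1) → G, z 0 = x ∧ z (Fin.last n) = y ∧
      ∀ i : Fin n, r (z i.castSucc) (z i.succ) := by
  induction h with
  | refl => exact ⟨0, fun _ => x, rfl, rfl, fun i => i.elim0⟩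
  | @tail b c hab hbc ih =>
    obtain ⟨n, z, hz0, hzl, hedge⟩ := ih
    refine ⟨n + 1, Fin.snoc z c, ?_, ?_, ?_⟩
    · rw [show (0 : Fin (n + 2)) = Fin.castSucc 0 by simp, Fin.snoc_castSucc, hz0]
    · rw [Fin.snoc_last]
    · intro i
      refine Fin.lastCases ?_ ?_ i
      · rw [Fin.succ_last, Fin.snoc_last, Fin.snoc_castSucc, hzl]
        exact hbc
      · intro j
        rw [Fin.succ_castSucc, Fin.snoc_castSucc, Fin.snoc_castSucc]
        exact hedge j

end NonNilAux

theorem non_nilpotent_graph_connected (G : Type u) [Group G] [Finite G]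
    (x y : G)
    (hx : ∃ u : G, ¬ Group.IsNilpotent ↥(Subgroup.closure {x, u}))
    (hy : ∃ v : G, ¬ Group.IsNilpotent ↥(Subgroup.closure {y, v})) :
    ∃ (n : ℕ) (z : Fin (n + 1) → G), z 0 = x ∧ z (Fin.last n) = y ∧
      ∀ i : Fin n, ¬ Group.IsNilpotent ↥(Subgroup.closure {z i.castSucc, z i.succ}) := by
  obtain ⟨u, hu⟩ := hx
  obtain ⟨v, hv⟩ := hy
  have hru : NonNilAux.R G x u := hu
  have hrv : NonNilAux.R G y v := hv
  obtain ⟨α, β, hα, hβ, hcop, hR, hpath⟩ := NonNilAux.vertex_to_pair hru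
  obtain ⟨α', β', hα', hβ', hcop', hR', hpath'⟩ := NonNilAux.vertex_to_pair hrv
  have hmid := NonNilAux.pair_to_pair hα hα' hβ' hcop hcop' hR hR'
  have total : Relation.ReflTransGen (NonNilAux.R G) x y :=
    (hpath.trans hmid).trans (NonNilAux.rtg_symm (fun _ _ h => NonNilAux.R.symm h) hpath')
  obtain ⟨n, z, h0, hl, he⟩ := NonNilAux.rtg_to_path total
  exact ⟨n, z, h0, hl, fun i => he i⟩
end

section
/- There exists a finite soluble group G, with a normal subgroup N, such that: N is elementary abelian of order 25 (abelian of order 25 with every nontrivial element of order 5), N is the unique minimal normal subgroup of G, the quotient G/N is isomorphic to the quaternion group Q₈, G is not supersoluble, every proper subgroup of G is supersoluble, and for every nontrivial normal subgroup M of G the quotient G/M is supersoluble (i.e. G is strongly critical for the class 𝔘 of finite supersoluble groups and G/soc(G) ≅ Q₈ is not cyclic). -/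
universe u

/-- The factor group `B / A` is cyclic, for subgroups `A ≤ B` of an ambient group
with `A` normal in the ambient group. -/
def CyclicFactor {X : Type u} [Group X] (A B : Subgroup X) (hA : A.Normal) : Prop :=
  letI : (A.subgroupOf B).Normal := hA.subgroupOf B
  IsCyclic (↥B ⧸ A.subgroupOf B)

/-- `X` is supersoluble: there is a chain `1 = H₀ ≤ H₁ ≤ … ≤ H_k = X` of subgroups,
each normal in `X`, with all factors `H_i / H_{i-1}` cyclic. -/
def IsSupersoluble (X : Type u) [Group X] : Prop :=
  ∃ (k : ℕ) (H : Fin (k + 1) → Subgroup X) (hnorm : ∀ i, (H i).Normal),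
    H 0 = ⊥ ∧ H (Fin.last k) = ⊤ ∧ (∀ i : Fin k, H i.castSucc ≤ H i.succ) ∧
    ∀ i : Fin k, CyclicFactor (H i.castSucc) (H i.succ) (hnorm i.castSucc)

/-- `N` is a minimal normal subgroup of `G`. -/
def IsMinNormal {G : Type u} [Group G] (N : Subgroup G) : Prop :=
  N.Normal ∧ N ≠ ⊥ ∧ ∀ M : Subgroup G, M.Normal → M ≤ N → M = ⊥ ∨ M = N


namespace SCrit

/-! ### Generic supersolubility lemmas -/

section Generic
variable {X : Type u} [Group X]

lemma isCyclic_of_mulEquiv {Y : Type*} [Group Y] (e : X ≃* Y) (h : IsCyclic X) : IsCyclic Y :=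
  letI := h
  isCyclic_of_surjective e.toMonoidHom e.surjective

lemma isSupersoluble_of_subsingleton (X : Type u) [Group X] [Subsingleton X] :
    IsSupersoluble X := by
  refine ⟨0, fun _ => ⊥, fun _ => inferInstance, rfl, ?_, fun i => i.elim0, fun i => i.elim0⟩
  ext x
  simp [Subsingleton.elim x 1]

lemma cyclicFactor_bot {B : Subgroup X} (hc : IsCyclic ↥B) (h : (⊥ : Subgroup X).Normal) :
    CyclicFactor ⊥ B h := by
  unfold CyclicFactor
  have e : (⊥ : Subgroup X).subgroupOf B = ⊥ := Subgroup.bot_subgroupOf B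
  letI : ((⊥ : Subgroup X).subgroupOf B).Normal := h.subgroupOf B
  exact isCyclic_of_mulEquiv
    ((QuotientGroup.quotientMulEquivOfEq e).trans QuotientGroup.quotientBot).symm hc

lemma isCyclic_of_cyclicFactor_bot {B : Subgroup X} (h : (⊥ : Subgroup X).Normal)
    (hc : CyclicFactor ⊥ B h) : IsCyclic ↥B := by
  unfold CyclicFactor at hc
  have e : (⊥ : Subgroup X).subgroupOf B = ⊥ := Subgroup.bot_subgroupOf B
  letI : ((⊥ : Subgroup X).subgroupOf B).Normal := h.subgroupOf B
  exact isCyclic_of_mulEquiv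
    ((QuotientGroup.quotientMulEquivOfEq e).trans QuotientGroup.quotientBot) hc

lemma cyclicFactor_top {K : Subgroup X} (hK : K.Normal)
    (hc : letI := hK; IsCyclic (X ⧸ K)) : CyclicFactor K ⊤ hK := by
  unfold CyclicFactor
  letI := hK
  letI : (K.subgroupOf ⊤).Normal := hK.subgroupOf ⊤
  have he : (K.subgroupOf (⊤ : Subgroup X)).map
      (Subgroup.topEquiv : (⊤ : Subgroup X) ≃* X) = K := by
    ext x
    constructor
    · rintro ⟨⟨y, hy⟩, hm, rfl⟩; exact hm
    · intro hx; exact ⟨⟨x, trivial⟩, hx, rfl⟩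
  exact isCyclic_of_mulEquiv
    (QuotientGroup.congr (K.subgroupOf ⊤) K Subgroup.topEquiv he).symm hc

lemma cyclicFactor_congr {A A' B B' : Subgroup X} {hA : A.Normal} (hA' : A'.Normal)
    (ea : A = A') (eb : B = B') (h : CyclicFactor A B hA) : CyclicFactor A' B' hA' := by
  subst ea; subst eb; exact h

lemma cyclicFactor_comap {C : Subgroup X} (hC : C.Normal)
    (A B : Subgroup (X ⧸ (letI := hC; C))) (hA : A.Normal)
    (h : CyclicFactor A B hA) :
    letI := hC
    CyclicFactor (A.comap (QuotientGroup.mk' C)) (B.comap (QuotientGroup.mk' C))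
      (hA.comap _) := by
  letI := hC
  unfold CyclicFactor at *
  letI : (A.subgroupOf B).Normal := hA.subgroupOf B
  letI : ((A.comap (QuotientGroup.mk' C)).subgroupOf (B.comap (QuotientGroup.mk' C))).Normal :=
    (hA.comap _).subgroupOf _
  set mk := QuotientGroup.mk' C
  set θ : ↥(B.comap mk) →* ↥B :=
    (mk.comp (B.comap mk).subtype).codRestrict B (fun x => x.2) with hθ
  set ψ : ↥(B.comap mk) →* (↥B ⧸ A.subgroupOf B) :=
    (QuotientGroup.mk' (A.subgroupOf B)).comp θ with hψ
  have hsurj : Function.Surjective ψ := by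
    intro b'
    obtain ⟨b, rfl⟩ := QuotientGroup.mk'_surjective (A.subgroupOf B) b'
    obtain ⟨x, hx⟩ := QuotientGroup.mk'_surjective C (b : X ⧸ C)
    refine ⟨⟨x, by simp [Subgroup.mem_comap, mk, hx]⟩, ?_⟩
    simp only [ψ, MonoidHom.comp_apply]
    congr 1
    exact Subtype.ext hx
  have hker : ψ.ker = (A.comap mk).subgroupOf (B.comap mk) := by
    ext x
    simp only [ψ, MonoidHom.mem_ker, MonoidHom.comp_apply, QuotientGroup.mk'_apply]
    rw [QuotientGroup.eq_one_iff]
    simp [θ, Subgroup.mem_subgroupOf, Subgroup.mem_comap]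
    exact Iff.rfl
  have e := (QuotientGroup.quotientMulEquivOfEq hker.symm).trans
    (QuotientGroup.quotientKerEquivOfSurjective ψ hsurj)
  exact isCyclic_of_mulEquiv e.symm ‹IsCyclic (↥B ⧸ A.subgroupOf B)›

lemma isSupersoluble_of_cyclic_normal {C : Subgroup X} (hC : C.Normal) (hcyc : IsCyclic ↥C)
    (h : letI := hC; IsSupersoluble (X ⧸ C)) : IsSupersoluble X := by
  letI := hC
  obtain ⟨k, K, Knorm, K0, Klast, Kmono, Kcyc⟩ := h
  set mk := QuotientGroup.mk' C with hmk
  set H : Fin (k+2) → Subgroup X := Fin.cases ⊥ (fun j => (K j).comap mk) with hH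
  have hnorm : ∀ i, (H i).Normal := by
    intro i
    induction i using Fin.cases with
    | zero => simp only [hH, Fin.cases_zero]; infer_instance
    | succ j => simp only [hH, Fin.cases_succ]; exact (Knorm j).comap mk
  have hker : (⊥ : Subgroup (X ⧸ C)).comap mk = C := by
    rw [MonoidHom.comap_bot, hmk, QuotientGroup.ker_mk']
  refine ⟨k + 1, H, hnorm, by simp [hH], ?_, ?_, ?_⟩
  · rw [hH, show Fin.last (k+1) = (Fin.last k).succ from (Fin.succ_last k).symm]
    simp only [Fin.cases_succ, Klast]
    exact Subgroup.comap_top mk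
  · intro i
    induction i using Fin.cases with
    | zero => simp only [hH, Fin.castSucc_zero, Fin.cases_zero]; exact bot_le
    | succ j =>
        simp only [hH, Fin.succ_castSucc, Fin.cases_succ]
        exact Subgroup.comap_mono (Kmono j)
  · intro i
    induction i using Fin.cases with
    | zero =>
        refine cyclicFactor_congr _ ?_ ?_ (cyclicFactor_bot (B := C) hcyc inferInstance)
        · simp [hH]
        · show C = H ((0 : Fin (k+1)).succ)
          rw [hH]
          simp only [Fin.cases_succ, K0, hker]
    | succ j =>
        refine cyclicFactor_congr _ ?_ ?_
          (cyclicFactor_comap hC (K j.castSucc) (K j.succ) (Knorm j.castSucc) (Kcyc j))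
        · rw [hH, ← Fin.succ_castSucc]
          simp only [Fin.cases_succ, hmk]
        · show _ = H (j.succ.succ)
          rw [hH]
          simp only [Fin.cases_succ, hmk]

lemma isCyclic_zpowers (x : X) : IsCyclic ↥(Subgroup.zpowers x) :=
  ⟨⟨⟨x, Subgroup.mem_zpowers x⟩, by
    rintro ⟨y, hy⟩
    obtain ⟨k, rfl⟩ := hy
    exact ⟨k, Subtype.ext (by simp)⟩⟩⟩

lemma zpowers_normal_of_center {x : X} (hx : x ∈ Subgroup.center X) :
    (Subgroup.zpowers x).Normal := by
  constructor
  rintro - ⟨k, rfl⟩ g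
  have hcomm := Subgroup.mem_center_iff.mp (Subgroup.zpow_mem (Subgroup.center X) hx k) g
  have : g * x ^ k * g⁻¹ = x ^ k := by rw [hcomm]; group
  rw [this]
  exact Subgroup.zpow_mem _ (Subgroup.mem_zpowers x) k

lemma isSupersoluble_of_isPGroup' {p : ℕ} [Fact p.Prime] :
    ∀ (n : ℕ) (X : Type u) [Group X] [Finite X], Nat.card X ≤ n → IsPGroup p X →
      IsSupersoluble X := by
  intro n
  induction n with
  | zero => intro X _ _ hcard _; exact absurd hcard (by have := Nat.card_pos (α := X); omega)
  | succ n ih =>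
    intro X _ _ hcard hX
    by_cases hs : Subsingleton X
    · exact isSupersoluble_of_subsingleton X
    · have : Nontrivial X := not_subsingleton_iff_nontrivial.mp hs
      have hc := IsPGroup.center_nontrivial hX
      obtain ⟨⟨x, hx⟩, hx1⟩ := exists_ne (1 : Subgroup.center X)
      have hxne : x ≠ 1 := fun h => hx1 (Subtype.ext h)
      set C := Subgroup.zpowers x with hC
      have hCnorm : C.Normal := zpowers_normal_of_center hx
      have hC2 : 2 ≤ Nat.card C := by
        have h2 : x ∈ C := Subgroup.mem_zpowers x
        have hne1 : Nat.card C ≠ 1 := by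
          intro h
          have hbot := Subgroup.card_eq_one.mp h
          rw [hbot] at h2
          exact hxne (Subgroup.mem_bot.mp h2)
        have := Nat.card_pos (α := C)
        omega
      letI := hCnorm
      have heq : Nat.card (X ⧸ C) * Nat.card C = Nat.card X :=
        (Subgroup.card_eq_card_quotient_mul_card_subgroup C).symm
      have hqpos := Nat.card_pos (α := X ⧸ C)
      have hqlt : Nat.card (X ⧸ C) ≤ n := by nlinarith
      exact isSupersoluble_of_cyclic_normal hCnorm (isCyclic_zpowers x)
        (ih (X ⧸ C) hqlt (hX.to_quotient C))

lemma isSupersoluble_of_isPGroup {p : ℕ} [Fact p.Prime] (X : Type u) [Group X] [Finite X]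
    (hX : IsPGroup p X) : IsSupersoluble X :=
  isSupersoluble_of_isPGroup' (Nat.card X) X le_rfl hX

lemma chain_bot_succ {k : ℕ} (H : Fin (k+1) → Subgroup X) (h0 : H 0 = ⊥)
    (hlast : H (Fin.last k) ≠ ⊥) : ∃ j : Fin k, H j.castSucc = ⊥ ∧ H j.succ ≠ ⊥ := by
  by_contra hcon
  push_neg at hcon
  have key : ∀ n (hn : n < k + 1), H ⟨n, hn⟩ = ⊥ := by
    intro n
    induction n with
    | zero => intro hn; exact h0
    | succ m ihm =>
        intro hn
        have hm : m < k := by omega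
        have := hcon ⟨m, hm⟩ (by
          have := ihm (by omega)
          convert this using 2 <;> rfl)
        convert this using 2 <;> rfl
  exact hlast (key k (by omega))

end Generic
end SCrit

namespace SCrit

/-! ### The concrete group -/

instance fact5prime : Fact (Nat.Prime 5) := ⟨by norm_num⟩
instance fact2prime : Fact (Nat.Prime 2) := ⟨by norm_num⟩

abbrev F5 := ZMod 5
abbrev W := F5 × F5
abbrev Qg := QuaternionGroup 2
abbrev M2 := (F5 × F5) × (F5 × F5)

def m2mul (A B : M2) : M2 :=
  ((A.1.1*B.1.1+A.1.2*B.2.1, A.1.1*B.1.2+A.1.2*B.2.2),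
   (A.2.1*B.1.1+A.2.2*B.2.1, A.2.1*B.1.2+A.2.2*B.2.2))
def m2one : M2 := ((1,0),(0,1))
def m2pow (A : M2) : ℕ → M2
  | 0 => m2one
  | n+1 => m2mul A (m2pow A n)
def Mi : M2 := ((2,0),(0,3))
def Mj : M2 := ((0,4),(1,0))
def rep : Qg → M2
  | .a i => m2pow Mi i.val
  | .xa i => m2mul Mj (m2pow Mi i.val)
def act (q : Qg) (v : W) : W :=
  ((rep q).1.1 * v.1 + (rep q).1.2 * v.2, (rep q).2.1 * v.1 + (rep q).2.2 * v.2)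

lemma act_mul : ∀ (q r : Qg) (v : W), act (q*r) v = act q (act r v) := by decide
lemma act_one : ∀ v : W, act 1 v = v := by decide
lemma act_faithful : ∀ q : Qg, (∀ v : W, act q v = v) → q = 1 := by decide
lemma eig : ∀ q : Qg, ∃ c : W, c ≠ 0 ∧ ∃ lam : F5, act q c = lam • c := by decide
lemma q8_sq : ∀ q : Qg, q^2 = 1 → q = 1 ∨ q = .a 2 := by decide
lemma act_i : ∀ v : W, act (.a 1) v = (2*v.1, 3*v.2) := by decide
lemma act_j : ∀ v : W, act (.xa 0) v = (4*v.2, v.1) := by decide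

lemma act_add (q : Qg) (v w : W) : act q (v + w) = act q v + act q w := by
  simp only [act, Prod.fst_add, Prod.snd_add, Prod.mk_add_mk, Prod.mk.injEq]
  constructor <;> ring
lemma act_inv_act (q : Qg) (v : W) : act q⁻¹ (act q v) = v := by
  rw [← act_mul, inv_mul_cancel, act_one]
lemma act_act_inv (q : Qg) (v : W) : act q (act q⁻¹ v) = v := by
  rw [← act_mul, mul_inv_cancel, act_one]

abbrev V := Multiplicative W

def φ : Qg →* MulAut V where
  toFun q :=
    { toFun := fun v => .ofAdd (act q v.toAdd)
      invFun := fun v => .ofAdd (act q⁻¹ v.toAdd)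
      left_inv := fun v => by simp [act_inv_act]
      right_inv := fun v => by simp [act_act_inv]
      map_mul' := fun v w => by
        simp only [toAdd_mul, act_add, ofAdd_add] }
  map_one' := by ext v <;> simp [act_one]
  map_mul' := fun q r => by ext v <;> simp [act_mul]

lemma φ_apply (q : Qg) (v : V) : φ q v = Multiplicative.ofAdd (act q v.toAdd) := rfl

abbrev G := V ⋊[φ] Qg

instance : Finite G :=
  Finite.of_injective (fun g : G => (g.left, g.right)) (by
    intro a b h
    cases a; cases b; simp_all)

abbrev NN : Subgroup G := (SemidirectProduct.inl : V →* G).range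

lemma NN_normal : NN.Normal := by
  rw [show NN = _ from SemidirectProduct.range_inl_eq_ker_rightHom]
  infer_instance

lemma mem_NN (g : G) : g ∈ NN ↔ g.right = 1 := by
  constructor
  · rintro ⟨v, rfl⟩; rfl
  · intro h
    exact ⟨g.left, by ext <;> simp [h]⟩

open SemidirectProduct in
lemma conj_inl (g : G) (v : V) : g * inl v * g⁻¹ = inl (φ g.right v) := by
  have h : g = inl g.left * inr g.right := (inl_left_mul_inr_right g).symm
  rw [SemidirectProduct.inl_aut]
  rw [h]
  ext <;> simp [SemidirectProduct.mul_left, SemidirectProduct.mul_right, mul_comm]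

/-! ### linear algebra over `F5` -/

lemma val_smul (c : F5) (x : F5) : (c.val : F5) * x = c * x := by
  simp [ZMod.natCast_val, ZMod.cast_id]

lemma pow_ofAdd (x : W) (n : ℕ) :
    (Multiplicative.ofAdd x) ^ n = Multiplicative.ofAdd (n • x) := by
  simp [← ofAdd_nsmul]

lemma span_pair {S : Subgroup V} {p r : F5} (hp : p ≠ 0) (hr : r ≠ 0)
    (h1 : Multiplicative.ofAdd ((p,0):W) ∈ S) (h2 : Multiplicative.ofAdd ((0,r):W) ∈ S) :
    S = ⊤ := by
  ext g
  simp only [Subgroup.mem_top, iff_true]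
  set s := g.toAdd.1
  set t := g.toAdd.2
  have key : g = (Multiplicative.ofAdd ((p,0):W)) ^ (s * p⁻¹).val *
      (Multiplicative.ofAdd ((0,r):W)) ^ (t * r⁻¹).val := by
    rw [pow_ofAdd, pow_ofAdd]
    have hg : g = Multiplicative.ofAdd (s, t) := by simp [s, t]
    rw [hg, ← ofAdd_add]
    congr 1
    simp only [Prod.smul_mk, smul_zero, Prod.mk_add_mk, add_zero, zero_add]
    have e1 : ((s * p⁻¹).val) • p = s := by
      rw [nsmul_eq_mul, val_smul, mul_assoc, inv_mul_cancel₀ hp, mul_one]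
    have e2 : ((t * r⁻¹).val) • r = t := by
      rw [nsmul_eq_mul, val_smul, mul_assoc, inv_mul_cancel₀ hr, mul_one]
    rw [e1, e2]
  rw [key]
  exact mul_mem (pow_mem h1 _) (pow_mem h2 _)

lemma five_eq_zero : (5 : F5) = 0 := by decide

lemma irreducible {S : Subgroup V} (hS : ∀ (q : Qg), ∀ v ∈ S, φ q v ∈ S) (hne : S ≠ ⊥) :
    S = ⊤ := by
  obtain ⟨⟨v, hvS⟩, hv1⟩ := Subgroup.ne_bot_iff_exists_ne_one.mp hne
  have hv1' : v ≠ 1 := fun h => hv1 (Subtype.ext h)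
  set x := v.toAdd.1 with hx
  set y := v.toAdd.2 with hy
  have hv : v = Multiplicative.ofAdd (x, y) := by simp [hx, hy]
  -- (0, y) ∈ S
  have hiv : Multiplicative.ofAdd (act (.a 1) (x,y)) ∈ S := by
    have := hS (.a 1) v hvS
    rwa [φ_apply, hv] at this
  rw [act_i] at hiv
  have h0y : Multiplicative.ofAdd ((0:F5), y) ∈ S := by
    have h3 : v ^ (3:ℕ) * Multiplicative.ofAdd ((2*x:F5), (3*y:F5)) ∈ S :=
      mul_mem (pow_mem hvS 3) hiv
    have : v ^ (3:ℕ) * Multiplicative.ofAdd ((2*x:F5), (3*y:F5)) =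
        Multiplicative.ofAdd ((0:F5), y) := by
      rw [hv, pow_ofAdd, ← ofAdd_add]
      congr 1
      simp only [Prod.smul_mk, Prod.mk_add_mk, Prod.mk.injEq]
      constructor
      · rw [nsmul_eq_mul]; push_cast; linear_combination x * five_eq_zero
      · rw [nsmul_eq_mul]; push_cast; linear_combination y * five_eq_zero
    rwa [this] at h3
  have hx0 : Multiplicative.ofAdd (x, (0:F5)) ∈ S := by
    have := mul_mem hvS (inv_mem h0y)
    have e : v * (Multiplicative.ofAdd ((0:F5), y))⁻¹ = Multiplicative.ofAdd (x, (0:F5)) := by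
      rw [hv, ← ofAdd_neg, ← ofAdd_add]
      congr 1
      simp
    rwa [e] at this
  by_cases hxz : x = 0
  · -- then y ≠ 0
    have hyz : y ≠ 0 := by
      intro hyz
      exact hv1' (by rw [hv, hxz, hyz]; rfl)
    have hj := hS (.xa 0) _ h0y
    rw [φ_apply, toAdd_ofAdd, act_j] at hj
    simp only at hj
    exact span_pair (mul_ne_zero (by decide) hyz) hyz hj h0y
  · by_cases hyz : y = 0
    · have hj : Multiplicative.ofAdd (act (.xa 0) (x, (0:F5))) ∈ S := by
        have := hS (.xa 0) _ hx0
        rwa [φ_apply] at this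
      rw [act_j] at hj
      simp only [mul_zero] at hj
      exact span_pair hxz hxz hx0 hj
    · exact span_pair hxz hyz hx0 h0y

end SCrit

namespace SCrit
open SemidirectProduct

/-! ### Every nontrivial normal subgroup contains `NN` -/

lemma star : ∀ M : Subgroup G, M.Normal → M ≠ ⊥ → NN ≤ M := by
  intro M hM hMne
  by_cases hint : M ⊓ NN = ⊥
  · exfalso
    apply hMne
    rw [eq_bot_iff]
    intro m hm
    have hcen : ∀ v : V, m * inl v * m⁻¹ = inl v := by
      intro v
      have hcN : m * inl v * m⁻¹ * (inl v)⁻¹ ∈ NN :=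
        mul_mem (by rw [conj_inl]; exact ⟨_, rfl⟩) (inv_mem ⟨v, rfl⟩)
      have hcM : m * inl v * m⁻¹ * (inl v)⁻¹ ∈ M := by
        have h1 : inl v * m⁻¹ * (inl v)⁻¹ ∈ M := hM.conj_mem m⁻¹ (inv_mem hm) (inl v)
        have : m * (inl v * m⁻¹ * (inl v)⁻¹) ∈ M := mul_mem hm h1
        convert this using 1
        group
      have : m * inl v * m⁻¹ * (inl v)⁻¹ ∈ M ⊓ NN := ⟨hcM, hcN⟩
      rw [hint, Subgroup.mem_bot] at this
      calc m * inl v * m⁻¹ = m * inl v * m⁻¹ * (inl v)⁻¹ * inl v := by group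
      _ = 1 * inl v := by rw [this]
      _ = inl v := one_mul _
    have hright : m.right = 1 := by
      apply act_faithful
      intro w
      have := hcen (Multiplicative.ofAdd w)
      rw [conj_inl] at this
      have h2 := inl_injective this
      rw [φ_apply] at h2
      simpa using h2
    have hmN : m ∈ NN := (mem_NN m).mpr hright
    have : m ∈ M ⊓ NN := ⟨hm, hmN⟩
    rw [hint, Subgroup.mem_bot] at this
    rw [this]
    exact one_mem _
  · set S : Subgroup V := Subgroup.comap (inl : V →* G) M with hSdef
    have hSinv : ∀ (q : Qg), ∀ v ∈ S, φ q v ∈ S := by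
      intro q v hv
      have h1 : inr q * inl v * (inr q)⁻¹ ∈ M := hM.conj_mem _ hv (inr q)
      have h2 : (inl (φ q v) : G) ∈ M := by
        rw [SemidirectProduct.inl_aut, map_inv]
        exact h1
      exact h2
    have hSne : S ≠ ⊥ := by
      intro hS
      apply hint
      rw [eq_bot_iff]
      rintro g ⟨hgM, v, rfl⟩
      have : v ∈ S := hgM
      rw [hS, Subgroup.mem_bot] at this
      rw [this, Subgroup.mem_bot, map_one]
    have hStop := irreducible hSinv hSne
    rintro g ⟨v, rfl⟩
    have : v ∈ S := hStop ▸ Subgroup.mem_top v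
    exact this

/-! ### Cards and basic structure -/

lemma card_V : Nat.card V = 25 := by
  simp [Nat.card_eq_fintype_card]

noncomputable def NN_equiv : V ≃* ↥NN := MonoidHom.ofInjective inl_injective

lemma card_NN : Nat.card ↥NN = 25 := by
  rw [← card_V]
  exact (Nat.card_congr NN_equiv.toEquiv).symm

lemma v_pow5 : ∀ v : V, v ^ (5:ℕ) = 1 := by decide

lemma V_not_cyclic : ¬ IsCyclic V := by
  intro h
  obtain ⟨g, hg⟩ := h.exists_generator
  have h25 : orderOf g = 25 := by
    rw [orderOf_eq_card_of_forall_mem_zpowers hg, card_V]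
  have h5 : orderOf g ∣ 5 := orderOf_dvd_of_pow_eq_one (v_pow5 g)
  rw [h25] at h5
  omega

lemma NN_ne_bot : NN ≠ ⊥ := by
  intro h
  have h1 : Nat.card ↥NN = 25 := card_NN
  rw [h, Subgroup.card_bot] at h1
  omega

instance NN_normal' : (NN : Subgroup G).Normal := NN_normal

instance : Nontrivial G := by
  have hne : (NN : Subgroup G) ≠ ⊥ := NN_ne_bot
  rcases Subgroup.bot_or_nontrivial NN with h | h
  · exact absurd h hne
  · obtain ⟨a, b, hab⟩ := h
    exact ⟨(a : G), (b : G), fun h => hab (Subtype.ext h)⟩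

lemma card_Qg : Nat.card Qg = 8 := by
  rw [Nat.card_eq_fintype_card, QuaternionGroup.card]

lemma Qg_isPGroup : IsPGroup 2 Qg :=
  IsPGroup.of_card (n := 3) (by rw [card_Qg]; norm_num)

noncomputable def quotIso : (G ⧸ (NN : Subgroup G)) ≃* Qg :=
  (QuotientGroup.quotientMulEquivOfEq SemidirectProduct.range_inl_eq_ker_rightHom).trans
    (QuotientGroup.quotientKerEquivOfSurjective _ rightHom_surjective)

/-! ### Proper subgroups of `Q₈` are cyclic -/

lemma qsub_cyclic (R : Subgroup Qg) (hR : R ≠ ⊤) : IsCyclic ↥R := by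
  have hdvd : Nat.card ↥R ∣ 8 := card_Qg ▸ Subgroup.card_subgroup_dvd_card R
  have hne : Nat.card ↥R ≠ 8 := by
    intro h
    exact hR (Subgroup.eq_top_of_card_eq R (by rw [h, card_Qg]))
  have hdvd' : Nat.card ↥R ∣ 2 ^ 3 := by norm_num at hdvd ⊢; exact hdvd
  obtain ⟨i, hi3, hcard⟩ := (Nat.dvd_prime_pow Nat.prime_two).mp hdvd'
  have hi3' : i ≤ 3 := hi3
  interval_cases i
  · have : Subsingleton ↥R := Nat.card_eq_one_iff_unique.mp (by simpa using hcard) |>.1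
    exact isCyclic_of_subsingleton
  · exact isCyclic_of_prime_card (p := 2) (by simpa using hcard)
  · -- card 4
    have h : Nat.card ↥R = 4 := by simpa using hcard
    by_contra hnc
    have hsq : ∀ r : ↥R, r ^ (2:ℕ) = 1 := by
      intro r
      have hdvd4 : orderOf r ∣ 4 := h ▸ orderOf_dvd_natCard r
      have hne4 : orderOf r ≠ 4 := fun h4 =>
        hnc (isCyclic_of_orderOf_eq_card r (by rw [h4, h]))
      have h2 : orderOf r ∣ 2 := by
        obtain ⟨c, hc⟩ := hdvd4
        have hle : orderOf r ≤ 4 := Nat.le_of_dvd (by norm_num) ⟨c, hc⟩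
        have hpos : 0 < orderOf r := orderOf_pos r
        interval_cases hor : orderOf r <;> omega
      exact orderOf_dvd_iff_pow_eq_one.mp h2
    have hsubset : ∀ r : ↥R, (r : Qg) = 1 ∨ (r : Qg) = .a 2 := by
      intro r
      have hr2 : ((r : Qg)) ^ (2:ℕ) = 1 := by
        have := congrArg (Subtype.val) (hsq r)
        simpa using this
      exact q8_sq _ hr2
    have hcard_le : Nat.card ↥R ≤ 2 := by
      have hinj : Function.Injective
          (fun r : ↥R => (⟨(r : Qg), by
            rcases hsubset r with h1 | h1 <;> simp [h1]⟩ :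
              ({1, QuaternionGroup.a 2} : Set Qg))) := by
        intro a b hab
        apply Subtype.ext
        simpa using congrArg Subtype.val hab
      have hle : Nat.card ↥R ≤ Nat.card ↥({1, QuaternionGroup.a 2} : Set Qg) :=
        Nat.card_le_card_of_injective _ hinj
      have hpair : Nat.card ({1, QuaternionGroup.a 2} : Set Qg) ≤ 2 := by
        rw [Nat.card_coe_set_eq]
        exact (Set.ncard_insert_le _ _).trans (by simp)
      omega
    omega
  · exact absurd (by simpa using hcard) hne

end SCrit

namespace SCrit
open SemidirectProduct

/-! ### Proper subgroups are supersoluble -/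

def fH (H : Subgroup G) : ↥H →* Qg := SemidirectProduct.rightHom.comp H.subtype

lemma fH_apply (H : Subgroup G) (x : ↥H) : fH H x = (x : G).right := rfl

lemma ker_fH (H : Subgroup G) : (fH H).ker = NN.subgroupOf H := by
  ext x
  simp only [MonoidHom.mem_ker, Subgroup.mem_subgroupOf, fH_apply, mem_NN]

abbrev Sv (H : Subgroup G) : Subgroup V := Subgroup.comap (inl : V →* G) H

lemma range_fH (H : Subgroup G) : (fH H).range = H.map SemidirectProduct.rightHom := by
  ext q
  constructor
  · rintro ⟨⟨g, hg⟩, rfl⟩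
    exact ⟨g, hg, rfl⟩
  · rintro ⟨g, hg, rfl⟩
    exact ⟨⟨g, hg⟩, rfl⟩

lemma Sv_inv (H : Subgroup G) :
    ∀ q ∈ H.map SemidirectProduct.rightHom, ∀ v ∈ Sv H, φ q v ∈ Sv H := by
  rintro q ⟨h, hh, rfl⟩ v hv
  have : h * inl v * h⁻¹ ∈ H := mul_mem (mul_mem hh hv) (inv_mem hh)
  rwa [conj_inl] at this

lemma top_of_R_top {H : Subgroup G} (hNle : NN ≤ H)
    (hR : H.map SemidirectProduct.rightHom = ⊤) : H = ⊤ := by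
  rw [eq_top_iff]
  intro g _
  have : g.right ∈ H.map SemidirectProduct.rightHom := hR ▸ Subgroup.mem_top _
  obtain ⟨h, hh, hq⟩ := this
  have hmem : g * h⁻¹ ∈ NN := by
    rw [mem_NN]
    simp [SemidirectProduct.mul_right, SemidirectProduct.inv_right, ← hq]
  have : g * h⁻¹ * h ∈ H := mul_mem (hNle hmem) hh
  simpa using this

lemma card_Sv_of_proper {H : Subgroup G} (hbot : Sv H ≠ ⊥) (htop : Sv H ≠ ⊤) :
    Nat.card ↥(Sv H) = 5 := by
  have hdvd : Nat.card ↥(Sv H) ∣ 25 := card_V ▸ Subgroup.card_subgroup_dvd_card (Sv H)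
  have hdvd' : Nat.card ↥(Sv H) ∣ 5 ^ 2 := by norm_num at hdvd ⊢; exact hdvd
  obtain ⟨i, hi2, hcard⟩ := (Nat.dvd_prime_pow (by norm_num : Nat.Prime 5)).mp hdvd'
  interval_cases i
  · exact absurd (Subgroup.card_eq_one.mp (by simpa using hcard)) hbot
  · simpa using hcard
  · exact absurd (Subgroup.eq_top_of_card_eq _ (by rw [hcard, card_V]; norm_num)) htop

lemma inf_eq_map (H : Subgroup G) : NN ⊓ H = (Sv H).map (inl : V →* G) := by
  ext g
  constructor
  · rintro ⟨⟨v, rfl⟩, hgH⟩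
    exact ⟨v, hgH, rfl⟩
  · rintro ⟨v, hv, rfl⟩
    exact ⟨⟨v, rfl⟩, hv⟩

lemma card_ker_fH (H : Subgroup G) : Nat.card ↥((fH H).ker) = Nat.card ↥(Sv H) := by
  rw [ker_fH, ← Subgroup.inf_subgroupOf_right NN H]
  rw [Nat.card_congr (Subgroup.subgroupOfEquivOfLe (inf_le_right : NN ⊓ H ≤ H)).toEquiv]
  rw [inf_eq_map H]
  exact (Nat.card_congr ((Sv H).equivMapOfInjective _ inl_injective).toEquiv).symm

lemma quot_ker_cyclic {H : Subgroup G} (hRne : H.map SemidirectProduct.rightHom ≠ ⊤) :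
    IsCyclic (↥H ⧸ (fH H).ker) := by
  have hR : IsCyclic ↥(H.map SemidirectProduct.rightHom) := qsub_cyclic _ hRne
  have hrange : IsCyclic ↥((fH H).range) := by rw [range_fH]; exact hR
  exact isCyclic_of_mulEquiv (QuotientGroup.quotientKerEquivRange (fH H)).symm hrange

lemma cyclicFactor_of_card_five {X : Type} [Group X] [Finite X] {A B : Subgroup X}
    (hA : A.Normal) (hAB : A ≤ B) (hcardA : Nat.card ↥(A.subgroupOf B) = 5)
    (hcardB : Nat.card ↥B = 25) : CyclicFactor A B hA := by
  unfold CyclicFactor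
  letI : (A.subgroupOf B).Normal := hA.subgroupOf B
  have hq := Subgroup.card_eq_card_quotient_mul_card_subgroup (A.subgroupOf B)
  rw [hcardB, hcardA] at hq
  exact isCyclic_of_prime_card (p := 5) (by omega)

lemma proper_supersoluble (H : Subgroup G) (hH : H ≠ ⊤) : IsSupersoluble ↥H := by
  by_cases hbot : Sv H = ⊥
  · -- `H` meets `NN` trivially, so embeds into `Q₈`
    have hker : (fH H).ker = ⊥ := by
      rw [eq_bot_iff]
      rintro ⟨g, hg⟩ hk
      rw [MonoidHom.mem_ker, fH_apply] at hk
      have hgN : g ∈ NN := (mem_NN g).mpr hk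
      obtain ⟨v, rfl⟩ := hgN
      have : v ∈ Sv H := hg
      rw [hbot, Subgroup.mem_bot] at this
      subst this
      simp [Subgroup.mem_bot, map_one]
    have hinj : Function.Injective (fH H) := (fH H).ker_eq_bot_iff.mp hker
    exact isSupersoluble_of_isPGroup _ (Qg_isPGroup.of_injective (fH H) hinj)
  by_cases htop : Sv H = ⊤
  · -- `NN ≤ H` : four-step chain
    have hNle : NN ≤ H := by
      rintro g ⟨v, rfl⟩
      exact (htop ▸ Subgroup.mem_top v : v ∈ Sv H)
    have hRne : H.map SemidirectProduct.rightHom ≠ ⊤ :=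
      fun hR => hH (top_of_R_top hNle hR)
    have hRcyc : IsCyclic ↥(H.map SemidirectProduct.rightHom) := qsub_cyclic _ hRne
    obtain ⟨gen, hgen⟩ := hRcyc.exists_generator
    set ρ : Qg := (gen : Qg) with hρ
    obtain ⟨c, hc0, lam, heig⟩ := eig ρ
    set Lv : Subgroup V := Subgroup.zpowers (Multiplicative.ofAdd c) with hLv
    have hLvcard : Nat.card ↥Lv = 5 := by
      rw [hLv, Nat.card_zpowers]
      refine orderOf_eq_prime (v_pow5 _) ?_
      intro h
      exact hc0 (by simpa using h)
    have hofAdd_lam : Multiplicative.ofAdd (lam • c) ∈ Lv := by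
      refine ⟨(lam.val : ℤ), ?_⟩
      show (Multiplicative.ofAdd c) ^ ((lam.val : ℕ) : ℤ) = Multiplicative.ofAdd (lam • c)
      rw [zpow_natCast, pow_ofAdd]
      congr 1
      ext
      · show (lam.val : ℕ) • c.1 = lam * c.1
        rw [nsmul_eq_mul, val_smul]
      · show (lam.val : ℕ) • c.2 = lam * c.2
        rw [nsmul_eq_mul, val_smul]
    have hstab : ∀ q ∈ H.map SemidirectProduct.rightHom, ∀ v ∈ Lv, φ q v ∈ Lv := by
      set SG : Subgroup Qg :=
        { carrier := {q | ∀ v ∈ Lv, φ q v ∈ Lv}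
          one_mem' := by intro v hv; simpa using hv
          mul_mem' := by
            intro a b ha hb v hv
            rw [map_mul]
            exact ha _ (hb _ hv)
          inv_mem' := by
            intro a ha v hv
            set ψ : ↥Lv → ↥Lv := fun x => ⟨φ a x, ha _ x.2⟩ with hψ
            have hinj : Function.Injective ψ := by
              intro x y hxy
              have := congrArg Subtype.val hxy
              exact Subtype.ext ((φ a).injective this)
            have hsurj : Function.Surjective ψ := Finite.surjective_of_injective hinj
            obtain ⟨⟨w, hw⟩, hww⟩ := hsurj ⟨v, hv⟩
            have hvw : φ a w = v := congrArg Subtype.val hww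
            have : φ a⁻¹ v = w := by
              rw [← hvw, map_inv]
              exact (φ a).symm_apply_apply w
            rw [this]
            exact hw } with hSG
      have hρSG : ρ ∈ SG := by
        rintro v ⟨z, rfl⟩
        show φ ρ ((Multiplicative.ofAdd c) ^ z) ∈ Lv
        rw [map_zpow]
        refine Subgroup.zpow_mem _ ?_ z
        have : φ ρ (Multiplicative.ofAdd c) = Multiplicative.ofAdd (lam • c) := by
          rw [φ_apply, toAdd_ofAdd, heig]
        rw [this]
        exact hofAdd_lam
      intro q hq v hv
      obtain ⟨z, hz⟩ := hgen ⟨q, hq⟩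
      have hqρ : ρ ^ z = q := by
        have := congrArg (Subtype.val) hz
        simpa [hρ] using this
      have : ρ ^ z ∈ SG := Subgroup.zpow_mem _ hρSG z
      rw [hqρ] at this
      exact this _ hv
    set L : Subgroup G := Lv.map (inl : V →* G) with hL
    have hLNN : L ≤ NN := by
      rintro g ⟨v, hv, rfl⟩
      exact ⟨v, rfl⟩
    have hLH : L ≤ H := hLNN.trans hNle
    set L1 : Subgroup ↥H := L.subgroupOf H with hL1
    set K1 : Subgroup ↥H := (fH H).ker with hK1
    have hL1norm : L1.Normal := by
      constructor
      intro n hn g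
      have hnL : (n : G) ∈ L := hn
      obtain ⟨v, hv, hvn⟩ := hnL
      show ((g * n * g⁻¹ : ↥H) : G) ∈ L
      have hcoe : ((g * n * g⁻¹ : ↥H) : G) = (g : G) * (n : G) * (g : G)⁻¹ := by
        push_cast
        rfl
      rw [hcoe, ← hvn, conj_inl]
      exact ⟨_, hstab _ ⟨(g : G), g.2, rfl⟩ v hv, rfl⟩
    have hL1card : Nat.card ↥L1 = 5 := by
      rw [hL1, Nat.card_congr (Subgroup.subgroupOfEquivOfLe hLH).toEquiv, hL,
        ← Nat.card_congr (Lv.equivMapOfInjective _ inl_injective).toEquiv]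
      exact hLvcard
    have hK1card : Nat.card ↥K1 = 25 := by
      rw [hK1, ker_fH, Nat.card_congr (Subgroup.subgroupOfEquivOfLe hNle).toEquiv]
      exact card_NN
    have hL1K1 : L1 ≤ K1 := by
      intro x hx
      rw [hK1, ker_fH]
      exact Subgroup.mem_subgroupOf.mpr (hLNN hx)
    have hK1norm : K1.Normal := (fH H).normal_ker
    have hQcyc : IsCyclic (↥H ⧸ K1) := quot_ker_cyclic hRne
    have hnorm : ∀ i, ((![⊥, L1, K1, ⊤] : Fin 4 → Subgroup ↥H) i).Normal := by
      intro i
      fin_cases i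
      · exact (inferInstance : (⊥ : Subgroup ↥H).Normal)
      · exact hL1norm
      · exact hK1norm
      · exact (inferInstance : (⊤ : Subgroup ↥H).Normal)
    refine ⟨3, ![⊥, L1, K1, ⊤], hnorm, rfl, rfl, ?_, ?_⟩
    · intro i
      fin_cases i
      · exact bot_le
      · exact hL1K1
      · exact le_top
    · intro i
      fin_cases i
      · exact cyclicFactor_bot (isCyclic_of_prime_card (p := 5) hL1card) _
      · have hsub5 : Nat.card ↥(L1.subgroupOf K1) = 5 := by
          rw [Nat.card_congr (Subgroup.subgroupOfEquivOfLe hL1K1).toEquiv]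
          exact hL1card
        exact cyclicFactor_of_card_five _ hL1K1 hsub5 hK1card
      · exact cyclicFactor_top _ hQcyc
  · -- `Sv H` is a line : two-step chain
    have hRne : H.map SemidirectProduct.rightHom ≠ ⊤ := by
      intro hR
      apply htop
      apply irreducible _ hbot
      intro q v hv
      exact Sv_inv H q (hR ▸ Subgroup.mem_top q) v hv
    set K1 : Subgroup ↥H := (fH H).ker with hK1
    have hK1card : Nat.card ↥K1 = 5 := by
      rw [hK1, card_ker_fH]
      exact card_Sv_of_proper hbot htop
    have hK1norm : K1.Normal := (fH H).normal_ker
    have hQcyc : IsCyclic (↥H ⧸ K1) := quot_ker_cyclic hRne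
    have hnorm : ∀ i, ((![⊥, K1, ⊤] : Fin 3 → Subgroup ↥H) i).Normal := by
      intro i
      fin_cases i
      · exact (inferInstance : (⊥ : Subgroup ↥H).Normal)
      · exact hK1norm
      · exact (inferInstance : (⊤ : Subgroup ↥H).Normal)
    refine ⟨2, ![⊥, K1, ⊤], hnorm, rfl, rfl, ?_, ?_⟩
    · intro i
      fin_cases i
      · exact bot_le
      · exact le_top
    · intro i
      fin_cases i
      · exact cyclicFactor_bot (isCyclic_of_prime_card (p := 5) hK1card) _
      · exact cyclicFactor_top _ hQcyc

end SCrit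

namespace SCrit
open SemidirectProduct

lemma G_not_supersoluble : ¬ IsSupersoluble G := by
  rintro ⟨k, Hc, hn, h0, hl, hm, hc⟩
  have hlast : Hc (Fin.last k) ≠ ⊥ := by
    rw [hl]
    intro h
    have h1 : Nat.card ↥(⊥ : Subgroup G) = 1 := Subgroup.card_bot
    rw [← h, Subgroup.card_top] at h1
    obtain ⟨a, b, hab⟩ := (inferInstance : Nontrivial G)
    exact hab (Nat.card_eq_one_iff_unique.mp h1 |>.1.allEq a b)
  obtain ⟨j, hj0, hj1⟩ := chain_bot_succ Hc h0 hlast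
  have hNle : NN ≤ Hc j.succ := star _ (hn _) hj1
  have hBcyc : IsCyclic ↥(Hc j.succ) :=
    isCyclic_of_cyclicFactor_bot inferInstance (cyclicFactor_congr inferInstance hj0 rfl (hc j))
  letI := hBcyc
  have hsub : IsCyclic ↥(NN.subgroupOf (Hc j.succ)) := Subgroup.isCyclic _
  have hNNcyc : IsCyclic ↥NN :=
    isCyclic_of_mulEquiv (Subgroup.subgroupOfEquivOfLe hNle) hsub
  exact V_not_cyclic (isCyclic_of_mulEquiv NN_equiv.symm hNNcyc)

lemma NN_comm : ∀ a b : ↥NN, a * b = b * a := by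
  intro a b
  obtain ⟨v, hv⟩ := a.2
  obtain ⟨w, hw⟩ := b.2
  apply Subtype.ext
  show (a : G) * (b : G) = (b : G) * (a : G)
  rw [← hv, ← hw, ← map_mul, ← map_mul, mul_comm]

lemma NN_orders : ∀ n : ↥NN, n ≠ 1 → orderOf n = 5 := by
  intro n hn
  refine orderOf_eq_prime ?_ hn
  apply Subtype.ext
  obtain ⟨v, hv⟩ := n.2
  show ((n ^ (5:ℕ) : ↥NN) : G) = 1
  push_cast
  rw [← hv, ← map_pow, v_pow5, map_one]

lemma NN_minNormal : IsMinNormal NN :=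
  ⟨NN_normal, NN_ne_bot, fun M hM hle => by
    by_cases h : M = ⊥
    · exact Or.inl h
    · exact Or.inr (le_antisymm hle (star M hM h))⟩

lemma NN_uniqueMin : ∀ M : Subgroup G, IsMinNormal M → M = NN := by
  rintro M ⟨hMn, hMne, hmin⟩
  rcases hmin NN NN_normal (star M hMn hMne) with h | h
  · exact absurd h NN_ne_bot
  · exact h.symm

lemma quot_supersoluble (M : Subgroup G) (hM : M.Normal) (hMne : M ≠ ⊥) :
    letI := hM; IsSupersoluble (G ⧸ M) := by
  letI := hM
  have hNle : NN ≤ M := star M hM hMne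
  have hp1 : IsPGroup 2 (G ⧸ (NN : Subgroup G)) :=
    Qg_isPGroup.of_surjective quotIso.symm.toMonoidHom quotIso.symm.surjective
  set f : (G ⧸ (NN : Subgroup G)) →* (G ⧸ M) :=
    QuotientGroup.map NN M (MonoidHom.id G) (by simpa using hNle) with hf
  have hsurj : Function.Surjective f := by
    intro x
    obtain ⟨g, rfl⟩ := QuotientGroup.mk_surjective x
    exact ⟨QuotientGroup.mk g, rfl⟩
  exact isSupersoluble_of_isPGroup _ (hp1.of_surjective f hsurj)

lemma G_solvable : IsSolvable G := by
  letI : Group.IsSolvable V := by infer_instance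
  letI : Group.IsNilpotent Qg := Qg_isPGroup.isNilpotent
  letI : Group.IsSolvable Qg := inferInstance
  exact solvable_of_ker_le_range inl rightHom
    (le_of_eq SemidirectProduct.range_inl_eq_ker_rightHom.symm)

end SCrit


theorem exists_strongly_critical_supersoluble_with_Q8_top :
    ∃ (G : Type) (instG : Group G),
      letI := instG
      Finite G ∧ IsSolvable G ∧
      ∃ (N : Subgroup G) (hN : N.Normal),
        letI := hN
        -- `N` is elementary abelian of order 25
        Nat.card N = 25 ∧ (∀ a b : N, a * b = b * a) ∧
        (∀ n : N, n ≠ 1 → orderOf n = 5) ∧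
        -- `N` is the unique minimal normal subgroup of `G`
        IsMinNormal N ∧ (∀ M : Subgroup G, IsMinNormal M → M = N) ∧
        -- `G / N ≅ Q₈`
        Nonempty ((G ⧸ N) ≃* QuaternionGroup 2) ∧
        -- `G` is not supersoluble, every proper subgroup is supersoluble,
        ¬ IsSupersoluble G ∧
        (∀ H : Subgroup G, H ≠ ⊤ → IsSupersoluble ↥H) ∧
        -- and every quotient by a nontrivial normal subgroup is supersoluble
        (∀ (M : Subgroup G) (hM : M.Normal), M ≠ ⊥ →
          (letI := hM; IsSupersoluble (G ⧸ M))) := by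
  refine ⟨SCrit.G, inferInstance, inferInstance, SCrit.G_solvable,
    SCrit.NN, SCrit.NN_normal, SCrit.card_NN, SCrit.NN_comm, SCrit.NN_orders,
    SCrit.NN_minNormal, SCrit.NN_uniqueMin, ⟨SCrit.quotIso⟩,
    SCrit.G_not_supersoluble, SCrit.proper_supersoluble, SCrit.quot_supersoluble⟩
end

section
/- There exists a finite group G such that the set {x ∈ G : for every y ∈ G, ⟨x,y⟩ is supersoluble} is not equal (as a set) to the intersection of all supersoluble-maximal subgroups of G; that is, the class 𝔘 of finite supersoluble groups is not regular. -/
universe u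

inductive Q8 : Type
  | e | n | i | ni | j | nj | k | nk
  deriving DecidableEq

instance : Fintype Q8 where
  elems := ⟨↑[Q8.e, Q8.n, Q8.i, Q8.ni, Q8.j, Q8.nj, Q8.k, Q8.nk], Multiset.coe_nodup.mpr (by decide)⟩
  complete := fun x => by cases x <;> decide

namespace Q8

def mul : Q8 → Q8 → Q8
  | e, x => x
  | n, e => n
  | n, n => e
  | n, i => ni
  | n, ni => i
  | n, j => nj
  | n, nj => j
  | n, k => nk
  | n, nk => k
  | i, e => i
  | i, n => ni
  | i, i => n
  | i, ni => e
  | i, j => k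
  | i, nj => nk
  | i, k => nj
  | i, nk => j
  | ni, e => ni
  | ni, n => i
  | ni, i => e
  | ni, ni => n
  | ni, j => nk
  | ni, nj => k
  | ni, k => j
  | ni, nk => nj
  | j, e => j
  | j, n => nj
  | j, i => nk
  | j, ni => k
  | j, j => n
  | j, nj => e
  | j, k => i
  | j, nk => ni
  | nj, e => nj
  | nj, n => j
  | nj, i => k
  | nj, ni => nk
  | nj, j => e
  | nj, nj => n
  | nj, k => ni
  | nj, nk => i
  | k, e => k
  | k, n => nk
  | k, i => j
  | k, ni => nj
  | k, j => ni
  | k, nj => i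
  | k, k => n
  | k, nk => e
  | nk, e => nk
  | nk, n => k
  | nk, i => nj
  | nk, ni => j
  | nk, j => i
  | nk, nj => ni
  | nk, k => e
  | nk, nk => n

def inv : Q8 → Q8
  | e => e
  | n => n
  | i => ni
  | ni => i
  | j => nj
  | nj => j
  | k => nk
  | nk => k

instance : Group Q8 where
  mul := mul
  one := e
  inv := inv
  mul_assoc := by decide
  one_mul := by decide
  mul_one := by decide
  inv_mul_cancel := by decide

end Q8

abbrev V5 : Type := ZMod 5 × ZMod 5

/-- the action of `Q8` on `V5 = (ZMod 5)²` through matrices. -/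
def act : Q8 → V5 → V5
  | Q8.e, v => v
  | Q8.n, v => (4*v.1, 4*v.2)
  | Q8.i, v => (2*v.1, 3*v.2)
  | Q8.ni, v => (3*v.1, 2*v.2)
  | Q8.j, v => (v.2, 4*v.1)
  | Q8.nj, v => (4*v.2, v.1)
  | Q8.k, v => (2*v.2, 2*v.1)
  | Q8.nk, v => (3*v.2, 3*v.1)

lemma act_add (q : Q8) (v w : V5) : act q (v + w) = act q v + act q w := by
  cases q <;> simp [act, Prod.ext_iff, mul_add]

lemma act_mul (q r : Q8) (v : V5) : act (q * r) v = act q (act r v) := by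
  revert v; show ∀ v : V5, _
  cases q <;> cases r <;> decide

lemma act_one (v : V5) : act 1 v = v := rfl

lemma act_zero (q : Q8) : act q 0 = 0 := by cases q <;> decide

@[ext] structure GG : Type where
  v : V5
  q : Q8
  deriving DecidableEq, Fintype

namespace GG

instance : Mul GG := ⟨fun a b => ⟨a.v + act a.q b.v, a.q * b.q⟩⟩
instance : One GG := ⟨⟨0, 1⟩⟩
instance : Inv GG := ⟨fun a => ⟨-(act a.q⁻¹ a.v), a.q⁻¹⟩⟩

lemma mul_def (a b : GG) : a * b = ⟨a.v + act a.q b.v, a.q * b.q⟩ := rfl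
lemma one_def : (1 : GG) = ⟨0, 1⟩ := rfl
lemma inv_def (a : GG) : a⁻¹ = ⟨-(act a.q⁻¹ a.v), a.q⁻¹⟩ := rfl

instance : Group GG where
  mul_assoc a b c := by
    simp only [mul_def]
    ext <;> simp [act_add, act_mul, add_assoc, mul_assoc]
  one_mul a := by simp only [mul_def, one_def]; ext <;> simp [act_one]
  mul_one a := by simp only [mul_def, one_def]; ext <;> simp [act_zero]
  inv_mul_cancel a := by
    simp only [mul_def, inv_def, one_def]
    ext <;> simp

set_option maxRecDepth 4000 in
example : Fintype.card GG = 200 := by decide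

end GG



section Generic

variable {X : Type u} {Y : Type u} [Group X] [Group Y]

lemma cyclicFactor_of_cards [Finite X] {A B : Subgroup X} (hA : A.Normal) (hle : A ≤ B)
    {p a : ℕ} (hp : p.Prime) (ha : Nat.card A = a) (hb : Nat.card B = p * a) :
    CyclicFactor A B hA := by
  letI : (A.subgroupOf B).Normal := hA.subgroupOf B
  have h1 : Nat.card (A.subgroupOf B) = a := by
    rw [← ha]; exact Nat.card_congr (Subgroup.subgroupOfEquivOfLe hle).toEquiv
  have h2 := Subgroup.card_eq_card_quotient_mul_card_subgroup (A.subgroupOf B)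
  rw [hb, h1] at h2
  have hapos : 0 < a := by
    rw [← h1]; exact Nat.card_pos
  have h3 : Nat.card (↥B ⧸ A.subgroupOf B) = p := by
    exact (Nat.eq_of_mul_eq_mul_right hapos h2.symm)
  haveI : Fact p.Prime := ⟨hp⟩
  exact isCyclic_of_prime_card h3

lemma CyclicFactor.comap (f : Y →* X) {A B : Subgroup X} (hA : A.Normal)
    (cf : CyclicFactor A B hA) : CyclicFactor (A.comap f) (B.comap f) (hA.comap f) := by
  letI : (A.subgroupOf B).Normal := hA.subgroupOf B
  letI : ((A.comap f).subgroupOf (B.comap f)).Normal := (hA.comap f).subgroupOf _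
  haveI : IsCyclic (↥B ⧸ A.subgroupOf B) := cf
  let toB : ↥(B.comap f) →* ↥B :=
    { toFun := fun y => ⟨f y.1, y.2⟩
      map_one' := Subtype.ext (map_one f)
      map_mul' := fun a b => Subtype.ext (map_mul f _ _) }
  let Ψ : ↥(B.comap f) →* (↥B ⧸ A.subgroupOf B) := (QuotientGroup.mk' _).comp toB
  have hker : ∀ y ∈ (A.comap f).subgroupOf (B.comap f), Ψ y = 1 := by
    intro y hy
    rw [Subgroup.mem_subgroupOf] at hy
    have : toB y ∈ A.subgroupOf B := by
      rw [Subgroup.mem_subgroupOf]; exact hy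
    simpa [Ψ, QuotientGroup.eq_one_iff] using this
  let Φ := QuotientGroup.lift _ Ψ hker
  have hinj : Function.Injective Φ := by
    intro x y
    induction x using QuotientGroup.induction_on with | H a =>
    induction y using QuotientGroup.induction_on with | H b =>
    intro hab
    have : Ψ a = Ψ b := hab
    have h2 : (toB a : ↥B) ⁻¹ * toB b ∈ A.subgroupOf B := by
      rwa [← QuotientGroup.eq, ← QuotientGroup.mk'_apply, ← QuotientGroup.mk'_apply]
    rw [QuotientGroup.eq]
    rw [Subgroup.mem_subgroupOf] at h2 ⊢
    simpa [toB] using h2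
  haveI : IsCyclic Φ.range := Subgroup.isCyclic _
  show IsCyclic _
  exact isCyclic_of_surjective (MonoidHom.ofInjective hinj).symm.toMonoidHom
    (MonoidHom.ofInjective hinj).symm.surjective

lemma IsSupersoluble.of_injective (f : Y →* X) (hf : Function.Injective f)
    (hX : IsSupersoluble X) : IsSupersoluble Y := by
  obtain ⟨k, H, hnorm, h0, hlast, hmono, hfact⟩ := hX
  refine ⟨k, fun i => (H i).comap f, fun i => (hnorm i).comap f, ?_, ?_, ?_, ?_⟩
  · show Subgroup.comap f (H 0) = ⊥
    rw [h0, f.comap_bot, f.ker_eq_bot_iff.2 hf]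
  · show Subgroup.comap f (H (Fin.last k)) = ⊤
    rw [hlast, Subgroup.comap_top]
  · exact fun i => Subgroup.comap_mono (hmono i)
  · exact fun i => (hfact i).comap f _

lemma IsSupersoluble.of_le {S T : Subgroup X} (h : S ≤ T) (hT : IsSupersoluble ↥T) :
    IsSupersoluble ↥S :=
  hT.of_injective (Subgroup.inclusion h) (Subgroup.inclusion_injective h)

lemma isCyclic_of_cyclicFactor_bot {A B : Subgroup X} (hn : A.Normal) (hA : A = ⊥)
    (h : CyclicFactor A B hn) : IsCyclic ↥B := by
  letI : (A.subgroupOf B).Normal := hn.subgroupOf B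
  haveI h' : IsCyclic (↥B ⧸ A.subgroupOf B) := h
  have hker : ∀ y ∈ A.subgroupOf B, (MonoidHom.id ↥B) y = 1 := by
    intro y hy
    rw [Subgroup.mem_subgroupOf, hA, Subgroup.mem_bot] at hy
    exact Subtype.ext hy
  exact isCyclic_of_surjective (QuotientGroup.lift (A.subgroupOf B) (MonoidHom.id ↥B) hker)
    (fun b => ⟨QuotientGroup.mk b, rfl⟩)

lemma exists_normal_cyclic_aux [Nontrivial X] (k : ℕ) :
    ∀ (H : Fin (k + 1) → Subgroup X) (hnorm : ∀ i, (H i).Normal),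
      H 0 = ⊥ → H (Fin.last k) = ⊤ → (∀ i : Fin k, H i.castSucc ≤ H i.succ) →
      (∀ i : Fin k, CyclicFactor (H i.castSucc) (H i.succ) (hnorm i.castSucc)) →
      ∃ N : Subgroup X, N.Normal ∧ N ≠ ⊥ ∧ IsCyclic N := by
  induction k with
  | zero =>
      intro H hnorm h0 hlast hmono hfact
      exfalso
      have : (⊥ : Subgroup X) = ⊤ := by rw [← h0, ← hlast]; rfl
      obtain ⟨x, y, hxy⟩ := exists_pair_ne X
      apply hxy
      have hx : x ∈ (⊥ : Subgroup X) := this ▸ Subgroup.mem_top x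
      have hy : y ∈ (⊥ : Subgroup X) := this ▸ Subgroup.mem_top y
      rw [Subgroup.mem_bot] at hx hy
      rw [hx, hy]
  | succ m ih =>
      intro H hnorm h0 hlast hmono hfact
      by_cases h1 : H 1 = ⊥
      · apply ih (fun i => H i.succ) (fun i => hnorm i.succ)
        · rwa [show (0 : Fin (m+1)).succ = 1 from rfl]
        · rwa [show (Fin.last m).succ = Fin.last (m+1) from rfl]
        · intro i
          have := hmono i.succ
          rwa [← Fin.succ_castSucc] at this
        · intro i
          have := hfact i.succ
          rwa [← Fin.succ_castSucc] at this
      · refine ⟨H 1, hnorm 1, h1, ?_⟩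
        exact isCyclic_of_cyclicFactor_bot _ h0 (hfact 0)

lemma exists_normal_cyclic [Nontrivial X] (h : IsSupersoluble X) :
    ∃ N : Subgroup X, N.Normal ∧ N ≠ ⊥ ∧ IsCyclic N := by
  obtain ⟨k, H, hnorm, h0, hlast, hmono, hfact⟩ := h
  exact exists_normal_cyclic_aux k H hnorm h0 hlast hmono hfact

end Generic

section MkSub
variable {X : Type*} [Group X]

def mkSub (p : X → Prop) [DecidablePred p] (h1 : p 1)
    (hm : ∀ a b : X, p a → p b → p (a * b)) (hi : ∀ a : X, p a → p a⁻¹) : Subgroup X where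
  carrier := {x | p x}
  one_mem' := h1
  mul_mem' := fun {a b} ha hb => hm a b ha hb
  inv_mem' := fun {a} ha => hi a ha

lemma mem_mkSub {p : X → Prop} [DecidablePred p] {h1 hm hi} {x : X} :
    x ∈ mkSub p h1 hm hi ↔ p x := Iff.rfl

instance {p : X → Prop} [DecidablePred p] {h1 hm hi} :
    DecidablePred (· ∈ mkSub p h1 hm hi) := fun x =>
  decidable_of_iff (p x) Iff.rfl

end MkSub

namespace GG

def cI : Q8 → Bool
  | .e | .n | .i | .ni => true
  | _ => false

def cJ : Q8 → Bool
  | .e | .n | .j | .nj => true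
  | _ => false

def cK : Q8 → Bool
  | .e | .n | .k | .nk => true
  | _ => false

def cN : Q8 → Bool
  | .e | .n => true
  | _ => false

set_option maxRecDepth 4000

/-- the copy of `Q8` inside `GG`. -/
def SQ8 : Subgroup GG := mkSub (fun g => g.v = 0)
  (by decide)
  (fun a b ha hb => by
    show (a * b).v = 0
    simp only [mul_def] at *
    rw [ha, hb, act_zero, add_zero])
  (fun a ha => by
    show a⁻¹.v = 0
    simp only [inv_def] at *
    rw [ha, act_zero, neg_zero])

/-- build the subgroup `V ⋊ C` from a `Bool` predicate on `Q8` defining a subgroup `C ≤ Q8`. -/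
def mkVC (c : Q8 → Bool) (h1 : c 1 = true) (hm : ∀ q r : Q8, c q = true → c r = true → c (q * r) = true)
    (hi : ∀ q : Q8, c q = true → c q⁻¹ = true) : Subgroup GG :=
  mkSub (fun g => c g.q = true) h1 (fun a b ha hb => hm a.q b.q ha hb) (fun a ha => hi a.q ha)

/-- `V ⋊ ⟨i⟩` -/
def SHI : Subgroup GG := mkVC cI (by decide) (by decide) (by decide)

def SHJ : Subgroup GG := mkVC cJ (by decide) (by decide) (by decide)

def SHK : Subgroup GG := mkVC cK (by decide) (by decide) (by decide)

lemma mem_SQ8 {g : GG} : g ∈ SQ8 ↔ g.v = 0 := Iff.rfl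
lemma mem_SHI {g : GG} : g ∈ SHI ↔ cI g.q = true := Iff.rfl
lemma mem_SHJ {g : GG} : g ∈ SHJ ↔ cJ g.q = true := Iff.rfl
lemma mem_SHK {g : GG} : g ∈ SHK ↔ cK g.q = true := Iff.rfl

instance : DecidablePred (· ∈ SQ8) := fun g => decidable_of_iff _ mem_SQ8.symm
instance : DecidablePred (· ∈ SHI) := fun g => decidable_of_iff _ mem_SHI.symm
instance : DecidablePred (· ∈ SHJ) := fun g => decidable_of_iff _ mem_SHJ.symm
instance : DecidablePred (· ∈ SHK) := fun g => decidable_of_iff _ mem_SHK.symm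

end GG

namespace GG

open Q8

set_option maxRecDepth 8000

-- chain inside SHI
def AI1 : Subgroup ↥SHI := mkSub (fun x => x.val.q = Q8.e ∧ x.val.v.2 = 0)
  (by decide) (by decide) (by decide)

def AI2 : Subgroup ↥SHI := mkSub (fun x => x.val.q = Q8.e) (by decide) (by decide) (by decide)

def AI3 : Subgroup ↥SHI := mkSub (fun x => cN x.val.q = true) (by decide) (by decide) (by decide)

instance : DecidablePred (· ∈ AI1) := fun x =>
  decidable_of_iff (x.val.q = Q8.e ∧ x.val.v.2 = 0) Iff.rfl
instance : DecidablePred (· ∈ AI2) := fun x => decidable_of_iff (x.val.q = Q8.e) Iff.rfl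
instance : DecidablePred (· ∈ AI3) := fun x => decidable_of_iff (cN x.val.q = true) Iff.rfl

lemma AI1_normal : AI1.Normal := by
  have h : ∀ nn g : ↥SHI, (nn.val.q = Q8.e ∧ nn.val.v.2 = 0) →
      ((g * nn * g⁻¹).val.q = Q8.e ∧ (g * nn * g⁻¹).val.v.2 = 0) := by decide
  exact ⟨fun nn hnn g => h nn g hnn⟩

lemma AI2_normal : AI2.Normal := by
  have h : ∀ nn g : ↥SHI, nn.val.q = Q8.e → (g * nn * g⁻¹).val.q = Q8.e := by decide
  exact ⟨fun nn hnn g => h nn g hnn⟩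

lemma AI3_normal : AI3.Normal := by
  have h : ∀ nn g : ↥SHI, cN nn.val.q = true → cN (g * nn * g⁻¹).val.q = true := by decide
  exact ⟨fun nn hnn g => h nn g hnn⟩

lemma card_AI1 : Nat.card ↥AI1 = 5 := by rw [Nat.card_eq_fintype_card]; decide
lemma card_AI2 : Nat.card ↥AI2 = 25 := by rw [Nat.card_eq_fintype_card]; decide
lemma card_AI3 : Nat.card ↥AI3 = 50 := by rw [Nat.card_eq_fintype_card]; decide
lemma card_SHItop : Nat.card ↥(⊤ : Subgroup ↥SHI) = 100 := by
  rw [Subgroup.card_top, Nat.card_eq_fintype_card]; decide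

def chainI : Fin 5 → Subgroup ↥SHI := ![⊥, AI1, AI2, AI3, ⊤]

lemma chainI_normal : ∀ i, (chainI i).Normal := by
  intro i
  fin_cases i
  · exact (inferInstance : (⊥ : Subgroup ↥SHI).Normal)
  · exact AI1_normal
  · exact AI2_normal
  · exact AI3_normal
  · exact (inferInstance : (⊤ : Subgroup ↥SHI).Normal)

lemma supersoluble_SHI : IsSupersoluble ↥SHI := by
  refine ⟨4, chainI, chainI_normal, rfl, rfl, ?_, ?_⟩
  · intro i
    fin_cases i
    · exact bot_le
    · exact fun x hx => hx.1
    · exact fun x hx => by show cN x.val.q = true; rw [show x.val.q = Q8.e from hx]; rfl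
    · exact le_top
  · intro i
    fin_cases i
    · exact cyclicFactor_of_cards _ bot_le Nat.prime_five Subgroup.card_bot
        (show Nat.card ↥AI1 = 5 * 1 by rw [card_AI1])
    · exact cyclicFactor_of_cards _ (fun x hx => hx.1) Nat.prime_five card_AI1
        (show Nat.card ↥AI2 = 5 * 5 by rw [card_AI2])
    · exact cyclicFactor_of_cards _
        (fun x hx => by show cN x.val.q = true; rw [show x.val.q = Q8.e from hx]; rfl)
        Nat.prime_two card_AI2 (show Nat.card ↥AI3 = 2 * 25 by rw [card_AI3])
    · exact cyclicFactor_of_cards _ le_top Nat.prime_two card_AI3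
        (show Nat.card ↥(⊤ : Subgroup ↥SHI) = 2 * 50 by rw [card_SHItop])

-- chain inside SHJ
def AJ1 : Subgroup ↥SHJ := mkSub (fun x => x.val.q = Q8.e ∧ x.val.v.2 = 2 * x.val.v.1)
  (by decide) (by decide) (by decide)

def AJ2 : Subgroup ↥SHJ := mkSub (fun x => x.val.q = Q8.e) (by decide) (by decide) (by decide)

def AJ3 : Subgroup ↥SHJ := mkSub (fun x => cN x.val.q = true) (by decide) (by decide) (by decide)

instance : DecidablePred (· ∈ AJ1) := fun x =>
  decidable_of_iff (x.val.q = Q8.e ∧ x.val.v.2 = 2 * x.val.v.1) Iff.rfl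
instance : DecidablePred (· ∈ AJ2) := fun x => decidable_of_iff (x.val.q = Q8.e) Iff.rfl
instance : DecidablePred (· ∈ AJ3) := fun x => decidable_of_iff (cN x.val.q = true) Iff.rfl

lemma AJ1_normal : AJ1.Normal := by
  have h : ∀ nn g : ↥SHJ, (nn.val.q = Q8.e ∧ nn.val.v.2 = 2 * nn.val.v.1) →
      ((g * nn * g⁻¹).val.q = Q8.e ∧ (g * nn * g⁻¹).val.v.2 = 2 * (g * nn * g⁻¹).val.v.1) := by decide
  exact ⟨fun nn hnn g => h nn g hnn⟩

lemma AJ2_normal : AJ2.Normal := by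
  have h : ∀ nn g : ↥SHJ, nn.val.q = Q8.e → (g * nn * g⁻¹).val.q = Q8.e := by decide
  exact ⟨fun nn hnn g => h nn g hnn⟩

lemma AJ3_normal : AJ3.Normal := by
  have h : ∀ nn g : ↥SHJ, cN nn.val.q = true → cN (g * nn * g⁻¹).val.q = true := by decide
  exact ⟨fun nn hnn g => h nn g hnn⟩

lemma card_AJ1 : Nat.card ↥AJ1 = 5 := by rw [Nat.card_eq_fintype_card]; decide
lemma card_AJ2 : Nat.card ↥AJ2 = 25 := by rw [Nat.card_eq_fintype_card]; decide
lemma card_AJ3 : Nat.card ↥AJ3 = 50 := by rw [Nat.card_eq_fintype_card]; decide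
lemma card_SHJtop : Nat.card ↥(⊤ : Subgroup ↥SHJ) = 100 := by
  rw [Subgroup.card_top, Nat.card_eq_fintype_card]; decide

def chainAJ : Fin 5 → Subgroup ↥SHJ := ![⊥, AJ1, AJ2, AJ3, ⊤]

lemma chainAJ_normal : ∀ i, (chainAJ i).Normal := by
  intro i
  fin_cases i
  · exact (inferInstance : (⊥ : Subgroup ↥SHJ).Normal)
  · exact AJ1_normal
  · exact AJ2_normal
  · exact AJ3_normal
  · exact (inferInstance : (⊤ : Subgroup ↥SHJ).Normal)

lemma supersoluble_SHJ : IsSupersoluble ↥SHJ := by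
  refine ⟨4, chainAJ, chainAJ_normal, rfl, rfl, ?_, ?_⟩
  · intro i
    fin_cases i
    · exact bot_le
    · exact fun x hx => hx.1
    · exact fun x hx => by show cN x.val.q = true; rw [show x.val.q = Q8.e from hx]; rfl
    · exact le_top
  · intro i
    fin_cases i
    · exact cyclicFactor_of_cards _ bot_le Nat.prime_five Subgroup.card_bot
        (show Nat.card ↥AJ1 = 5 * 1 by rw [card_AJ1])
    · exact cyclicFactor_of_cards _ (fun x hx => hx.1) Nat.prime_five card_AJ1
        (show Nat.card ↥AJ2 = 5 * 5 by rw [card_AJ2])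
    · exact cyclicFactor_of_cards _
        (fun x hx => by show cN x.val.q = true; rw [show x.val.q = Q8.e from hx]; rfl)
        Nat.prime_two card_AJ2 (show Nat.card ↥AJ3 = 2 * 25 by rw [card_AJ3])
    · exact cyclicFactor_of_cards _ le_top Nat.prime_two card_AJ3
        (show Nat.card ↥(⊤ : Subgroup ↥SHJ) = 2 * 50 by rw [card_SHJtop])

-- chain inside SHK
def AK1 : Subgroup ↥SHK := mkSub (fun x => x.val.q = Q8.e ∧ x.val.v.2 = x.val.v.1)
  (by decide) (by decide) (by decide)

def AK2 : Subgroup ↥SHK := mkSub (fun x => x.val.q = Q8.e) (by decide) (by decide) (by decide)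

def AK3 : Subgroup ↥SHK := mkSub (fun x => cN x.val.q = true) (by decide) (by decide) (by decide)

instance : DecidablePred (· ∈ AK1) := fun x =>
  decidable_of_iff (x.val.q = Q8.e ∧ x.val.v.2 = x.val.v.1) Iff.rfl
instance : DecidablePred (· ∈ AK2) := fun x => decidable_of_iff (x.val.q = Q8.e) Iff.rfl
instance : DecidablePred (· ∈ AK3) := fun x => decidable_of_iff (cN x.val.q = true) Iff.rfl

lemma AK1_normal : AK1.Normal := by
  have h : ∀ nn g : ↥SHK, (nn.val.q = Q8.e ∧ nn.val.v.2 = nn.val.v.1) →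
      ((g * nn * g⁻¹).val.q = Q8.e ∧ (g * nn * g⁻¹).val.v.2 = (g * nn * g⁻¹).val.v.1) := by decide
  exact ⟨fun nn hnn g => h nn g hnn⟩

lemma AK2_normal : AK2.Normal := by
  have h : ∀ nn g : ↥SHK, nn.val.q = Q8.e → (g * nn * g⁻¹).val.q = Q8.e := by decide
  exact ⟨fun nn hnn g => h nn g hnn⟩

lemma AK3_normal : AK3.Normal := by
  have h : ∀ nn g : ↥SHK, cN nn.val.q = true → cN (g * nn * g⁻¹).val.q = true := by decide
  exact ⟨fun nn hnn g => h nn g hnn⟩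

lemma card_AK1 : Nat.card ↥AK1 = 5 := by rw [Nat.card_eq_fintype_card]; decide
lemma card_AK2 : Nat.card ↥AK2 = 25 := by rw [Nat.card_eq_fintype_card]; decide
lemma card_AK3 : Nat.card ↥AK3 = 50 := by rw [Nat.card_eq_fintype_card]; decide
lemma card_SHKtop : Nat.card ↥(⊤ : Subgroup ↥SHK) = 100 := by
  rw [Subgroup.card_top, Nat.card_eq_fintype_card]; decide

def chainAK : Fin 5 → Subgroup ↥SHK := ![⊥, AK1, AK2, AK3, ⊤]

lemma chainAK_normal : ∀ i, (chainAK i).Normal := by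
  intro i
  fin_cases i
  · exact (inferInstance : (⊥ : Subgroup ↥SHK).Normal)
  · exact AK1_normal
  · exact AK2_normal
  · exact AK3_normal
  · exact (inferInstance : (⊤ : Subgroup ↥SHK).Normal)

lemma supersoluble_SHK : IsSupersoluble ↥SHK := by
  refine ⟨4, chainAK, chainAK_normal, rfl, rfl, ?_, ?_⟩
  · intro i
    fin_cases i
    · exact bot_le
    · exact fun x hx => hx.1
    · exact fun x hx => by show cN x.val.q = true; rw [show x.val.q = Q8.e from hx]; rfl
    · exact le_top
  · intro i
    fin_cases i
    · exact cyclicFactor_of_cards _ bot_le Nat.prime_five Subgroup.card_bot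
        (show Nat.card ↥AK1 = 5 * 1 by rw [card_AK1])
    · exact cyclicFactor_of_cards _ (fun x hx => hx.1) Nat.prime_five card_AK1
        (show Nat.card ↥AK2 = 5 * 5 by rw [card_AK2])
    · exact cyclicFactor_of_cards _
        (fun x hx => by show cN x.val.q = true; rw [show x.val.q = Q8.e from hx]; rfl)
        Nat.prime_two card_AK2 (show Nat.card ↥AK3 = 2 * 25 by rw [card_AK3])
    · exact cyclicFactor_of_cards _ le_top Nat.prime_two card_AK3
        (show Nat.card ↥(⊤ : Subgroup ↥SHK) = 2 * 50 by rw [card_SHKtop])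

-- chain inside SQ8
def B1 : Subgroup ↥SQ8 := mkSub (fun x => cN x.val.q = true) (by decide) (by decide) (by decide)

def B2 : Subgroup ↥SQ8 := mkSub (fun x => cI x.val.q = true) (by decide) (by decide) (by decide)

instance : DecidablePred (· ∈ B1) := fun x => decidable_of_iff (cN x.val.q = true) Iff.rfl
instance : DecidablePred (· ∈ B2) := fun x => decidable_of_iff (cI x.val.q = true) Iff.rfl

lemma B1_normal : B1.Normal := by
  have h : ∀ nn g : ↥SQ8, cN nn.val.q = true → cN (g * nn * g⁻¹).val.q = true := by decide
  exact ⟨fun nn hnn g => h nn g hnn⟩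

lemma B2_normal : B2.Normal := by
  have h : ∀ nn g : ↥SQ8, cI nn.val.q = true → cI (g * nn * g⁻¹).val.q = true := by decide
  exact ⟨fun nn hnn g => h nn g hnn⟩

lemma card_B1 : Nat.card ↥B1 = 2 := by rw [Nat.card_eq_fintype_card]; decide
lemma card_B2 : Nat.card ↥B2 = 4 := by rw [Nat.card_eq_fintype_card]; decide
lemma card_SQ8top : Nat.card ↥(⊤ : Subgroup ↥SQ8) = 8 := by
  rw [Subgroup.card_top, Nat.card_eq_fintype_card]; decide

def chainQ : Fin 4 → Subgroup ↥SQ8 := ![⊥, B1, B2, ⊤]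

lemma chainQ_normal : ∀ i, (chainQ i).Normal := by
  intro i
  fin_cases i
  · exact (inferInstance : (⊥ : Subgroup ↥SQ8).Normal)
  · exact B1_normal
  · exact B2_normal
  · exact (inferInstance : (⊤ : Subgroup ↥SQ8).Normal)

lemma cNI : ∀ x : ↥SQ8, cN x.val.q = true → cI x.val.q = true := by decide

lemma supersoluble_SQ8 : IsSupersoluble ↥SQ8 := by
  refine ⟨3, chainQ, chainQ_normal, rfl, rfl, ?_, ?_⟩
  · intro i
    fin_cases i
    · exact bot_le
    · exact fun x hx => cNI x hx
    · exact le_top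
  · intro i
    fin_cases i
    · exact cyclicFactor_of_cards _ bot_le Nat.prime_two Subgroup.card_bot
        (show Nat.card ↥B1 = 2 * 1 by rw [card_B1])
    · exact cyclicFactor_of_cards _ (fun x hx => cNI x hx) Nat.prime_two card_B1
        (show Nat.card ↥B2 = 2 * 2 by rw [card_B2])
    · exact cyclicFactor_of_cards _ le_top Nat.prime_two card_B2
        (show Nat.card ↥(⊤ : Subgroup ↥SQ8) = 2 * 4 by rw [card_SQ8top])

end GG

namespace GG

set_option maxRecDepth 8000

/-- `V`, the copy of `(ZMod 5)²` in `GG`. -/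
def SV : Subgroup GG := mkSub (fun g => g.q = Q8.e)
  (by decide)
  (fun a b ha hb => by
    show (a * b).q = Q8.e
    simp only [mul_def]
    rw [show a.q = Q8.e from ha, show b.q = Q8.e from hb]; rfl)
  (fun a ha => by
    show a⁻¹.q = Q8.e
    simp only [inv_def]
    rw [show a.q = Q8.e from ha]; rfl)

lemma mem_SV {g : GG} : g ∈ SV ↔ g.q = Q8.e := Iff.rfl

instance : DecidablePred (· ∈ SV) := fun g => decidable_of_iff (g.q = Q8.e) Iff.rfl

lemma one_q_eq : (1 : Q8) = Q8.e := rfl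

lemma act_act_inv (q : Q8) (v : V5) : act q (act q⁻¹ v) = v := by
  rw [← act_mul, mul_inv_cancel, act_one]

lemma act_neg (q : Q8) (v : V5) : act q (-v) = -act q v := by
  cases q <;> simp [act, Prod.ext_iff, mul_neg]

lemma conjV (q : Q8) (v : V5) :
    (⟨0, q⟩ : GG) * ⟨v, 1⟩ * (⟨0, q⟩ : GG)⁻¹ = ⟨act q v, 1⟩ := by
  simp only [mul_def, inv_def]
  ext
  · show ((0 + act q v) + act (q * 1) (-(act q⁻¹ 0))).1 = (act q v).1
    rw [act_zero, neg_zero, mul_one, act_zero, add_zero, zero_add]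
  · show ((0 + act q v) + act (q * 1) (-(act q⁻¹ 0))).2 = (act q v).2
    rw [act_zero, neg_zero, mul_one, act_zero, add_zero, zero_add]
  · show (q * 1) * (-(act q⁻¹ 0), q⁻¹).2 = 1
    show (q * 1) * q⁻¹ = 1
    rw [mul_one, mul_inv_cancel]

lemma commV (w : V5) (g : GG) :
    (⟨w, 1⟩ : GG) * g * (⟨w, 1⟩ : GG)⁻¹ * g⁻¹ = ⟨w - act g.q w, 1⟩ := by
  obtain ⟨v, q⟩ := g
  have hv : (w + act 1 v + act (1 * q) (-act 1⁻¹ w) + act (1 * q * 1⁻¹) (-act q⁻¹ v))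
      = w - act q w := by
    simp only [act_one, one_mul, mul_one, inv_one, act_neg, act_act_inv]
    abel
  have hq : (1 * q * 1⁻¹ * q⁻¹ : Q8) = 1 := by
    rw [one_mul, inv_one, mul_one, mul_inv_cancel]
  show GG.mk (w + act 1 v + act (1 * q) (-act 1⁻¹ w) + act (1 * q * 1⁻¹) (-act q⁻¹ v))
      (1 * q * 1⁻¹ * q⁻¹) = GG.mk (w - act q w) 1
  rw [hv, hq]

lemma extract_v (g : GG) : g * ((⟨0, g.q⟩ : GG))⁻¹ = ⟨g.v, 1⟩ := by
  obtain ⟨v, q⟩ := g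
  simp only [mul_def, inv_def]
  ext
  · show (v + act q (-(act q⁻¹ 0))).1 = v.1
    rw [act_zero, neg_zero, act_zero, add_zero]
  · show (v + act q (-(act q⁻¹ 0))).2 = v.2
    rw [act_zero, neg_zero, act_zero, add_zero]
  · show q * q⁻¹ = 1
    exact mul_inv_cancel q

lemma decompose (g : GG) : g = (⟨g.v, 1⟩ : GG) * ⟨0, g.q⟩ := by
  obtain ⟨v, q⟩ := g
  simp only [mul_def]
  ext
  · show v.1 = (v + act 1 0).1
    rw [act_one, add_zero]
  · show v.2 = (v + act 1 0).2
    rw [act_one, add_zero]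
  · show q = 1 * q
    rw [one_mul]

lemma mkV_mul (u w : V5) : (⟨u, 1⟩ : GG) * ⟨w, 1⟩ = ⟨u + w, 1⟩ := by
  simp only [mul_def]
  ext
  · show (u + act 1 w).1 = (u + w).1
    rw [act_one]
  · show (u + act 1 w).2 = (u + w).2
    rw [act_one]
  · show (1 : Q8) * 1 = 1
    rw [one_mul]

lemma mkV_pow (u : V5) (m : ℕ) : (⟨u, 1⟩ : GG) ^ m = ⟨m • u, 1⟩ := by
  induction m with
  | zero => simp only [pow_zero, zero_smul]; rfl
  | succ t ih => rw [pow_succ, ih, mkV_mul, succ_nsmul]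

/-- if a subgroup contains a nonzero element of `V` and is closed under the `Q8`-action,
then it contains all of `V`. -/
lemma V_le_of_mem {K : Subgroup GG}
    (hconj : ∀ u : V5, (⟨u, 1⟩ : GG) ∈ K → ∀ q : Q8, (⟨act q u, 1⟩ : GG) ∈ K)
    {w : V5} (hw : (⟨w, 1⟩ : GG) ∈ K) (hw0 : w ≠ 0) :
    ∀ u : V5, (⟨u, 1⟩ : GG) ∈ K := by
  -- first, the two "coordinate parts" of w are in K
  have hcomb1 : (⟨((0 : ZMod 5), w.2), 1⟩ : GG) ∈ K := by
    have hmem := K.mul_mem (pow_mem hw 3) (hconj w hw Q8.i)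
    rw [mkV_pow, mkV_mul] at hmem
    have heq : ((3 : ℕ) • w + act Q8.i w) = ((0 : ZMod 5), w.2) := by
      obtain ⟨a, b⟩ := w
      show ((3:ℕ) • a + 2 * a, (3:ℕ) • b + 3 * b) = (0, b)
      have h1 : ∀ x : ZMod 5, (3:ℕ) • x + 2 * x = 0 := by decide
      have h2 : ∀ x : ZMod 5, (3:ℕ) • x + 3 * x = x := by decide
      rw [h1, h2]
    rwa [heq] at hmem
  have hcomb2 : (⟨(w.1, (0 : ZMod 5)), 1⟩ : GG) ∈ K := by
    have hmem := pow_mem (K.mul_mem (pow_mem hw 2) (hconj w hw Q8.i)) 4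
    rw [mkV_pow, mkV_mul, mkV_pow] at hmem
    have heq : ((4 : ℕ) • ((2 : ℕ) • w + act Q8.i w)) = (w.1, (0 : ZMod 5)) := by
      obtain ⟨a, b⟩ := w
      show ((4:ℕ) • ((2:ℕ) • a + 2 * a), (4:ℕ) • ((2:ℕ) • b + 3 * b)) = (a, 0)
      have h1 : ∀ x : ZMod 5, (4:ℕ) • ((2:ℕ) • x + 2 * x) = x := by decide
      have h2 : ∀ x : ZMod 5, (4:ℕ) • ((2:ℕ) • x + 3 * x) = 0 := by decide
      rw [h1, h2]
    rwa [heq] at hmem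
  -- get the standard basis vectors into K
  have basis : (⟨((1 : ZMod 5), (0 : ZMod 5)), 1⟩ : GG) ∈ K ∧
      (⟨((0 : ZMod 5), (1 : ZMod 5)), 1⟩ : GG) ∈ K := by
    by_cases ha : w.1 = 0
    · have hb : w.2 ≠ 0 := by
        intro hb; exact hw0 (Prod.ext ha hb)
      have he2 : (⟨((0 : ZMod 5), (1 : ZMod 5)), 1⟩ : GG) ∈ K := by
        have key : ∀ c : ZMod 5, c ≠ 0 → ∃ m : Fin 5,
            (m : ℕ) • (((0 : ZMod 5), c) : V5) = ((0 : ZMod 5), (1 : ZMod 5)) := by decide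
        obtain ⟨m, hm⟩ := key w.2 hb
        have hmem := pow_mem hcomb1 (m : ℕ)
        rwa [mkV_pow, hm] at hmem
      refine ⟨?_, he2⟩
      have := hconj _ he2 Q8.j
      rwa [show act Q8.j (((0 : ZMod 5), (1 : ZMod 5)) : V5) =
        (((1 : ZMod 5), (0 : ZMod 5)) : V5) by decide] at this
    · have he1 : (⟨((1 : ZMod 5), (0 : ZMod 5)), 1⟩ : GG) ∈ K := by
        have key : ∀ c : ZMod 5, c ≠ 0 → ∃ m : Fin 5,
            (m : ℕ) • ((c, (0 : ZMod 5)) : V5) = (((1 : ZMod 5), (0 : ZMod 5)) : V5) := by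
          decide
        obtain ⟨m, hm⟩ := key w.1 ha
        have hmem := pow_mem hcomb2 (m : ℕ)
        rwa [mkV_pow, hm] at hmem
      refine ⟨he1, ?_⟩
      have h4 := hconj _ he1 Q8.j
      rw [show act Q8.j (((1 : ZMod 5), (0 : ZMod 5)) : V5) =
        (((0 : ZMod 5), (4 : ZMod 5)) : V5) by decide] at h4
      have hmem := pow_mem h4 4
      rwa [mkV_pow, show (4 : ℕ) • (((0 : ZMod 5), (4 : ZMod 5)) : V5) =
        (((0 : ZMod 5), (1 : ZMod 5)) : V5) by decide] at hmem
  -- now conclude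
  intro u
  have hmem := K.mul_mem (pow_mem basis.1 (u.1.val)) (pow_mem basis.2 (u.2.val))
  rw [mkV_pow, mkV_pow, mkV_mul] at hmem
  have heq : (u.1.val • (((1 : ZMod 5), (0 : ZMod 5)) : V5) +
      u.2.val • (((0 : ZMod 5), (1 : ZMod 5)) : V5)) = u := by
    obtain ⟨a, b⟩ := u
    show (a.val • (1 : ZMod 5) + b.val • (0 : ZMod 5),
      a.val • (0 : ZMod 5) + b.val • (1 : ZMod 5)) = (a, b)
    have h1 : ∀ x y : ZMod 5, x.val • (1 : ZMod 5) + y.val • (0 : ZMod 5) = x := by decide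
    have h2 : ∀ x y : ZMod 5, x.val • (0 : ZMod 5) + y.val • (1 : ZMod 5) = y := by decide
    rw [h1, h2]
  rwa [heq] at hmem

end GG

namespace GG

set_option maxRecDepth 8000

lemma not_cyclic_SV : ¬ IsCyclic ↥SV := by
  intro hc
  obtain ⟨gen, hgen⟩ := hc.exists_generator
  have h5 : ∀ x : ↥SV, x ^ 5 = 1 := by decide
  have hdvd : orderOf gen ∣ 5 := orderOf_dvd_of_pow_eq_one (h5 gen)
  have hcard : orderOf gen = Nat.card ↥SV := orderOf_eq_card_of_forall_mem_zpowers hgen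
  have h25 : Nat.card ↥SV = 25 := by rw [Nat.card_eq_fintype_card]; decide
  rw [hcard, h25] at hdvd
  omega

lemma not_supersoluble_GG : ¬ IsSupersoluble GG := by
  intro h
  haveI : Nontrivial GG :=
    ⟨⟨(1 : GG), ⟨((1 : ZMod 5), (0 : ZMod 5)), 1⟩, by decide⟩⟩
  obtain ⟨N, hN, hNbot, hNcyc⟩ := exists_normal_cyclic h
  obtain ⟨g, hgN, hg1⟩ := (Subgroup.bot_or_exists_ne_one N).resolve_left hNbot
  -- Step A : find a nonzero element of V inside N
  have stepA : ∃ w : V5, w ≠ 0 ∧ (⟨w, 1⟩ : GG) ∈ N := by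
    by_cases hq : g.q = 1
    · refine ⟨g.v, ?_, ?_⟩
      · intro hv
        exact hg1 (by
          have : g = ⟨g.v, g.q⟩ := rfl
          rw [this, hq, hv]; rfl)
      · have : g = (⟨g.v, 1⟩ : GG) := by rw [← hq]
        rwa [← this]
    · have hne : act g.q ((1 : ZMod 5), (1 : ZMod 5)) ≠ ((1 : ZMod 5), (1 : ZMod 5)) := by
        revert hq
        have : ∀ q : Q8, q ≠ 1 →
            act q ((1 : ZMod 5), (1 : ZMod 5)) ≠ ((1 : ZMod 5), (1 : ZMod 5)) := by decide
        exact this g.q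
      refine ⟨((1 : ZMod 5), (1 : ZMod 5)) - act g.q ((1 : ZMod 5), (1 : ZMod 5)),
        sub_ne_zero.mpr (Ne.symm hne), ?_⟩
      have hmem := N.mul_mem (hN.conj_mem g hgN ⟨((1 : ZMod 5), (1 : ZMod 5)), 1⟩)
        (N.inv_mem hgN)
      rwa [commV] at hmem
  obtain ⟨w, hw0, hwN⟩ := stepA
  -- Step B : all of V is inside N
  have hconj : ∀ u : V5, (⟨u, 1⟩ : GG) ∈ N → ∀ q : Q8, (⟨act q u, 1⟩ : GG) ∈ N := by
    intro u hu q
    have := hN.conj_mem _ hu ⟨0, q⟩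
    rwa [conjV] at this
  have hVN : SV ≤ N := by
    intro x hx
    have hx' : x = (⟨x.v, 1⟩ : GG) := by
      have : x = ⟨x.v, x.q⟩ := rfl
      rw [this, show x.q = Q8.e from hx]; rfl
    rw [hx']
    exact V_le_of_mem hconj hwN hw0 x.v
  -- Step C : contradiction, SV would be cyclic
  haveI := hNcyc
  haveI : IsCyclic ↥(SV.subgroupOf N) := Subgroup.isCyclic _
  exact not_cyclic_SV (isCyclic_of_surjective
    (Subgroup.subgroupOfEquivOfLe hVN).toMonoidHom
    (Subgroup.subgroupOfEquivOfLe hVN).surjective)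

lemma maximal_SQ8 : ∀ K : Subgroup GG, IsSupersoluble ↥K → SQ8 ≤ K → K = SQ8 := by
  intro K hK hle
  by_contra hne
  have hnle : ¬ K ≤ SQ8 := fun hh => hne (le_antisymm hh hle)
  obtain ⟨g, hgK, hgQ⟩ := SetLike.not_le_iff_exists.mp hnle
  have hgv : g.v ≠ 0 := fun h => hgQ (mem_SQ8.mpr h)
  have h0q : (⟨0, g.q⟩ : GG) ∈ K := hle (mem_SQ8.mpr rfl)
  have hv : (⟨g.v, 1⟩ : GG) ∈ K := by
    have := K.mul_mem hgK (K.inv_mem h0q)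
    rwa [extract_v] at this
  have hconj : ∀ u : V5, (⟨u, 1⟩ : GG) ∈ K → ∀ q : Q8, (⟨act q u, 1⟩ : GG) ∈ K := by
    intro u hu q
    have hq : (⟨0, q⟩ : GG) ∈ K := hle (mem_SQ8.mpr rfl)
    have := K.mul_mem (K.mul_mem hq hu) (K.inv_mem hq)
    rwa [conjV] at this
  have hVK := V_le_of_mem hconj hv hgv
  have hKtop : K = ⊤ := by
    rw [Subgroup.eq_top_iff']
    intro x
    rw [decompose x]
    exact K.mul_mem (hVK x.v) (hle (mem_SQ8.mpr rfl))
  rw [hKtop] at hK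
  exact not_supersoluble_GG (hK.of_injective (Subgroup.topEquiv (G := GG)).symm.toMonoidHom
    (show Function.Injective ⇑(Subgroup.topEquiv (G := GG)).symm.toMonoidHom from
      (Subgroup.topEquiv (G := GG)).symm.injective))

def x₀ : GG := ⟨((1 : ZMod 5), (0 : ZMod 5)), 1⟩

lemma x₀_in_LHS : ∀ y : GG, IsSupersoluble ↥(Subgroup.closure {x₀, y}) := by
  intro y
  have hx : ∃ Hc : Subgroup GG, IsSupersoluble ↥Hc ∧ x₀ ∈ Hc ∧ y ∈ Hc := by
    rcases hq : y.q with _ | _ | _ | _ | _ | _ | _ | _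
    · exact ⟨SHI, supersoluble_SHI, mem_SHI.mpr rfl, mem_SHI.mpr (by rw [hq]; rfl)⟩
    · exact ⟨SHI, supersoluble_SHI, mem_SHI.mpr rfl, mem_SHI.mpr (by rw [hq]; rfl)⟩
    · exact ⟨SHI, supersoluble_SHI, mem_SHI.mpr rfl, mem_SHI.mpr (by rw [hq]; rfl)⟩
    · exact ⟨SHI, supersoluble_SHI, mem_SHI.mpr rfl, mem_SHI.mpr (by rw [hq]; rfl)⟩
    · exact ⟨SHJ, supersoluble_SHJ, mem_SHJ.mpr rfl, mem_SHJ.mpr (by rw [hq]; rfl)⟩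
    · exact ⟨SHJ, supersoluble_SHJ, mem_SHJ.mpr rfl, mem_SHJ.mpr (by rw [hq]; rfl)⟩
    · exact ⟨SHK, supersoluble_SHK, mem_SHK.mpr rfl, mem_SHK.mpr (by rw [hq]; rfl)⟩
    · exact ⟨SHK, supersoluble_SHK, mem_SHK.mpr rfl, mem_SHK.mpr (by rw [hq]; rfl)⟩
  obtain ⟨Hc, hss, hmx, hmy⟩ := hx
  refine hss.of_le ((Subgroup.closure_le Hc).mpr ?_)
  intro z hz
  rcases hz with rfl | hz
  · exact hmx
  · rw [Set.mem_singleton_iff] at hz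
    rw [hz]
    exact hmy

end GG

theorem supersoluble_not_regular :
    ∃ (G : Type) (instG : Group G),
      letI := instG
      Finite G ∧
      {x : G | ∀ y : G, IsSupersoluble ↥(Subgroup.closure {x, y})} ≠
        ↑(sInf {H : Subgroup G | IsSupersoluble ↥H ∧
          ∀ K : Subgroup G, IsSupersoluble ↥K → H ≤ K → K = H}) := by
  refine ⟨GG, inferInstance, inferInstance, ?_⟩
  intro h
  have hx : GG.x₀ ∈ {x : GG | ∀ y : GG, IsSupersoluble ↥(Subgroup.closure {x, y})} :=
    GG.x₀_in_LHS
  rw [h] at hx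
  have hmem : GG.x₀ ∈ sInf {H : Subgroup GG | IsSupersoluble ↥H ∧
      ∀ K : Subgroup GG, IsSupersoluble ↥K → H ≤ K → K = H} := hx
  rw [Subgroup.mem_sInf] at hmem
  have hQ := hmem GG.SQ8 ⟨GG.supersoluble_SQ8, GG.maximal_SQ8⟩
  have : GG.x₀.v = 0 := GG.mem_SQ8.mp hQ
  exact absurd this (by decide)
end

section
/- Let G be a finite soluble group possessing a unique minimal normal subgroup N, and let H be a maximal subgroup of G whose normal core in G is trivial (so G is a primitive monolithic soluble group with soc(G) = N). Then for every h ∈ H with h ≠ 1 and every n ∈ N: there exists y ∈ G with ⟨hn, y⟩ = G if and only if there exists k ∈ H with ⟨h, k⟩ = H. -/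
universe u

namespace GPPMaux

open Subgroup
open scoped Pointwise

variable {G : Type u} [Group G]

/-- Every nontrivial normal subgroup of a finite group contains a minimal normal subgroup. -/
lemma exists_minNormal_le [Finite G] (W : Subgroup G) (hWn : W.Normal) (hW : W ≠ ⊥) :
    ∃ S : Subgroup G, IsMinNormal S ∧ S ≤ W := by
  generalize hcard : Nat.card W = nc
  induction nc using Nat.strong_induction_on generalizing W with
  | _ nc ih =>
    by_cases hmin : ∀ M : Subgroup G, M.Normal → M ≤ W → M = ⊥ ∨ M = W
    · exact ⟨W, ⟨hWn, hW, hmin⟩, le_rfl⟩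
    · push_neg at hmin
      obtain ⟨M, hMn, hMle, hMbot, hMne⟩ := hmin
      have hlt : Nat.card M < nc := by
        subst hcard
        exact lt_of_le_of_ne (Subgroup.card_le_of_le hMle)
          (fun he => hMne (Subgroup.eq_of_le_of_card_ge hMle he.ge))
      obtain ⟨S, hS, hSle⟩ := ih _ hlt M hMn hMbot rfl
      exact ⟨S, hS, hSle.trans hMle⟩

/-- A minimal normal subgroup of a solvable group is abelian. -/
lemma minNormal_comm (hsol : IsSolvable G) {M : Subgroup G} (hM : IsMinNormal M) :
    ∀ x ∈ M, ∀ y ∈ M, x * y = y * x := by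
  obtain ⟨hMn, hMbot, hmin⟩ := hM
  haveI := hMn
  have hcomm : ⁅M, M⁆ = ⊥ := by
    rcases hmin ⁅M, M⁆ inferInstance (Subgroup.commutator_le_left M M) with hc | hc
    · exact hc
    · exfalso
      have key : ∀ i, M ≤ derivedSeries G i := by
        intro i
        induction i with
        | zero => exact le_top
        | succ i ihi =>
          rw [derivedSeries_succ]
          calc M = ⁅M, M⁆ := hc.symm
            _ ≤ _ := Subgroup.commutator_mono ihi ihi
      obtain ⟨nn, hnn⟩ := (isSolvable_def G).mp hsol
      exact hMbot (le_bot_iff.mp (hnn ▸ key nn))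
  intro x hx y hy
  have := Subgroup.commutator_eq_bot_iff_le_centralizer.mp hcomm hx
  exact (Subgroup.mem_centralizer_iff.mp this y hy).symm

/-- A nontrivial abelian minimal normal subgroup of a finite group is an (elementary abelian)
`p`-group for some prime `p`. -/
lemma minNormal_pgroup [Finite G] (hsol : IsSolvable G) {M : Subgroup G} (hM : IsMinNormal M) :
    ∃ p : ℕ, p.Prime ∧ IsPGroup p ↥M := by
  have hab := minNormal_comm hsol hM
  obtain ⟨hMn, hMbot, hmin⟩ := hM
  have hnt : Nontrivial ↥M := by
    rcases Subgroup.bot_or_nontrivial M with hc | hc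
    · exact absurd hc hMbot
    · exact hc
  set p := (Nat.card ↥M).minFac with hp
  have hcard1 : Nat.card ↥M ≠ 1 := fun hc => hMbot (Subgroup.eq_bot_of_card_eq _ hc)
  have hpp : p.Prime := Nat.minFac_prime hcard1
  haveI : Fact p.Prime := ⟨hpp⟩
  obtain ⟨x, hx⟩ := exists_prime_orderOf_dvd_card' (G := ↥M) p (Nat.minFac_dvd _)
  refine ⟨p, hpp, ?_⟩
  set T : Subgroup G :=
    { carrier := {g : G | g ∈ M ∧ g ^ p = 1}
      one_mem' := ⟨one_mem M, one_pow p⟩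
      mul_mem' := by
        rintro a b ⟨haM, hap⟩ ⟨hbM, hbp⟩
        refine ⟨mul_mem haM hbM, ?_⟩
        have hcm : Commute a b := hab a haM b hbM
        rw [hcm.mul_pow, hap, hbp, one_mul]
      inv_mem' := by
        rintro a ⟨haM, hap⟩
        exact ⟨inv_mem haM, by rw [inv_pow, hap, inv_one]⟩ } with hT
  have hTn : T.Normal := by
    constructor
    rintro a ⟨haM, hap⟩ g
    refine ⟨hMn.conj_mem a haM g, ?_⟩
    rw [conj_pow, hap, mul_one, mul_inv_cancel]
  have hTle : T ≤ M := fun g hg => hg.1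
  have hTbot : T ≠ ⊥ := by
    intro hc
    have hxT : (x : G) ∈ T := by
      refine ⟨x.2, ?_⟩
      have : x ^ p = 1 := by rw [← hx]; exact pow_orderOf_eq_one x
      exact_mod_cast congrArg (Subtype.val) this
    rw [hc, Subgroup.mem_bot] at hxT
    have hx1 : x = 1 := Subtype.ext hxT
    rw [hx1, orderOf_one] at hx
    exact hpp.one_lt.ne' hx.symm
  rcases hmin T hTn hTle with hc | hc
  · exact absurd hc hTbot
  · intro g
    refine ⟨1, ?_⟩
    have hg : (g : G) ∈ T := by rw [hc]; exact g.2
    ext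
    simpa [pow_one] using hg.2


/-- Conjugacy part of Schur–Zassenhaus for an abelian normal subgroup:
any two complements of `A` are conjugate by an element of `A`. -/
lemma conj_of_complement {X : Type*} [Group X] [Finite X] {A K1 K2 : Subgroup X}
    (hAn : A.Normal) (hab : ∀ x ∈ A, ∀ y ∈ A, x * y = y * x)
    (d1 : Disjoint A K1) (s1 : A ⊔ K1 = ⊤)
    (d2 : Disjoint A K2) (s2 : A ⊔ K2 = ⊤)
    (hcop : Nat.Coprime (Nat.card K1) (Nat.card A)) :
    ∃ m ∈ A, ∀ x : X, x ∈ K2 ↔ m⁻¹ * x * m ∈ K1 := by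
  haveI := hAn
  by_cases hA : A = ⊥
  · subst hA
    rw [bot_sup_eq] at s1 s2
    exact ⟨1, one_mem _, fun x => by simp [s1, s2]⟩
  have hA1 : 1 < Nat.card ↥A := (Subgroup.one_lt_card_iff_ne_bot (H := A)).mpr hA
  -- decomposition: existence
  have hdecomp : ∀ (K : Subgroup X), A ⊔ K = ⊤ →
      ∀ g : X, ∃ s : ↥K, ∃ t : ↥A, (s : X) * t = g := by
    intro K sK g
    have hg : g ∈ ((K : Set X) * (A : Set X)) := by
      rw [← Subgroup.mul_normal K A, sup_comm K A, sK]
      trivial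
    obtain ⟨s, hs, t, ht, hst⟩ := hg
    exact ⟨⟨s, hs⟩, ⟨t, ht⟩, hst⟩
  -- decomposition: uniqueness
  have huniqd : ∀ (K : Subgroup X), Disjoint A K →
      ∀ (s s' : ↥K) (t t' : ↥A), (s : X) * t = (s' : X) * t' → s = s' ∧ t = t' := by
    intro K dK s s' t t' he
    have h1 : ((s' : X))⁻¹ * ↑s = (t' : X) * (↑t)⁻¹ := by
      rw [inv_mul_eq_iff_eq_mul, ← mul_assoc, ← he, mul_assoc, mul_inv_cancel, mul_one]
    have h2 : ((s' : X))⁻¹ * ↑s ∈ K := mul_mem (inv_mem s'.2) s.2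
    have h3 : ((s' : X))⁻¹ * ↑s ∈ A := h1 ▸ mul_mem t'.2 (inv_mem t.2)
    have h4 : ((s' : X))⁻¹ * ↑s = 1 := Subgroup.disjoint_def.mp dK h3 h2
    have h5 : (s' : X) = ↑s := inv_mul_eq_one.mp h4
    refine ⟨(Subtype.ext h5).symm, ?_⟩
    have h6 : (t' : X) * (↑t)⁻¹ = 1 := by rw [← h1, h4]
    exact ((Subtype.ext (mul_inv_eq_one.mp h6)).symm)
  -- conjugation homomorphisms on A
  have memA : ∀ (x : X) (a : ↥A), x⁻¹ * ↑a * x ∈ A := fun x a => by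
    simpa [mul_assoc] using hAn.conj_mem ↑a a.2 x⁻¹
  let ca : X → (↥A →* ↥A) := fun x =>
    { toFun := fun a => ⟨x⁻¹ * ↑a * x, memA x a⟩
      map_one' := by ext; simp
      map_mul' := fun a b => by
        ext
        show x⁻¹ * ↑(a * b) * x = (x⁻¹ * ↑a * x) * (x⁻¹ * ↑b * x)
        rw [Subgroup.coe_mul]
        group }
  have ca_apply : ∀ (x : X) (a : ↥A), ((ca x a : ↥A) : X) = x⁻¹ * ↑a * x := fun _ _ => rfl
  -- decomposition functions of elements of K1 with respect to K2 * A
  choose σ0 f0 hsf0 using hdecomp K2 s2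
  set σ : ↥K1 → ↥K2 := fun l => σ0 ↑l with hσdef
  set f : ↥K1 → ↥A := fun l => f0 ↑l with hfdef
  have hsf : ∀ l : ↥K1, (σ l : X) * (f l : X) = ↑l := fun l => hsf0 ↑l
  -- cocycle identity
  have hcocy : ∀ k l : ↥K1, σ (k * l) = σ k * σ l ∧ f (k * l) = ca ↑l (f k) * f l := by
    intro k l
    refine huniqd K2 d2 _ _ _ _ ?_
    rw [hsf (k * l)]
    have e2 : ((ca ↑l (f k) * f l : ↥A) : X) =
        ((↑l : X)⁻¹ * (f k : X) * ↑l) * (f l : X) := rfl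
    rw [Subgroup.coe_mul, e2, Subgroup.coe_mul, ← hsf k, ← hsf l]
    have hb : ((σ l : X))⁻¹ * (f k : X) * (σ l : X) ∈ A := memA _ _
    have hcm : ((f l : X))⁻¹ * (((σ l : X))⁻¹ * (f k : X) * (σ l : X)) * (f l : X)
        = ((σ l : X))⁻¹ * (f k : X) * (σ l : X) := by
      have hxy := hab _ hb _ (f l).2
      rw [mul_assoc, hxy, inv_mul_cancel_left]
    set s1' := (σ k : X)
    set s2' := (σ l : X)
    set t := (f l : X)
    set a := (f k : X)
    show (s1' * a) * (s2' * t) = (s1' * s2') * ((s2' * t)⁻¹ * a * (s2' * t) * t)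
    calc (s1' * a) * (s2' * t) = (s1' * s2') * ((s2'⁻¹ * a * s2') * t) := by group
      _ = (s1' * s2') * ((t⁻¹ * (s2'⁻¹ * a * s2') * t) * t) := by rw [hcm]
      _ = (s1' * s2') * ((s2' * t)⁻¹ * a * (s2' * t) * t) := by group
  -- commutative group structure on A
  letI hAcomm : CommGroup ↥A :=
    { (inferInstance : Group ↥A) with
      mul_comm := fun a b => Subtype.ext (hab ↑a a.2 ↑b b.2) }
  letI : Fintype ↥K1 := Fintype.ofFinite _
  set q := Fintype.card ↥K1 with hq
  set aa : ↥A := ∏ kk : ↥K1, f kk with haa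
  have hprodid : ∀ l : ↥K1, aa = ca ↑l aa * (f l) ^ q := by
    intro l
    have h1 : ∏ kk : ↥K1, f (kk * l) = aa :=
      Fintype.prod_equiv (Equiv.mulRight l) _ _ (fun kk => rfl)
    calc aa = ∏ kk : ↥K1, f (kk * l) := h1.symm
      _ = ∏ kk : ↥K1, (ca ↑l (f kk) * f l) := by
          refine Finset.prod_congr rfl fun kk _ => ?_
          exact (hcocy kk l).2
      _ = (∏ kk : ↥K1, ca ↑l (f kk)) * ∏ kk : ↥K1, f l := Finset.prod_mul_distrib
      _ = ca ↑l aa * (f l) ^ q := by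
          rw [← map_prod, Finset.prod_const, Finset.card_univ]
  -- arithmetic
  have hcop' : Nat.Coprime q (Nat.card ↥A) := by
    rw [hq, ← Nat.card_eq_fintype_card]; exact hcop
  obtain ⟨c, -, hc⟩ := Nat.exists_mul_mod_eq_one_of_coprime hcop' hA1
  have hpowA : ∀ t : ↥A, t ^ (q * c) = t := by
    intro t
    have h1 : q * c ≡ 1 [MOD Nat.card ↥A] := by
      show q * c % Nat.card ↥A = 1 % Nat.card ↥A
      rw [hc, Nat.mod_eq_of_lt hA1]
    have h2 : q * c ≡ 1 [MOD orderOf t] := h1.of_dvd (orderOf_dvd_natCard t)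
    calc t ^ (q * c) = t ^ 1 := pow_eq_pow_iff_modEq.mpr h2
      _ = t := pow_one t
  set mh : ↥A := aa ^ c with hmh
  have hflm : ∀ l : ↥K1, f l = mh * (ca ↑l mh)⁻¹ := by
    intro l
    have h1 : (ca ↑l aa) * (f l) ^ q = aa := (hprodid l).symm
    have h2 : (f l) ^ q = (ca ↑l aa)⁻¹ * aa := eq_inv_mul_iff_mul_eq.mpr h1
    calc f l = (f l) ^ (q * c) := (hpowA (f l)).symm
      _ = ((f l) ^ q) ^ c := by rw [pow_mul]
      _ = ((ca ↑l aa)⁻¹ * aa) ^ c := by rw [h2]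
      _ = ((ca ↑l aa) ^ c)⁻¹ * aa ^ c := by rw [mul_pow, inv_pow]
      _ = (ca ↑l (aa ^ c))⁻¹ * aa ^ c := by rw [map_pow]
      _ = mh * (ca ↑l mh)⁻¹ := mul_comm _ _
  set m : X := (mh : X) with hm
  have hmA : m ∈ A := mh.2
  have hσ : ∀ l : ↥K1, (σ l : X) = m * ↑l * m⁻¹ := by
    intro l
    have h1 : ((f l : ↥A) : X) = m * ((↑l : X)⁻¹ * m * ↑l)⁻¹ := by
      rw [hflm l, Subgroup.coe_mul, Subgroup.coe_inv, ca_apply]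
    have h2 : (σ l : X) = ↑l * ((f l : ↥A) : X)⁻¹ := by rw [← hsf l]; group
    rw [h2, h1]
    group
  -- conclusion
  refine ⟨m, hmA, fun x => ⟨fun hx => ?_, fun hx => ?_⟩⟩
  · obtain ⟨l, b, hlb⟩ := hdecomp K1 s1 (m⁻¹ * x * m)
    have hxeq : x = (σ l : X) * (m * ↑b * m⁻¹) := by
      rw [hσ l]
      have : x = m * (m⁻¹ * x * m) * m⁻¹ := by group
      rw [this, ← hlb]
      group
    have hmem2 : m * ↑b * m⁻¹ ∈ K2 := by
      have h3 : ((σ l : X))⁻¹ * x ∈ K2 := mul_mem (inv_mem (σ l).2) hx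
      have h4 : ((σ l : X))⁻¹ * x = m * ↑b * m⁻¹ := by rw [hxeq]; group
      rwa [h4] at h3
    have hmemA : m * ↑b * m⁻¹ ∈ A := hAn.conj_mem ↑b b.2 m
    have hb1 : m * ↑b * m⁻¹ = 1 := Subgroup.disjoint_def.mp d2 hmemA hmem2
    have hb2 : (b : X) = 1 := by
      have := congrArg (fun z => m⁻¹ * z * m) hb1
      simpa [mul_assoc] using this
    have : m⁻¹ * x * m = ↑l := by rw [← hlb, hb2, mul_one]
    rw [this]; exact l.2
  · have hmem := (σ ⟨m⁻¹ * x * m, hx⟩).2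
    have he : (σ ⟨m⁻¹ * x * m, hx⟩ : X) = x := by
      rw [hσ]
      show m * (m⁻¹ * x * m) * m⁻¹ = x
      group
    rwa [he] at hmem


lemma decomp_of_sup_eq_top {N K : Subgroup G} [N.Normal] (hsup : N ⊔ K = ⊤) (g : G) :
    ∃ nn ∈ N, ∃ x ∈ K, nn * x = g := by
  have hg : g ∈ ((N : Set G) * (K : Set G)) := by
    rw [← Subgroup.normal_mul N K, hsup]; trivial
  obtain ⟨nn, hnn, x, hx, hxg⟩ := hg
  exact ⟨nn, hnn, x, hx, hxg⟩

lemma normal_of_normalizer_sup {N K P : Subgroup G} (hsup : N ⊔ K = ⊤)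
    (hN : N ≤ Subgroup.normalizer (P : Set G)) (hK : K ≤ Subgroup.normalizer (P : Set G)) : P.Normal := by
  rw [← Subgroup.normalizer_eq_top_iff]
  exact top_le_iff.mp (hsup ▸ sup_le hN hK)

lemma mem_normalizer_of_conj_mem {P : Subgroup G} (x : G)
    (h : ∀ y, y ∈ P → x * y * x⁻¹ ∈ P) (h' : ∀ y, y ∈ P → x⁻¹ * y * x ∈ P) :
    x ∈ Subgroup.normalizer (P : Set G) := by
  rw [Subgroup.mem_normalizer_iff]
  intro y
  refine ⟨h y, fun hy => ?_⟩
  have := h' _ hy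
  simpa [mul_assoc] using this

lemma conj_mem_iff {P : Subgroup G} (hP : P.Normal) (g x : G) :
    g⁻¹ * x * g ∈ P ↔ x ∈ P :=
  ⟨fun hx => by simpa [mul_assoc] using hP.conj_mem _ hx g,
   fun hx => by simpa [mul_assoc] using hP.conj_mem _ hx g⁻¹⟩

/-- In the primitive situation, the centralizer of `N` is `N` itself. -/
lemma centralizer_eq_self {N H : Subgroup G} (hNn : N.Normal)
    (hab : ∀ x ∈ N, ∀ y ∈ N, x * y = y * x)
    (hcore : ∀ M : Subgroup G, M.Normal → M ≤ H → M = ⊥)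
    (hsup : N ⊔ H = ⊤) :
    Subgroup.centralizer (N : Set G) = N := by
  haveI := hNn
  set C := Subgroup.centralizer (N : Set G) with hC
  have hNC : N ≤ C := fun x hx =>
    Subgroup.mem_centralizer_iff.mpr (fun y hy => hab y hy x hx)
  have hCn : C.Normal := by
    constructor
    intro c hc g
    refine Subgroup.mem_centralizer_iff.mpr (fun y hy => ?_)
    have hy' : g⁻¹ * y * g ∈ N := by
      simpa [mul_assoc] using hNn.conj_mem y hy g⁻¹
    have h1 := Subgroup.mem_centralizer_iff.mp hc _ hy'
    have h2 := congrArg (fun z => g * z * g⁻¹) h1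
    simpa [mul_assoc] using h2
  have hCH : C ⊓ H = ⊥ := by
    apply hcore _ _ inf_le_right
    apply normal_of_normalizer_sup hsup
    · intro nn hnn
      apply mem_normalizer_of_conj_mem
      · intro y hy
        have h1 := Subgroup.mem_centralizer_iff.mp hy.1 nn hnn
        have h2 : nn * y * nn⁻¹ = y := by rw [h1]; group
        rw [h2]; exact hy
      · intro y hy
        have h1 := Subgroup.mem_centralizer_iff.mp hy.1 nn hnn
        have h2 : nn⁻¹ * y * nn = y := by
          rw [mul_assoc, ← h1, inv_mul_cancel_left]
        rw [h2]; exact hy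
    · intro x hx
      apply mem_normalizer_of_conj_mem
      · exact fun y hy => Subgroup.mem_inf.mpr
          ⟨hCn.conj_mem y (Subgroup.mem_inf.mp hy).1 x,
           H.mul_mem (H.mul_mem hx (Subgroup.mem_inf.mp hy).2) (H.inv_mem hx)⟩
      · intro y hy
        refine Subgroup.mem_inf.mpr
          ⟨?_, H.mul_mem (H.mul_mem (H.inv_mem hx) (Subgroup.mem_inf.mp hy).2) hx⟩
        have := hCn.conj_mem y (Subgroup.mem_inf.mp hy).1 x⁻¹
        simpa [mul_assoc] using this
  apply le_antisymm ?_ hNC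
  intro cel hc
  obtain ⟨nn, hnn, x, hx, hxg⟩ := decomp_of_sup_eq_top hsup cel
  have hxC : x ∈ C := by
    have hxe : x = nn⁻¹ * cel := by rw [← hxg]; group
    rw [hxe]; exact mul_mem (inv_mem (hNC hnn)) hc
  have hxb : x ∈ C ⊓ H := ⟨hxC, hx⟩
  rw [hCH, Subgroup.mem_bot] at hxb
  rw [← hxg, hxb, mul_one]; exact hnn

/-- The key conjugacy theorem: in a finite soluble monolithic primitive group,
any two complements of the socle `N` are conjugate by an element of `N`. -/
theorem compl_conj [Finite G] (hsol : IsSolvable G)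
    {N : Subgroup G} (hN : IsMinNormal N)
    (huniq : ∀ M : Subgroup G, IsMinNormal M → M = N)
    (hNtop : N ≠ ⊤)
    (hCG : Subgroup.centralizer (N : Set G) = N)
    {K1 K2 : Subgroup G}
    (d1 : Disjoint N K1) (s1 : N ⊔ K1 = ⊤)
    (d2 : Disjoint N K2) (s2 : N ⊔ K2 = ⊤) :
    ∃ m ∈ N, ∀ x : G, x ∈ K2 ↔ m⁻¹ * x * m ∈ K1 := by
  obtain ⟨hNn, hNbot, hNmin⟩ := id hN
  haveI := hNn
  have hab := minNormal_comm hsol hN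
  obtain ⟨p, hpp, hpN⟩ := minNormal_pgroup hsol hN
  haveI : Fact p.Prime := ⟨hpp⟩
  -- the quotient G/N and a minimal normal subgroup above N
  set π := QuotientGroup.mk' N with hπ
  have hπsurj : Function.Surjective π := QuotientGroup.mk'_surjective N
  haveI hQnt : Nontrivial (G ⧸ N) := by
    obtain ⟨g, hg⟩ : ∃ g, g ∉ N := by
      by_contra hcon; push_neg at hcon
      exact hNtop ((Subgroup.eq_top_iff' N).mpr hcon)
    exact ⟨⟨π g, 1, fun he => hg ((QuotientGroup.eq_one_iff g).mp he)⟩⟩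
  obtain ⟨T, hT, -⟩ := exists_minNormal_le (G := G ⧸ N) ⊤ inferInstance (by
    intro htop
    obtain ⟨a, b, hne⟩ := hQnt
    have ha := (Subgroup.eq_bot_iff_forall _).mp htop a (Subgroup.mem_top _)
    have hb := (Subgroup.eq_bot_iff_forall _).mp htop b (Subgroup.mem_top _)
    exact hne (ha.trans hb.symm))
  obtain ⟨q, hqp, hqT⟩ := minNormal_pgroup (G := G ⧸ N) (by haveI : Group.IsSolvable G := hsol; exact (inferInstance : Group.IsSolvable (G ⧸ N))) hT
  haveI : Fact q.Prime := ⟨hqp⟩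
  set R := T.comap π with hR
  have hRn : R.Normal := hT.1.comap π
  have hNR : N ≤ R := by
    intro x hx
    show π x ∈ T
    have hx1 : π x = 1 := (QuotientGroup.eq_one_iff x).mpr hx
    rw [hx1]; exact one_mem T
  have hRneN : ∃ g, g ∈ R ∧ g ∉ N := by
    obtain ⟨t, ht, htne⟩ : ∃ t, t ∈ T ∧ t ≠ 1 := by
      by_contra hcon; push_neg at hcon
      exact hT.2.1 ((Subgroup.eq_bot_iff_forall T).mpr hcon)
    obtain ⟨g, rfl⟩ := hπsurj t
    exact ⟨g, ht, fun hg => htne ((QuotientGroup.eq_one_iff g).mpr hg)⟩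
  have hqpow : ∀ x : G, x ∈ R → ∃ j : ℕ, x ^ q ^ j ∈ N := by
    intro x hx
    obtain ⟨j, hj⟩ := hqT ⟨π x, hx⟩
    refine ⟨j, ?_⟩
    rw [← QuotientGroup.eq_one_iff]
    have h1 := congrArg (Subtype.val) hj
    push_cast at h1
    show π (x ^ q ^ j) = 1
    rw [map_pow]
    exact h1
  -- q ≠ p
  have hqnep : q ≠ p := by
    intro hqep
    subst hqep
    have hRp : IsPGroup q ↥R := by
      intro x
      obtain ⟨j, hj⟩ := hqpow ↑x x.2
      obtain ⟨i, hi⟩ := hpN ⟨(↑x : G) ^ q ^ j, hj⟩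
      refine ⟨j + i, ?_⟩
      ext
      have h1 := congrArg (Subtype.val) hi
      push_cast at h1 ⊢
      rw [pow_add, pow_mul]
      exact h1
    haveI hRnontriv : Nontrivial ↥R := by
      obtain ⟨x, hxN, hxne⟩ : ∃ x, x ∈ N ∧ x ≠ 1 := by
        by_contra hcon; push_neg at hcon
        exact hNbot ((Subgroup.eq_bot_iff_forall N).mpr hcon)
      exact ⟨⟨⟨x, hNR hxN⟩, 1, fun he => hxne (by simpa using congrArg Subtype.val he)⟩⟩
    haveI := hRp.center_nontrivial
    obtain ⟨z, hzne⟩ := exists_ne (1 : ↥(Subgroup.center ↥R))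
    set W := Subgroup.centralizer (R : Set G) ⊓ R with hW
    have hzmem : ((z : ↥R) : G) ∈ W := by
      refine ⟨Subgroup.mem_centralizer_iff.mpr (fun y hy => ?_), (z : ↥R).2⟩
      have h1 := Subgroup.mem_center_iff.mp z.2 ⟨y, hy⟩
      exact congrArg Subtype.val h1
    have hWne : W ≠ ⊥ := by
      intro hWbot
      rw [hWbot, Subgroup.mem_bot] at hzmem
      exact hzne (Subtype.ext (Subtype.ext hzmem))
    have hWn : W.Normal := by
      constructor
      intro w hw g
      refine ⟨Subgroup.mem_centralizer_iff.mpr (fun y hy => ?_), hRn.conj_mem w hw.2 g⟩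
      have hy' : g⁻¹ * y * g ∈ R := by
        simpa [mul_assoc] using hRn.conj_mem y hy g⁻¹
      have hcomm := Subgroup.mem_centralizer_iff.mp hw.1 _ hy'
      have h2 := congrArg (fun zz => g * zz * g⁻¹) hcomm
      simpa [mul_assoc] using h2
    obtain ⟨S, hS, hSW⟩ := exists_minNormal_le W hWn hWne
    have hNW : N ≤ W := (huniq S hS) ▸ hSW
    obtain ⟨g, hgR, hgN⟩ := hRneN
    apply hgN
    rw [← hCG]
    refine Subgroup.mem_centralizer_iff.mpr (fun y hy => ?_)
    exact (Subgroup.mem_centralizer_iff.mp (hNW hy).1 g hgR).symm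
  -- facts about each complement
  have hcompl : ∀ K : Subgroup G, Disjoint N K → N ⊔ K = ⊤ →
      (N ⊔ (R ⊓ K) = R) ∧ IsPGroup q ↥(R ⊓ K) := by
    intro K dK sK
    have hded : N ⊔ (R ⊓ K) = R := by
      apply le_antisymm (sup_le hNR inf_le_left)
      intro r hr
      obtain ⟨nn, hnn, x, hx, hxg⟩ := decomp_of_sup_eq_top sK r
      have hxR : x ∈ R := by
        have hxe : x = nn⁻¹ * r := by rw [← hxg]; group
        rw [hxe]; exact mul_mem (inv_mem (hNR hnn)) hr
      rw [← hxg]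
      exact Subgroup.mul_mem_sup hnn ⟨hxR, hx⟩
    refine ⟨hded, fun x => ?_⟩
    obtain ⟨j, hj⟩ := hqpow ↑x x.2.1
    refine ⟨j, ?_⟩
    have hXK : (↑x : G) ^ q ^ j ∈ K := pow_mem x.2.2 _
    have h1 : (↑x : G) ^ q ^ j = 1 := Subgroup.disjoint_def.mp dK hj hXK
    ext; push_cast; exact h1
  -- Schur–Zassenhaus conjugation inside R
  have hSZ : ∀ K K' : Subgroup G, Disjoint N K → N ⊔ K = ⊤ → Disjoint N K' → N ⊔ K' = ⊤ →
      ∃ m ∈ N, ∀ x : G, x ∈ R ⊓ K' ↔ m⁻¹ * x * m ∈ R ⊓ K := by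
    intro K K' dK sK dK' sK'
    obtain ⟨hdedK, hqK⟩ := hcompl K dK sK
    obtain ⟨hdedK', hqK'⟩ := hcompl K' dK' sK'
    have hAn' : (N.subgroupOf R).Normal := hNn.subgroupOf R
    have hab' : ∀ x ∈ N.subgroupOf R, ∀ y ∈ N.subgroupOf R, x * y = y * x := by
      intro x hx y hy
      exact Subtype.ext (hab _ (Subgroup.mem_subgroupOf.mp hx) _ (Subgroup.mem_subgroupOf.mp hy))
    have hdisj : ∀ (K0 : Subgroup G), Disjoint N K0 →
        Disjoint (N.subgroupOf R) ((R ⊓ K0).subgroupOf R) := by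
      intro K0 dK0
      rw [Subgroup.disjoint_def]
      intro x hx1 hx2
      exact Subtype.ext (Subgroup.disjoint_def.mp dK0 (Subgroup.mem_subgroupOf.mp hx1)
        (Subgroup.mem_subgroupOf.mp hx2).2)
    have hsup' : ∀ (K0 : Subgroup G), N ⊔ (R ⊓ K0) = R →
        N.subgroupOf R ⊔ (R ⊓ K0).subgroupOf R = ⊤ := by
      intro K0 hded
      rw [← Subgroup.subgroupOf_sup hNR inf_le_left, hded, Subgroup.subgroupOf_self]
    have hcards : Nat.Coprime (Nat.card ↥((R ⊓ K).subgroupOf R)) (Nat.card ↥(N.subgroupOf R)) := by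
      have e1 : Nat.card ↥((R ⊓ K).subgroupOf R) = Nat.card ↥(R ⊓ K) :=
        Nat.card_congr (Subgroup.subgroupOfEquivOfLe inf_le_left).toEquiv
      have e2 : Nat.card ↥(N.subgroupOf R) = Nat.card ↥N :=
        Nat.card_congr (Subgroup.subgroupOfEquivOfLe hNR).toEquiv
      obtain ⟨a, ha⟩ := (IsPGroup.iff_card (p := p) (G := ↥N)).mp hpN
      obtain ⟨b, hb⟩ := (IsPGroup.iff_card (p := q) (G := ↥(R ⊓ K))).mp hqK
      rw [e1, e2, ha, hb]
      exact Nat.Coprime.pow _ _ ((Nat.coprime_primes hqp hpp).mpr hqnep)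
    obtain ⟨mh, hmhA, hmiff⟩ := conj_of_complement hAn' hab' (hdisj K dK) (hsup' K hdedK)
      (hdisj K' dK') (hsup' K' hdedK') hcards
    refine ⟨↑mh, Subgroup.mem_subgroupOf.mp hmhA, fun x => ⟨fun hx => ?_, fun hx => ?_⟩⟩
    · have h3 := (hmiff ⟨x, hx.1⟩).mp (Subgroup.mem_subgroupOf.mpr hx)
      have h4 := Subgroup.mem_subgroupOf.mp h3
      have h1 : ((mh⁻¹ * ⟨x, hx.1⟩ * mh : ↥R) : G) = (↑mh)⁻¹ * x * ↑mh := rfl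
      rwa [h1] at h4
    · have h0 : (↑mh)⁻¹ * x * ↑mh ∈ R := hx.1
      have hxR : x ∈ R := by
        have hxe : x = ↑mh * ((↑mh)⁻¹ * x * ↑mh) * (↑mh)⁻¹ := by group
        rw [hxe]
        exact mul_mem (mul_mem mh.2 h0) (inv_mem mh.2)
      have h1 : ((mh⁻¹ * ⟨x, hxR⟩ * mh : ↥R) : G) = (↑mh)⁻¹ * x * ↑mh := rfl
      have h2 : mh⁻¹ * ⟨x, hxR⟩ * mh ∈ (R ⊓ K).subgroupOf R :=
        Subgroup.mem_subgroupOf.mpr (by rw [h1]; exact hx)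
      exact Subgroup.mem_subgroupOf.mp ((hmiff ⟨x, hxR⟩).mpr h2)
  -- each complement is the normalizer of its trace on R
  have hnorm : ∀ K : Subgroup G, Disjoint N K → N ⊔ K = ⊤ → K = Subgroup.normalizer ((R ⊓ K : Subgroup G) : Set G) := by
    intro K dK sK
    obtain ⟨hded, hqK⟩ := hcompl K dK sK
    have hKM : K ≤ Subgroup.normalizer ((R ⊓ K : Subgroup G) : Set G) := by
      intro x hx
      apply mem_normalizer_of_conj_mem
      · exact fun y hy => Subgroup.mem_inf.mpr
          ⟨hRn.conj_mem _ (Subgroup.mem_inf.mp hy).1 x,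
           K.mul_mem (K.mul_mem hx (Subgroup.mem_inf.mp hy).2) (K.inv_mem hx)⟩
      · intro y hy
        refine Subgroup.mem_inf.mpr
          ⟨?_, K.mul_mem (K.mul_mem (K.inv_mem hx) (Subgroup.mem_inf.mp hy).2) hx⟩
        have := hRn.conj_mem _ (Subgroup.mem_inf.mp hy).1 x⁻¹
        simpa [mul_assoc] using this
    have hfrat : N ⊔ Subgroup.normalizer ((R ⊓ K : Subgroup G) : Set G) = ⊤ := by
      rw [eq_top_iff]
      intro g _
      set Kg := Subgroup.map (MulAut.conj g).toMonoidHom K with hKg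
      have hKgmem : ∀ w : G, w ∈ Kg ↔ g⁻¹ * w * g ∈ K := by
        intro w
        rw [hKg, Subgroup.mem_map_equiv, MulAut.conj_symm_apply]
      have dKg : Disjoint N Kg := by
        rw [Subgroup.disjoint_def]
        intro x hxN hxK
        rw [hKgmem] at hxK
        have hxN' : g⁻¹ * x * g ∈ N := (conj_mem_iff hNn g x).mpr hxN
        have h1 := Subgroup.disjoint_def.mp dK hxN' hxK
        have h2 := congrArg (fun z => g * z * g⁻¹) h1
        simpa [mul_assoc] using h2
      have sKg : N ⊔ Kg = ⊤ := by
        have hmapN : Subgroup.map (MulAut.conj g).toMonoidHom N = N := by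
          ext x
          rw [Subgroup.mem_map_equiv, MulAut.conj_symm_apply]
          exact conj_mem_iff hNn g x
        have h1 := congrArg (Subgroup.map (MulAut.conj g).toMonoidHom) sK
        rw [Subgroup.map_sup, hmapN] at h1
        rw [hKg, h1]
        exact Subgroup.map_top_of_surjective _ (MulEquiv.surjective _)
      obtain ⟨cc, hccN, hcciff⟩ := hSZ K Kg dK sK dKg sKg
      have h1 : ∀ z, z ∈ R ⊓ K ↔ g * z * g⁻¹ ∈ R ⊓ Kg := by
        intro z
        constructor
        · intro hz
          refine Subgroup.mem_inf.mpr ⟨hRn.conj_mem z hz.1 g, (hKgmem _).mpr ?_⟩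
          have he : g⁻¹ * (g * z * g⁻¹) * g = z := by group
          rw [he]; exact hz.2
        · intro hz
          have hz1 : z ∈ R := by
            have := hRn.conj_mem _ (Subgroup.mem_inf.mp hz).1 g⁻¹
            simpa [mul_assoc] using this
          have hz2 : z ∈ K := by
            have h2 := (hKgmem _).mp (Subgroup.mem_inf.mp hz).2
            have he : g⁻¹ * (g * z * g⁻¹) * g = z := by group
            rwa [he] at h2
          exact Subgroup.mem_inf.mpr ⟨hz1, hz2⟩
      have hgM : cc⁻¹ * g ∈ Subgroup.normalizer ((R ⊓ K : Subgroup G) : Set G) := by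
        rw [Subgroup.mem_normalizer_iff]
        intro y
        constructor
        · intro hy
          have h2 := (hcciff _).mp ((h1 y).mp hy)
          have he : (cc⁻¹ * g) * y * (cc⁻¹ * g)⁻¹ = cc⁻¹ * (g * y * g⁻¹) * cc := by group
          rwa [he]
        · intro hy
          have he : (cc⁻¹ * g) * y * (cc⁻¹ * g)⁻¹ = cc⁻¹ * (g * y * g⁻¹) * cc := by group
          rw [he] at hy
          exact (h1 y).mpr ((hcciff _).mpr hy)
      have hge : g = cc * (cc⁻¹ * g) := by group
      rw [hge]
      exact Subgroup.mul_mem_sup hccN hgM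
    -- elements of N normalizing R ⊓ K centralize it
    have hcent : ∀ nn, nn ∈ N → nn ∈ Subgroup.normalizer ((R ⊓ K : Subgroup G) : Set G) → ∀ y ∈ R ⊓ K, y * nn = nn * y := by
      intro nn hnnN hnnM y hy
      have h1 : nn⁻¹ * y * nn ∈ R ⊓ K := by
        rw [Subgroup.mem_normalizer_iff] at hnnM
        refine (hnnM _).mpr ?_
        have he : nn * (nn⁻¹ * y * nn) * nn⁻¹ = y := by group
        rw [he]; exact hy
      have h2 : y⁻¹ * (nn⁻¹ * y * nn) ∈ K := mul_mem (inv_mem hy.2) h1.2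
      have h3 : y⁻¹ * (nn⁻¹ * y * nn) ∈ N := by
        have ha : y⁻¹ * nn⁻¹ * y ∈ N := by
          have := hNn.conj_mem nn⁻¹ (inv_mem hnnN) y⁻¹
          simpa [mul_assoc] using this
        have he : y⁻¹ * (nn⁻¹ * y * nn) = (y⁻¹ * nn⁻¹ * y) * nn := by group
        rw [he]; exact mul_mem ha hnnN
      have h4 := Subgroup.disjoint_def.mp dK h3 h2
      have h5 : nn⁻¹ * y * nn = y := by
        have h6 := congrArg (fun z => y * z) h4
        simpa [mul_assoc] using h6
      calc y * nn = nn * (nn⁻¹ * y * nn) := by group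
        _ = nn * y := by rw [h5]
    -- the centralizer trace Z is trivial
    set Z := N ⊓ Subgroup.centralizer ((R ⊓ K : Subgroup G) : Set G) with hZ
    have hZn : Z.Normal := by
      apply normal_of_normalizer_sup hfrat
      · intro nn hnn
        have key : ∀ w, w ∈ N → ∀ y, y ∈ Z → w * y * w⁻¹ ∈ Z := by
          intro w hw y hy
          have h1 := hab w hw y hy.1
          have h2 : w * y * w⁻¹ = y := by rw [h1]; group
          rw [h2]; exact hy
        exact mem_normalizer_of_conj_mem nn (key nn hnn)
          (fun y hy => by simpa using key nn⁻¹ (inv_mem hnn) y hy)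
      · intro x hx
        have key : ∀ w, w ∈ Subgroup.normalizer ((R ⊓ K : Subgroup G) : Set G) → ∀ y, y ∈ Z → w * y * w⁻¹ ∈ Z := by
          intro w hw y hy
          refine ⟨hNn.conj_mem y hy.1 w, Subgroup.mem_centralizer_iff.mpr (fun v hv => ?_)⟩
          have hv' : w⁻¹ * v * w ∈ R ⊓ K := by
            rw [Subgroup.mem_normalizer_iff] at hw
            refine (hw _).mpr ?_
            have he : w * (w⁻¹ * v * w) * w⁻¹ = v := by group
            rw [he]; exact hv
          have hcm := Subgroup.mem_centralizer_iff.mp hy.2 _ hv'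
          have h2 := congrArg (fun z => w * z * w⁻¹) hcm
          simpa [mul_assoc] using h2
        exact mem_normalizer_of_conj_mem x (key x hx)
          (fun y hy => by simpa using key x⁻¹ (inv_mem hx) y hy)
    rcases hNmin Z hZn inf_le_left with hZbot | hZN
    swap
    · -- Z = N leads to a contradiction
      exfalso
      have hQbot : R ⊓ K = ⊥ := by
        rw [Subgroup.eq_bot_iff_forall]
        intro w hw
        have hwN : w ∈ N := by
          rw [← hCG]
          refine Subgroup.mem_centralizer_iff.mpr (fun y hy => ?_)
          have hyZ : y ∈ Z := hZN ▸ hy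
          exact (Subgroup.mem_centralizer_iff.mp hyZ.2 w hw).symm
        exact Subgroup.disjoint_def.mp dK hwN hw.2
      obtain ⟨g, hgR, hgN⟩ := hRneN
      rw [← hded, hQbot, sup_bot_eq] at hgR
      exact hgN hgR
    -- so N ∩ normalizer = ⊥, normalizer is a complement, and K = normalizer
    have dM : Disjoint N (Subgroup.normalizer ((R ⊓ K : Subgroup G) : Set G)) := by
      rw [Subgroup.disjoint_def]
      intro x hxN hxM
      have hxZ : x ∈ Z :=
        ⟨hxN, Subgroup.mem_centralizer_iff.mpr (fun y hy => hcent x hxN hxM y hy)⟩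
      rw [hZbot, Subgroup.mem_bot] at hxZ
      exact hxZ
    have hcK : IsComplement' N K :=
      Subgroup.isComplement'_of_disjoint_and_mul_eq_univ dK
        (by rw [← Subgroup.normal_mul N K, sK]; rfl)
    have hcM : IsComplement' N (Subgroup.normalizer ((R ⊓ K : Subgroup G) : Set G)) :=
      Subgroup.isComplement'_of_disjoint_and_mul_eq_univ dM
        (by rw [← Subgroup.normal_mul N _, hfrat]; rfl)
    have hcardKM : Nat.card ↥(Subgroup.normalizer ((R ⊓ K : Subgroup G) : Set G)) ≤ Nat.card ↥K := by
      have e1 := hcK.card_mul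
      have e2 := hcM.card_mul
      have e3 : Nat.card ↥N * Nat.card ↥K = Nat.card ↥N * Nat.card ↥(Subgroup.normalizer ((R ⊓ K : Subgroup G) : Set G)) := by
        rw [e1, e2]
      exact le_of_eq (Nat.eq_of_mul_eq_mul_left Nat.card_pos e3).symm
    exact Subgroup.eq_of_le_of_card_ge hKM hcardKM
  -- conclude
  obtain ⟨m, hmN, hmiff⟩ := hSZ K1 K2 d1 s1 d2 s2
  refine ⟨m, hmN, fun x => ?_⟩
  rw [hnorm K2 d2 s2, hnorm K1 d1 s1, Subgroup.mem_normalizer_iff, Subgroup.mem_normalizer_iff]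
  have hrev : ∀ z, z ∈ R ⊓ K1 ↔ m * z * m⁻¹ ∈ R ⊓ K2 := by
    intro z
    constructor
    · intro hz
      refine (hmiff (m * z * m⁻¹)).mpr ?_
      have he : m⁻¹ * (m * z * m⁻¹) * m = z := by group
      rw [he]; exact hz
    · intro hz
      have h2 := (hmiff (m * z * m⁻¹)).mp hz
      have he : m⁻¹ * (m * z * m⁻¹) * m = z := by group
      rwa [he] at h2
  constructor
  · intro hx z
    constructor
    · intro hz
      rw [hrev]
      have he : m * ((m⁻¹ * x * m) * z * (m⁻¹ * x * m)⁻¹) * m⁻¹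
          = x * (m * z * m⁻¹) * x⁻¹ := by group
      rw [he]
      exact (hx _).mp ((hrev z).mp hz)
    · intro hz
      have h2 := (hrev _).mp hz
      rw [show m * ((m⁻¹ * x * m) * z * (m⁻¹ * x * m)⁻¹) * m⁻¹
          = x * (m * z * m⁻¹) * x⁻¹ from by group] at h2
      exact (hrev z).mpr ((hx _).mpr h2)
  · intro hx z
    constructor
    · intro hz
      have h2 := (hx _).mp ((hmiff z).mp hz)
      rw [show (m⁻¹ * x * m) * (m⁻¹ * z * m) * (m⁻¹ * x * m)⁻¹
          = m⁻¹ * (x * z * x⁻¹) * m from by group] at h2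
      exact (hmiff _).mpr h2
    · intro hz
      have h2 := (hmiff _).mp hz
      rw [show m⁻¹ * (x * z * x⁻¹) * m
          = (m⁻¹ * x * m) * (m⁻¹ * z * m) * (m⁻¹ * x * m)⁻¹ from by group] at h2
      exact (hmiff z).mpr ((hx _).mpr h2)

end GPPMaux

open scoped Pointwise

theorem generating_pair_in_primitive_monolithic
    (G : Type u) [Group G] [Finite G] (hsol : IsSolvable G)
    (N : Subgroup G) (hN : IsMinNormal N)
    (huniq : ∀ M : Subgroup G, IsMinNormal M → M = N)
    (H : Subgroup G) (hmax : IsCoatom H)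
    (hcore : ∀ M : Subgroup G, M.Normal → M ≤ H → M = ⊥)
    (h : G) (hh : h ∈ H) (hne : h ≠ 1) (n : G) (hn : n ∈ N) :
    (∃ y : G, Subgroup.closure {h * n, y} = ⊤) ↔
      (∃ k : ↥H, Subgroup.closure {(⟨h, hh⟩ : ↥H), k} = ⊤) := by
  obtain ⟨hNn, hNbot, hNmin⟩ := id hN
  haveI := hNn
  have hab := GPPMaux.minNormal_comm hsol hN
  have hNnotle : ¬N ≤ H := fun hle => hNbot (hcore N hNn hle)
  have hsup : N ⊔ H = ⊤ := by
    apply hmax.2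
    exact lt_of_le_of_ne le_sup_right (fun he => hNnotle (by rw [he]; exact le_sup_left))
  have hdisj : Disjoint N H := by
    have hinfn : (N ⊓ H).Normal := by
      apply GPPMaux.normal_of_normalizer_sup hsup
      · intro nn hnn
        apply GPPMaux.mem_normalizer_of_conj_mem
        · intro y hy
          have h1 := hab nn hnn y (Subgroup.mem_inf.mp hy).1
          have h2 : nn * y * nn⁻¹ = y := by rw [h1]; group
          rw [h2]; exact hy
        · intro y hy
          have h1 := hab nn hnn y (Subgroup.mem_inf.mp hy).1
          have h2 : nn⁻¹ * y * nn = y := by rw [mul_assoc, ← h1, inv_mul_cancel_left]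
          rw [h2]; exact hy
      · intro x hx
        apply GPPMaux.mem_normalizer_of_conj_mem
        · intro y hy
          exact Subgroup.mem_inf.mpr ⟨hNn.conj_mem y (Subgroup.mem_inf.mp hy).1 x,
            H.mul_mem (H.mul_mem hx (Subgroup.mem_inf.mp hy).2) (H.inv_mem hx)⟩
        · intro y hy
          refine Subgroup.mem_inf.mpr ⟨?_,
            H.mul_mem (H.mul_mem (H.inv_mem hx) (Subgroup.mem_inf.mp hy).2) hx⟩
          have := hNn.conj_mem y (Subgroup.mem_inf.mp hy).1 x⁻¹
          simpa [mul_assoc] using this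
    rw [disjoint_iff]
    exact hcore _ hinfn inf_le_right
  constructor
  · -- forward direction
    rintro ⟨y, hy⟩
    have hy' : y ∈ ((H : Set G) * (N : Set G)) := by
      rw [← Subgroup.mul_normal H N, sup_comm H N, hsup]; trivial
    obtain ⟨u, hu, w, hw, huw⟩ := hy'
    set K' := Subgroup.closure {h, u} with hK'
    have hK'le : K' ≤ H := by
      rw [hK', Subgroup.closure_le]
      intro z hz
      simp only [Set.mem_insert_iff, Set.mem_singleton_iff] at hz
      rcases hz with rfl | rfl
      · exact hh
      · exact hu
    have hsupK' : K' ⊔ N = ⊤ := by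
      rw [eq_top_iff, ← hy, Subgroup.closure_le]
      intro z hz
      simp only [Set.mem_insert_iff, Set.mem_singleton_iff] at hz
      rcases hz with rfl | rfl
      · exact Subgroup.mul_mem_sup (Subgroup.subset_closure (by simp)) hn
      · rw [← huw]
        exact Subgroup.mul_mem_sup (Subgroup.subset_closure (by simp)) hw
    have hHeq : H = K' := by
      apply le_antisymm ?_ hK'le
      intro z hz
      have hz2 : z ∈ ((K' : Set G) * (N : Set G)) := by
        rw [← Subgroup.mul_normal K' N, hsupK']; trivial
      obtain ⟨kk, hkk, ww, hww, hkkww⟩ := hz2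
      have hwH : ww ∈ H := by
        have he : ww = kk⁻¹ * z := by rw [← hkkww]; group
        rw [he]; exact H.mul_mem (H.inv_mem (hK'le hkk)) hz
      have hww1 : ww = 1 := Subgroup.disjoint_def.mp hdisj hww hwH
      rw [← hkkww, hww1]
      simpa using hkk
    refine ⟨⟨u, hu⟩, ?_⟩
    apply Subgroup.map_injective (Subgroup.subtype_injective H)
    rw [MonoidHom.map_closure, ← MonoidHom.range_eq_map, Subgroup.range_subtype]
    have himg : (H.subtype '' {(⟨h, hh⟩ : ↥H), ⟨u, hu⟩}) = {h, u} := by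
      simp [Set.image_insert_eq]
    rw [himg, ← hK', ← hHeq]
  · -- reverse direction
    rintro ⟨kh, hkh⟩
    set k : G := (kh : G) with hk
    have hkH : k ∈ H := kh.2
    have hHgen : Subgroup.closure {h, k} = H := by
      have h1 := congrArg (Subgroup.map H.subtype) hkh
      rw [MonoidHom.map_closure, ← MonoidHom.range_eq_map, Subgroup.range_subtype] at h1
      have himg : (H.subtype '' {(⟨h, hh⟩ : ↥H), kh}) = {h, k} := by
        simp [Set.image_insert_eq, hk]
      rwa [himg] at h1
    by_contra hcon
    push_neg at hcon
    have hNtop : N ≠ ⊤ := by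
      intro he
      exact hne (Subgroup.disjoint_def.mp hdisj (by rw [he]; trivial) hh)
    have hCG := GPPMaux.centralizer_eq_self hNn hab hcore hsup
    have hKm : ∀ m : ↥N, Disjoint N (Subgroup.closure {h * n, k * ↑m}) ∧
        N ⊔ Subgroup.closure {h * n, k * ↑m} = ⊤ := by
      intro m
      have hKsup : N ⊔ Subgroup.closure {h * n, k * ↑m} = ⊤ := by
        rw [eq_top_iff]
        calc (⊤ : Subgroup G) = N ⊔ H := hsup.symm
          _ ≤ _ := by
            refine sup_le le_sup_left ?_
            rw [← hHgen, Subgroup.closure_le]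
            intro z hz
            simp only [Set.mem_insert_iff, Set.mem_singleton_iff] at hz
            rcases hz with hz1 | hz1 <;> rw [hz1]
            · have he : h = (h * n) * n⁻¹ := by group
              rw [he]
              exact mul_mem (Subgroup.mem_sup_right (Subgroup.subset_closure (by simp)))
                (inv_mem (Subgroup.mem_sup_left hn))
            · have he : k = (k * ↑m) * (↑m)⁻¹ := by group
              rw [he]
              exact mul_mem (Subgroup.mem_sup_right (Subgroup.subset_closure (by simp)))
                (inv_mem (Subgroup.mem_sup_left m.2))
      have hKdisj : Disjoint N (Subgroup.closure {h * n, k * ↑m}) := by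
        have hinfn : (N ⊓ Subgroup.closure {h * n, k * ↑m}).Normal := by
          apply GPPMaux.normal_of_normalizer_sup hKsup
          · intro nn hnn
            apply GPPMaux.mem_normalizer_of_conj_mem
            · intro y hy
              have h1 := hab nn hnn y (Subgroup.mem_inf.mp hy).1
              have h2 : nn * y * nn⁻¹ = y := by rw [h1]; group
              rw [h2]; exact hy
            · intro y hy
              have h1 := hab nn hnn y (Subgroup.mem_inf.mp hy).1
              have h2 : nn⁻¹ * y * nn = y := by rw [mul_assoc, ← h1, inv_mul_cancel_left]
              rw [h2]; exact hy
          · intro x hx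
            apply GPPMaux.mem_normalizer_of_conj_mem
            · intro y hy
              exact Subgroup.mem_inf.mpr ⟨hNn.conj_mem y (Subgroup.mem_inf.mp hy).1 x,
                mul_mem (mul_mem hx (Subgroup.mem_inf.mp hy).2) (inv_mem hx)⟩
            · intro y hy
              refine Subgroup.mem_inf.mpr ⟨?_,
                mul_mem (mul_mem (inv_mem hx) (Subgroup.mem_inf.mp hy).2) hx⟩
              have := hNn.conj_mem y (Subgroup.mem_inf.mp hy).1 x⁻¹
              simpa [mul_assoc] using this
        rcases hNmin _ hinfn inf_le_left with hbot | hNle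
        · rw [disjoint_iff]; exact hbot
        · exfalso
          apply hcon (k * ↑m)
          have hle : N ≤ Subgroup.closure {h * n, k * ↑m} :=
            (le_of_eq hNle.symm).trans inf_le_right
          rw [← hKsup, sup_eq_right.mpr hle]
      exact ⟨hKdisj, hKsup⟩
    choose c hcN hciff using fun m : ↥N =>
      GPPMaux.compl_conj hsol hN huniq hNtop hCG hdisj hsup (hKm m).1 (hKm m).2
    have hcinj : ∀ m1 m2 : ↥N, c m1 = c m2 → m1 = m2 := by
      intro m1 m2 hce
      have h1 : k * ↑m1 ∈ Subgroup.closure {h * n, k * ↑m1} :=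
        Subgroup.subset_closure (by simp)
      have h2 : k * ↑m2 ∈ Subgroup.closure {h * n, k * ↑m2} :=
        Subgroup.subset_closure (by simp)
      have h3 := (hciff m2 _).mp h2
      rw [← hce] at h3
      have h4 := (hciff m1 _).mpr h3
      have h5 : (k * ↑m1)⁻¹ * (k * ↑m2) ∈ Subgroup.closure {h * n, k * ↑m1} :=
        mul_mem (inv_mem h1) h4
      have h6 : (k * ↑m1)⁻¹ * (k * ↑m2) = (↑m1)⁻¹ * ↑m2 := by group
      rw [h6] at h5
      have h7 : (↑m1)⁻¹ * (↑m2 : G) ∈ N := mul_mem (inv_mem m1.2) m2.2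
      have h8 := Subgroup.disjoint_def.mp (hKm m1).1 h7 h5
      exact Subtype.ext (inv_mul_eq_one.mp h8)
    have hconjN : ∀ x : ↥N, h⁻¹ * ↑x * h ∈ N := fun x => by
      simpa [mul_assoc] using hNn.conj_mem ↑x x.2 h⁻¹
    set φ : ↥N →* ↥N :=
      { toFun := fun x => ⟨(h⁻¹ * ↑x * h) * (↑x)⁻¹, N.mul_mem (hconjN x) (N.inv_mem x.2)⟩
        map_one' := by ext; simp
        map_mul' := fun a b => by
          ext
          show (h⁻¹ * ((a : G) * (b : G)) * h) * ((a : G) * (b : G))⁻¹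
              = ((h⁻¹ * ↑a * h) * (↑a)⁻¹) * ((h⁻¹ * ↑b * h) * (↑b)⁻¹)
          have hw : (h⁻¹ * ↑b * h) * (↑b)⁻¹ ∈ N := N.mul_mem (hconjN b) (N.inv_mem b.2)
          have hcm := hab _ hw _ (N.inv_mem a.2)
          calc h⁻¹ * (↑a * ↑b) * h * (↑a * ↑b)⁻¹
              = (h⁻¹ * ↑a * h) * (((h⁻¹ * ↑b * h) * (↑b)⁻¹) * (↑a)⁻¹) := by group
            _ = (h⁻¹ * ↑a * h) * ((↑a)⁻¹ * ((h⁻¹ * ↑b * h) * (↑b)⁻¹)) := by rw [hcm]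
            _ = ((h⁻¹ * ↑a * h) * (↑a)⁻¹) * ((h⁻¹ * ↑b * h) * (↑b)⁻¹) := by group }
      with hφ
    have hφc : ∀ m : ↥N, φ ⟨c m, hcN m⟩ = ⟨n, hn⟩ := by
      intro m
      have h1 : h * n ∈ Subgroup.closure {h * n, k * ↑m} :=
        Subgroup.subset_closure (by simp)
      have h2 := (hciff m _).mp h1
      set cc := c m with hcc
      have hu' : h⁻¹ * cc⁻¹ * h * n * cc ∈ N := by
        have hA : h⁻¹ * cc⁻¹ * h ∈ N := by
          simpa [mul_assoc] using hNn.conj_mem _ (N.inv_mem (hcN m)) h⁻¹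
        exact N.mul_mem (N.mul_mem hA hn) (hcN m)
      have h3 : cc⁻¹ * (h * n) * cc = h * (h⁻¹ * cc⁻¹ * h * n * cc) := by group
      rw [h3] at h2
      have h4 : h⁻¹ * cc⁻¹ * h * n * cc ∈ H := by
        have h5 : h⁻¹ * (h * (h⁻¹ * cc⁻¹ * h * n * cc)) = h⁻¹ * cc⁻¹ * h * n * cc := by
          group
        rw [← h5]; exact H.mul_mem (H.inv_mem hh) h2
      have h6 : h⁻¹ * cc⁻¹ * h * n * cc = 1 := Subgroup.disjoint_def.mp hdisj hu' h4
      ext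
      show (h⁻¹ * cc * h) * cc⁻¹ = n
      have h8 : (h⁻¹ * cc * h) * (h⁻¹ * cc⁻¹ * h * n * cc) * cc⁻¹ = n := by group
      rw [h6, mul_one] at h8
      exact h8
    have hρker : ∀ m : ↥N,
        (⟨c m, hcN m⟩ : ↥N) * (⟨c 1, hcN 1⟩ : ↥N)⁻¹ ∈ φ.ker := by
      intro m
      rw [MonoidHom.mem_ker, map_mul, map_inv, hφc m, hφc 1, mul_inv_cancel]
    have hinj : Function.Injective (fun m : ↥N =>
        (⟨(⟨c m, hcN m⟩ : ↥N) * (⟨c 1, hcN 1⟩ : ↥N)⁻¹, hρker m⟩ : ↥(φ.ker))) := by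
      intro m1 m2 he
      have h0 := congrArg (fun z : ↥(φ.ker) => (z : ↥N) * (⟨c 1, hcN 1⟩ : ↥N)) he
      simp only [inv_mul_cancel_right] at h0
      have h1 : (⟨c m1, hcN m1⟩ : ↥N) = ⟨c m2, hcN m2⟩ := by
        simpa using h0
      exact hcinj m1 m2 (congrArg Subtype.val h1)
    have hcard1 : Nat.card ↥N ≤ Nat.card ↥(φ.ker) := Nat.card_le_card_of_injective _ hinj
    have hcard2 : Nat.card ↥(φ.ker) ≤ Nat.card ↥N := Subgroup.card_le_card_group _
    have hkertop : φ.ker = ⊤ := Subgroup.eq_top_of_card_eq _ (le_antisymm hcard2 hcard1)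
    exfalso
    apply hne
    have hcent : h ∈ Subgroup.centralizer (N : Set G) := by
      rw [Subgroup.mem_centralizer_iff]
      intro y hy
      have h1 : (⟨y, hy⟩ : ↥N) ∈ φ.ker := by rw [hkertop]; trivial
      rw [MonoidHom.mem_ker] at h1
      have h3 : (h⁻¹ * y * h) * y⁻¹ = 1 := congrArg Subtype.val h1
      have h4 : h⁻¹ * y * h = y := by
        have h5 := congrArg (fun z => z * y) h3
        simpa [inv_mul_cancel_right] using h5
      calc y * h = h * (h⁻¹ * y * h) := by group
        _ = h * y := by rw [h4]
    rw [hCG] at hcent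
    exact Subgroup.disjoint_def.mp hdisj hcent hh
end

section
/- Let G be a finite group and let P be a predicate on subgroups of G that is 2-recognizable in the following sense: for every subgroup K of G, if P(⟨x,y⟩) holds for all x, y ∈ K, then P(K) holds. Let I = {x ∈ G : P(⟨x,y⟩) holds for all y ∈ G}, and suppose I is closed under multiplication and inversion and contains 1 (so it is the underlying set of a subgroup). If there exists g ∈ G such that every element of G can be written as i·gᵏ with i ∈ I and k an integer, then P(G) holds (where G is viewed as the top subgroup of itself). -/
universe u

theorem of_isolated_subgroup_and_cyclic_complement
    (G : Type u) [Group G] [Finite G] (P : Subgroup G → Prop)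
    -- `P` is 2-recognizable
    (h2rec : ∀ K : Subgroup G,
      (∀ x y : G, x ∈ K → y ∈ K → P (Subgroup.closure {x, y})) → P K)
    -- `I` is the set of isolated elements
    (I : Set G) (hI : I = {x : G | ∀ y : G, P (Subgroup.closure {x, y})})
    -- `I` is the underlying set of a subgroup
    (hone : (1 : G) ∈ I)
    (hmul : ∀ a ∈ I, ∀ b ∈ I, a * b ∈ I)
    (hinv : ∀ a ∈ I, a⁻¹ ∈ I)
    -- `G = I⟨g⟩`
    (g : G) (hgen : ∀ x : G, ∃ i ∈ I, ∃ k : ℤ, x = i * g ^ k) :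
    P ⊤ := by
  -- Bundle `I` as a subgroup to get closure under integer powers.
  let S : Subgroup G :=
    { carrier := I
      one_mem' := hone
      mul_mem' := fun {a b} ha hb => hmul a ha b hb
      inv_mem' := fun {a} ha => hinv a ha }
  -- Key step: `g` itself is isolated.
  have hgI : g ∈ I := by
    rw [hI]
    intro y
    obtain ⟨j, hj, m, rfl⟩ := hgen y
    have hcl : Subgroup.closure ({g, j * g ^ m} : Set G)
        = Subgroup.closure ({j, g} : Set G) := by
      apply le_antisymm
      · rw [Subgroup.closure_le]
        rintro z (rfl | rfl)
        · exact Subgroup.subset_closure (by simp)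
        · exact mul_mem (Subgroup.subset_closure (by simp))
            (zpow_mem (Subgroup.subset_closure (by simp)) m)
      · rw [Subgroup.closure_le]
        rintro z hz
        rcases hz with h | h
        · rw [h]
          have hj' : j = (j * g ^ m) * g ^ (-m) := by group
          rw [hj']
          exact mul_mem (Subgroup.subset_closure (by simp))
            (zpow_mem (Subgroup.subset_closure (by simp)) (-m))
        · rw [h]
          exact Subgroup.subset_closure (by simp)
    rw [hcl]
    rw [hI] at hj
    exact hj g
  -- Hence every element of `G` is isolated.
  have hall : ∀ x : G, x ∈ I := by
    intro x
    obtain ⟨i, hi, k, rfl⟩ := hgen x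
    exact hmul i hi (g ^ k) (zpow_mem (show g ∈ S from hgI) k)
  -- Conclude by 2-recognizability.
  apply h2rec
  intro x y _ _
  have hx := hall x
  rw [hI] at hx
  exact hx y
end
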